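/- arXiv:1807.02138 — 11 statements merged into one kernel-verified Lean document; each statement's English description precedes it below -/
import Mathlib

section
/- Let k ≤ m be natural numbers and let T be the (k+1) × (m+1) matrix over ℚ whose (i,j)-entry (for 0 ≤ i ≤ k, 0 ≤ j ≤ m) is the binomial coefficient C(m−k, j−i), with the convention that C(m−k, j−i) = 0 when j < i or j−i > m−k. Then every maximal minor of T is non-zero; that is, for every strictly increasing selection c(0) < c(1) < ⋯ < c(k) of k+1 columns from {0,…,m}, the determinant of the (k+1) × (k+1) matrix with (i,j)-entry C(m−k, c(j)−i) is non-zero. -/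
/-- The generalized minor matrix: entry `(i,j)` is `C(d, c j - r i)` guarded by `r i ≤ c j`. -/
private def Mmat (d k : ℕ) (r c : Fin (k + 1) → ℕ) : Matrix (Fin (k + 1)) (Fin (k + 1)) ℚ :=
  Matrix.of fun i j => if r i ≤ c j then ((Nat.choose d (c j - r i)) : ℚ) else 0

/-- A strictly monotone `ℕ`-valued function on `Fin (k+1)` grows at least by the index gap. -/
private lemma mono_gap {k : ℕ} {v : Fin (k + 1) → ℕ} (hv : StrictMono v) :
    ∀ a b : Fin (k + 1), a ≤ b → v a + ((b : ℕ) - (a : ℕ)) ≤ v b := by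
  intro a b
  induction b using Fin.induction with
  | zero =>
    intro hab
    have : a = 0 := le_antisymm hab (Fin.zero_le a)
    simp [this]
  | succ i ih =>
    intro hab
    by_cases h : a ≤ i.castSucc
    · have h1 := ih h
      have h2 : v i.castSucc < v i.succ := hv Fin.castSucc_lt_succ
      have h3 : (i.succ : ℕ) = (i.castSucc : ℕ) + 1 := by simp
      omega
    · have : a = i.succ := by
        have := Fin.lt_iff_val_lt_val.mp (lt_of_not_ge h)
        have h4 := Fin.le_iff_val_le_val.mp hab
        have h3 : (i.succ : ℕ) = (i.castSucc : ℕ) + 1 := by simp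
        exact Fin.ext (by omega)
      simp [this]

/-- A strictly monotone self-map of `Fin (k+1)` is the identity. -/
private lemma strictMono_fin_id {k : ℕ} {g : Fin (k + 1) → Fin (k + 1)} (hg : StrictMono g) :
    ∀ i, g i = i := by
  have hv : StrictMono (fun i => (g i : ℕ)) := fun a b hab => by
    exact_mod_cast Fin.lt_iff_val_lt_val.mp (hg hab)
  intro i
  have h1 := mono_gap hv 0 i (Fin.zero_le i)
  have h2 := mono_gap hv i (Fin.last k) (Fin.le_last i)
  have h3 : (g (Fin.last k) : ℕ) ≤ k := Fin.is_le _
  have h4 : (i : ℕ) ≤ k := Fin.is_le _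
  exact Fin.ext (by simp at h1 h2 ⊢; omega)

/-- Pascal's rule for the guarded entries. -/
private lemma entry_pascal (d a b : ℕ) :
    (if a ≤ b then ((Nat.choose (d + 1) (b - a)) : ℚ) else 0) =
      (if a ≤ b then ((Nat.choose d (b - a)) : ℚ) else 0) +
        (if a + 1 ≤ b then ((Nat.choose d (b - (a + 1))) : ℚ) else 0) := by
  rcases lt_trichotomy a b with h | h | h
  · have h1 : a ≤ b := le_of_lt h
    have h2 : a + 1 ≤ b := h
    rw [if_pos h1, if_pos h1, if_pos h2]
    have h3 : b - a = (b - (a + 1)) + 1 := by omega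
    rw [h3, Nat.choose_succ_succ]
    push_cast
    ring
  · subst h
    simp
  · rw [if_neg (by omega), if_neg (by omega), if_neg (by omega)]
    simp

private lemma key (d : ℕ) : ∀ (k : ℕ) (r c : Fin (k + 1) → ℕ), StrictMono r → StrictMono c →
    0 ≤ (Mmat d k r c).det ∧
      ((∀ i, r i ≤ c i ∧ c i ≤ r i + d) → 0 < (Mmat d k r c).det) := by
  induction d with
  | zero =>
    intro k r c hr hc
    have hentry : ∀ i j, Mmat 0 k r c i j = if r i = c j then (1 : ℚ) else 0 := by
      intro i j
      simp only [Mmat, Matrix.of_apply]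
      rcases lt_trichotomy (r i) (c j) with h | h | h
      · rw [if_pos (le_of_lt h), if_neg (by omega)]
        rw [Nat.choose_eq_zero_of_lt (by omega)]
        simp
      · simp [h]
      · rw [if_neg (by omega), if_neg (by omega)]
    constructor
    · by_cases h : ∀ j, ∃ i, r i = c j
      · -- full matching: the matrix is the identity
        choose g hg using h
        have hgm : StrictMono g := by
          intro a b hab
          have : r (g a) < r (g b) := by rw [hg a, hg b]; exact hc hab
          exact hr.lt_iff_lt.mp this
        have hrc : ∀ j, r j = c j := by
          intro j
          have h5 := hg j
          rw [strictMono_fin_id hgm j] at h5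
          exact h5
        have : Mmat 0 k r c = 1 := by
          ext i j
          rw [hentry i j, ← hrc j]
          by_cases hij : i = j
          · subst hij; simp
          · rw [if_neg (fun hcon => hij (hr.injective hcon))]
            simp [Matrix.one_apply_ne hij]
        rw [this, Matrix.det_one]; norm_num
      · push_neg at h
        obtain ⟨j, hj⟩ := h
        rw [Matrix.det_eq_zero_of_column_eq_zero j
          (fun i => by rw [hentry i j, if_neg (hj i)])]
    · intro hcond
      have hrc : ∀ j, r j = c j := fun j => by
        have := hcond j; omega
      have : Mmat 0 k r c = 1 := by
        ext i j
        rw [hentry i j, ← hrc j]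
        by_cases hij : i = j
        · subst hij; simp
        · rw [if_neg (fun hcon => hij (hr.injective hcon))]
          simp [Matrix.one_apply_ne hij]
      rw [this, Matrix.det_one]; norm_num
  | succ d ih =>
    intro k r c hr hc
    -- the shifted-row functions
    set rs : Finset (Fin (k + 1)) → Fin (k + 1) → ℕ :=
      fun s i => if i ∈ s then r i + 1 else r i with hrs
    -- multilinear expansion of the determinant
    have hsplit : (Mmat (d + 1) k r c : Fin (k + 1) → Fin (k + 1) → ℚ) =
        (Mmat d k (fun i => r i + 1) c : Fin (k + 1) → Fin (k + 1) → ℚ) +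
          (Mmat d k r c : Fin (k + 1) → Fin (k + 1) → ℚ) := by
      funext i j
      have := entry_pascal d (r i) (c j)
      simp only [Mmat, Matrix.of_apply, Pi.add_apply, Matrix.add_apply]
      rw [this, add_comm]
    have hexp : (Mmat (d + 1) k r c).det =
        ∑ s : Finset (Fin (k + 1)), (Mmat d k (rs s) c).det := by
      have h1 : (Mmat (d + 1) k r c).det =
          Matrix.detRowAlternating.toMultilinearMap
            ((Mmat d k (fun i => r i + 1) c : Fin (k + 1) → Fin (k + 1) → ℚ) +
              (Mmat d k r c : Fin (k + 1) → Fin (k + 1) → ℚ)) := by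
        rw [← hsplit]; rfl
      rw [h1]; refine (MultilinearMap.map_add_univ _ _ _).trans ?_
      apply Finset.sum_congr rfl
      intro s _
      have h2 : (s.piecewise (Mmat d k (fun i => r i + 1) c : Fin (k + 1) → Fin (k + 1) → ℚ)
          (Mmat d k r c : Fin (k + 1) → Fin (k + 1) → ℚ)) =
          (Mmat d k (rs s) c : Fin (k + 1) → Fin (k + 1) → ℚ) := by
        funext i
        by_cases hi : i ∈ s
        · refine (Finset.piecewise_eq_of_mem _ _ _ hi).trans ?_
          funext j; simp only [Mmat, Matrix.of_apply, hrs, if_pos hi]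
        · refine (Finset.piecewise_eq_of_notMem _ _ _ hi).trans ?_
          funext j; simp only [Mmat, Matrix.of_apply, hrs, if_neg hi]
      rw [h2]; rfl
    -- each summand is nonnegative
    have hnonneg : ∀ s : Finset (Fin (k + 1)), 0 ≤ (Mmat d k (rs s) c).det := by
      intro s
      by_cases hinj : Function.Injective (rs s)
      · have hmono : Monotone (rs s) := by
          intro a b hab
          rcases eq_or_lt_of_le hab with h | h
          · subst h; exact le_refl _
          · have h1 : r a < r b := hr h
            simp only [hrs]
            by_cases ha : a ∈ s <;> by_cases hb : b ∈ s <;> simp [ha, hb] <;> omega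
        exact (ih k (rs s) c (hmono.strictMono_of_injective hinj) hc).1
      · simp only [Function.Injective, not_forall] at hinj
        obtain ⟨a, b, hab, hne⟩ := hinj
        have hrow : Mmat d k (rs s) c a = Mmat d k (rs s) c b := by
          funext j; simp only [Mmat, Matrix.of_apply, hab]
        rw [Matrix.det_zero_of_row_eq hne hrow]
    constructor
    · rw [hexp]
      exact Finset.sum_nonneg (fun s _ => hnonneg s)
    · intro hcond
      rw [hexp]
      apply Finset.sum_pos' (fun s _ => hnonneg s)
      refine ⟨Finset.univ.filter (fun i => r i + d < c i), Finset.mem_univ _, ?_⟩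
      set s₀ : Finset (Fin (k + 1)) := Finset.univ.filter (fun i => r i + d < c i) with hs₀
      have hmem : ∀ i, rs s₀ i = if r i + d < c i then r i + 1 else r i := by
        intro i
        simp only [hrs, hs₀, Finset.mem_filter, Finset.mem_univ, true_and]
      have hsm : StrictMono (rs s₀) := by
        intro a b hab
        have h1 : r a < r b := hr hab
        have h2 : c a < c b := hc hab
        rw [hmem a, hmem b]
        by_cases ha : r a + d < c a <;> by_cases hb : r b + d < c b <;>
          simp [ha, hb] <;> omega
      apply (ih k (rs s₀) c hsm hc).2
      intro i
      have h1 := hcond i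
      rw [hmem i]
      by_cases hi : r i + d < c i <;> simp [hi] <;> omega

/-- Every maximal minor of the Toeplitz matrix `T_{k,m}`, whose `(i,j)`-entry is the
binomial coefficient `C(m-k, j-i)` (zero when `j < i`), is non-zero. -/
theorem toeplitz_maximal_minors_ne_zero (k m : ℕ) (hkm : k ≤ m)
    (c : Fin (k + 1) → Fin (m + 1)) (hc : StrictMono c) :
    (Matrix.of fun i j : Fin (k + 1) =>
        if (i : ℕ) ≤ (c j : ℕ) then ((Nat.choose (m - k) ((c j : ℕ) - (i : ℕ))) : ℚ)
        else 0).det ≠ 0 := by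
  have hr : StrictMono (fun i : Fin (k + 1) => (i : ℕ)) := fun a b hab =>
    Fin.lt_iff_val_lt_val.mp hab
  have hc' : StrictMono (fun j : Fin (k + 1) => ((c j : ℕ))) := fun a b hab => by
    exact_mod_cast Fin.lt_iff_val_lt_val.mp (hc hab)
  have hcond : ∀ i : Fin (k + 1), (i : ℕ) ≤ (c i : ℕ) ∧ (c i : ℕ) ≤ (i : ℕ) + (m - k) := by
    intro i
    have h1 := mono_gap hc' 0 i (Fin.zero_le i)
    have h2 := mono_gap hc' i (Fin.last k) (Fin.le_last i)
    have h3 : (c (Fin.last k) : ℕ) ≤ m := Fin.is_le _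
    have h4 : (i : ℕ) ≤ k := Fin.is_le _
    simp at h1 h2
    omega
  have := (key (m - k) k (fun i => (i : ℕ)) (fun j => ((c j : ℕ))) hr hc').2 hcond
  exact ne_of_gt this
end

section
/- Let K be a field of characteristic zero, S = K[x_1,…,x_n] acting on the dual ring R = K[y_1,…,y_n] with x_i acting as ∂/∂y_i. Fix j with 1 ≤ j ≤ n, let ℓ = x_1 + ⋯ + x_n and ℓ′ = ℓ − x_j. Let f ∈ R be a form of degree d ≥ 2 written as f = Σ_{i=0}^{d} y_j^i g_i, where each g_i is a homogeneous polynomial of degree d−i in the variables different from y_j. Then for every 0 ≤ c ≤ d: ℓ^c ∘ f = Σ_{k=0}^{d−c} Σ_{i=0}^{c} ((k+c−i)!/k!) · C(c,i) · y_j^k · (ℓ′^i ∘ g_{k+c−i}). -/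
open MvPolynomial Finset

section AuxLemmas

variable {K : Type*} [CommSemiring K] {n : ℕ}

private lemma aux_pderiv_rep (p : MvPolynomial (Fin n) K) (t : Fin n) :
    pderiv t p = ∑ v ∈ p.support, monomial (v - Finsupp.single t 1) (coeff v p * v t) := by
  conv_lhs => rw [p.as_sum]
  rw [map_sum]
  exact Finset.sum_congr rfl fun v _ => pderiv_monomial

private lemma aux_pderiv_zero {p : MvPolynomial (Fin n) K} {t : Fin n}
    (h : ∀ m ∈ p.support, m t = 0) : pderiv t p = 0 := by
  rw [aux_pderiv_rep p t]
  exact Finset.sum_eq_zero fun m hm => by simp [h m hm]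

private lemma aux_pderiv_support {p : MvPolynomial (Fin n) K} {j : Fin n}
    (h : ∀ m ∈ p.support, m j = 0) (t : Fin n) :
    ∀ m ∈ (pderiv t p).support, m j = 0 := by
  intro m hm
  rw [aux_pderiv_rep p t] at hm
  obtain ⟨v, hv, hm'⟩ := Finset.mem_biUnion.mp (MvPolynomial.support_sum hm)
  have := support_monomial_subset hm'
  rw [Finset.mem_singleton] at this
  subst this
  simp [Finsupp.tsub_apply, h v hv]

private lemma aux_pderiv_homog {p : MvPolynomial (Fin n) K} {e : ℕ} (hp : p.IsHomogeneous e)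
    (t : Fin n) : (pderiv t p).IsHomogeneous (e - 1) := by
  rw [aux_pderiv_rep p t]
  apply IsHomogeneous.sum
  intro v hv
  by_cases hvt : v t = 0
  · rw [hvt]
    simpa using isHomogeneous_zero _ _ (e - 1)
  · apply isHomogeneous_monomial
    have hdv : Finsupp.degree v = e := by
      rw [Finsupp.degree_eq_weight_one]
      exact hp (mem_support_iff.mp hv)
    have hle : Finsupp.single t 1 ≤ v := Finsupp.single_le_iff.mpr (Nat.one_le_iff_ne_zero.mpr hvt)
    have hadd : (v - Finsupp.single t 1) + Finsupp.single t 1 = v := tsub_add_cancel_of_le hle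
    have hds : Finsupp.degree (Finsupp.single t 1) = 1 := by
      rw [Finsupp.degree_single]
    have hh := congrArg Finsupp.degree hadd
    rw [Finsupp.degree_eq_weight_one] at hh hdv hds ⊢
    rw [map_add] at hh
    omega

private lemma aux_fact_div {k a : ℕ} (h : k + 1 ≤ a) :
    (k + 1) * (a.factorial / (k + 1).factorial) = a.factorial / k.factorial := by
  obtain ⟨q, hq⟩ := Nat.factorial_dvd_factorial h
  have h1 : a.factorial / (k + 1).factorial = q := by
    rw [hq, Nat.mul_div_cancel_left _ (Nat.factorial_pos _)]
  have h2 : a.factorial / k.factorial = (k + 1) * q := by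
    have hq2 : a.factorial = k.factorial * ((k + 1) * q) := by
      rw [hq, Nat.factorial_succ]; ring
    rw [hq2, Nat.mul_div_cancel_left _ (Nat.factorial_pos _)]
  rw [h1, h2]

end AuxLemmas

/-- The coefficient appearing in the expansion of `ℓ^c ∘ f`, extended by `0`
outside the admissible range of indices. -/
private def auxB (d c k i : ℕ) : ℕ :=
  if i ≤ c ∧ k + c ≤ d + i then (k + c - i).factorial / k.factorial * c.choose i else 0

private lemma auxB_coef (d c k i : ℕ) :
    (k + 1) * auxB d c (k + 1) i + (if 1 ≤ i then auxB d c k (i - 1) else 0)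
      = auxB d (c + 1) k i := by
  unfold auxB
  rcases i with _ | i
  · rw [if_neg (by omega : ¬ (1 : ℕ) ≤ 0)]
    by_cases hQ : k + (c + 1) ≤ d
    · rw [if_pos ⟨Nat.zero_le _, by omega⟩, if_pos ⟨Nat.zero_le _, by omega⟩]
      simp only [Nat.choose_zero_right, mul_one, Nat.sub_zero, add_zero]
      have e1 : k + 1 + c = k + (c + 1) := by omega
      rw [e1]
      exact aux_fact_div (by omega)
    · rw [if_neg (by omega), if_neg (by omega)]
      simp
  · rw [if_pos (by omega : 1 ≤ i + 1), Nat.add_sub_cancel]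
    by_cases hQ : k + c + 1 ≤ d + (i + 1)
    · by_cases hic : i + 1 ≤ c
      · rw [if_pos ⟨hic, by omega⟩, if_pos ⟨by omega, by omega⟩, if_pos ⟨by omega, by omega⟩]
        have e1 : k + 1 + c - (i + 1) = k + c - i := by omega
        have e2 : k + (c + 1) - (i + 1) = k + c - i := by omega
        rw [e1, e2, ← mul_assoc, aux_fact_div (by omega), ← mul_add,
          Nat.choose_succ_succ c i]
        ring
      · by_cases hic1 : i + 1 ≤ c + 1
        · have hieq : i = c := by omega
          subst hieq
          rw [if_neg (by omega), if_pos ⟨by omega, by omega⟩, if_pos ⟨by omega, by omega⟩]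
          simp [Nat.choose_self, Nat.div_self (Nat.factorial_pos k)]
        · rw [if_neg (by omega), if_neg (by omega), if_neg (by omega)]
          simp
    · rw [if_neg (by omega), if_neg (by omega), if_neg (by omega)]
      simp

/-- Let `ℓ = x_1 + ⋯ + x_n` act on `R = K[y_1,…,y_n]` by `x_i ↦ ∂/∂y_i`, and
`ℓ' = ℓ - x_j`.  If `f = ∑_{i=0}^d y_j^i g_i` is a form of degree `d ≥ 2`, where each
`g_i` is homogeneous of degree `d - i` in the variables different from `y_j`, then for
every `0 ≤ c ≤ d` we have
`ℓ^c ∘ f = ∑_{k=0}^{d-c} ∑_{i=0}^{c} ((k+c-i)!/k!) C(c,i) y_j^k (ℓ'^i ∘ g_{k+c-i})`. -/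
theorem ell_pow_on_form {K : Type*} [Field K] [CharZero K] {n : ℕ} (hn : 1 ≤ n)
    (j : Fin n) (d : ℕ) (hd : 2 ≤ d)
    (L L' : MvPolynomial (Fin n) K → MvPolynomial (Fin n) K)
    (hL : ∀ g, L g = ∑ t, MvPolynomial.pderiv t g)
    (hL' : ∀ g, L' g = ∑ t ∈ Finset.univ.erase j, MvPolynomial.pderiv t g)
    (f : MvPolynomial (Fin n) K) (hf : f.IsHomogeneous d)
    (g : ℕ → MvPolynomial (Fin n) K)
    (hg : ∀ i ≤ d, (g i).IsHomogeneous (d - i))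
    (hgj : ∀ i ≤ d, ∀ m ∈ (g i).support, m j = 0)
    (hfg : f = ∑ i ∈ Finset.range (d + 1), MvPolynomial.X j ^ i * g i)
    (c : ℕ) (hc : c ≤ d) :
    L^[c] f =
      ∑ k ∈ Finset.range (d - c + 1), ∑ i ∈ Finset.range (c + 1),
        (((Nat.factorial (k + c - i) / Nat.factorial k : ℕ) : K) * (Nat.choose c i : K)) •
          (MvPolynomial.X j ^ k * L'^[i] (g (k + c - i))) := by
  classical
  obtain ⟨M, hMapp⟩ : ∃ M : MvPolynomial (Fin n) K →ₗ[K] MvPolynomial (Fin n) K,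
      ∀ p, M p = ∑ t : Fin n, pderiv t p :=
    ⟨∑ t : Fin n, (pderiv t).toLinearMap, fun p => by simp⟩
  obtain ⟨M', hM'app⟩ : ∃ M' : MvPolynomial (Fin n) K →ₗ[K] MvPolynomial (Fin n) K,
      ∀ p, M' p = ∑ t ∈ Finset.univ.erase j, pderiv t p :=
    ⟨∑ t ∈ Finset.univ.erase j, (pderiv t).toLinearMap, fun p => by simp⟩
  have hLM : L = ⇑M := funext fun p => by rw [hL, hMapp]
  have hL'M : L' = ⇑M' := funext fun p => by rw [hL', hM'app]
  subst hLM hL'M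
  -- the "no `y_j`" property is preserved by iterates of `M'`
  have hIter : ∀ (i : ℕ) (p : MvPolynomial (Fin n) K), (∀ m ∈ p.support, m j = 0) →
      ∀ m ∈ ((⇑M')^[i] p).support, m j = 0 := by
    intro i
    induction i with
    | zero => intro p hp; simpa using hp
    | succ i ih =>
      intro p hp
      rw [Function.iterate_succ_apply]
      apply ih
      intro m hm
      rw [hM'app] at hm
      obtain ⟨t, ht, hm'⟩ := Finset.mem_biUnion.mp (MvPolynomial.support_sum hm)
      exact aux_pderiv_support hp t m hm'
  -- vanishing of high iterates on homogeneous polynomials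
  have hvan : ∀ (i : ℕ) (p : MvPolynomial (Fin n) K) (e : ℕ),
      p.IsHomogeneous e → e < i → (⇑M')^[i] p = 0 := by
    intro i
    induction i with
    | zero => intro p e _ h; exact absurd h (Nat.not_lt_zero e)
    | succ i ih =>
      intro p e hp h
      rw [Function.iterate_succ_apply]
      by_cases he : e = 0
      · subst he
        by_cases hp0 : p = 0
        · rw [hp0, map_zero]
          exact Function.iterate_fixed (map_zero M') i
        · have h0 : M' p = 0 := by
            rw [hM'app]
            refine Finset.sum_eq_zero fun t _ => aux_pderiv_zero fun m hm => ?_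
            exact (totalDegree_eq_zero_iff _ p).mp (hp.totalDegree hp0) m hm t
          rw [h0]
          exact Function.iterate_fixed (map_zero M') i
      · have hMp : (M' p).IsHomogeneous (e - 1) := by
          rw [hM'app]
          exact IsHomogeneous.sum _ _ _ fun t _ => aux_pderiv_homog hp t
        exact ih (M' p) (e - 1) hMp (by omega)
  -- `M'` commutes with multiplication by powers of `X j`
  have hmulL' : ∀ (k : ℕ) (p : MvPolynomial (Fin n) K), M' (X j ^ k * p) = X j ^ k * M' p := by
    intro k p
    rw [hM'app, hM'app, Finset.mul_sum]
    refine Finset.sum_congr rfl fun t ht => ?_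
    have hXt : pderiv t (X j ^ k : MvPolynomial (Fin n) K) = 0 := by
      rw [pderiv_pow, pderiv_X_of_ne (Finset.ne_of_mem_erase ht).symm, mul_zero]
    rw [pderiv_mul, hXt, zero_mul, zero_add]
  -- the basic term computation
  have hterm : ∀ (k i : ℕ) (G : MvPolynomial (Fin n) K), (∀ m ∈ G.support, m j = 0) →
      M (X j ^ k * (⇑M')^[i] G)
        = (k : K) • (X j ^ (k - 1) * (⇑M')^[i] G) + X j ^ k * (⇑M')^[i + 1] G := by
    intro k i G hG
    have hsplit : M (X j ^ k * (⇑M')^[i] G)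
        = pderiv j (X j ^ k * (⇑M')^[i] G) + M' (X j ^ k * (⇑M')^[i] G) := by
      rw [hMapp, hM'app, ← Finset.add_sum_erase _ _ (Finset.mem_univ j)]
    rw [hsplit, hmulL', Function.iterate_succ_apply' (⇑M') i G]
    congr 1
    have hpd : pderiv j ((⇑M')^[i] G) = 0 := aux_pderiv_zero (hIter i G hG)
    rw [pderiv_mul, hpd, mul_zero, add_zero, pderiv_pow, pderiv_X_self, mul_one,
      Nat.cast_smul_eq_nsmul, nsmul_eq_mul, mul_assoc]
  -- the key formula, with sums extended over the full range
  have key : ∀ c : ℕ, c ≤ d → (⇑M)^[c] f =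
      ∑ k ∈ Finset.range (d + 1), ∑ i ∈ Finset.range (d + 1),
        (auxB d c k i : K) • (X j ^ k * (⇑M')^[i] (g (k + c - i))) := by
    intro c
    induction c with
    | zero =>
      intro _
      simp only [Function.iterate_zero, id_eq]
      rw [hfg]
      refine Finset.sum_congr rfl fun k hk => ?_
      have hsum : ∑ i ∈ Finset.range (d + 1),
          (auxB d 0 k i : K) • (X j ^ k * (⇑M')^[i] (g (k + 0 - i)))
          = (auxB d 0 k 0 : K) • (X j ^ k * (⇑M')^[0] (g (k + 0 - 0))) := by
        refine Finset.sum_eq_single 0 (fun b _ hb0 => ?_) (fun h => absurd ?_ h)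
        · have hb : auxB d 0 k b = 0 := by unfold auxB; rw [if_neg (by omega)]
          rw [hb, Nat.cast_zero, zero_smul]
        · exact Finset.mem_range.mpr (by omega)
      rw [hsum]
      have hB1 : auxB d 0 k 0 = 1 := by
        unfold auxB
        rw [if_pos ⟨le_refl 0, by have := Finset.mem_range.mp hk; omega⟩]
        simp [Nat.div_self (Nat.factorial_pos k)]
      rw [hB1]
      simp
    | succ c ih =>
      intro hc1
      rw [Function.iterate_succ_apply', ih (by omega)]
      have lhs1 : M (∑ k ∈ Finset.range (d + 1), ∑ i ∈ Finset.range (d + 1),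
            (auxB d c k i : K) • (X j ^ k * (⇑M')^[i] (g (k + c - i))))
          = ∑ k ∈ Finset.range (d + 1), ∑ i ∈ Finset.range (d + 1),
              (((k : K) * (auxB d c k i : K)) • (X j ^ (k - 1) * (⇑M')^[i] (g (k + c - i)))
              + (auxB d c k i : K) • (X j ^ k * (⇑M')^[i + 1] (g (k + c - i)))) := by
        rw [map_sum]
        refine Finset.sum_congr rfl fun k hk => ?_
        rw [map_sum]
        refine Finset.sum_congr rfl fun i hi => ?_
        rw [map_smul]
        by_cases hguard : i ≤ c ∧ k + c ≤ d + i
        · have hle : k + c - i ≤ d := by omega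
          rw [hterm k i _ (hgj _ hle), smul_add, smul_smul, mul_comm]
        · have hB0 : auxB d c k i = 0 := by unfold auxB; rw [if_neg hguard]
          rw [hB0]
          simp
      rw [lhs1]
      simp only [Finset.sum_add_distrib]
      have hS1 : ∑ k ∈ Finset.range (d + 1), ∑ i ∈ Finset.range (d + 1),
            ((k : K) * (auxB d c k i : K)) • (X j ^ (k - 1) * (⇑M')^[i] (g (k + c - i)))
          = ∑ k ∈ Finset.range (d + 1), ∑ i ∈ Finset.range (d + 1),
              (((k + 1) * auxB d c (k + 1) i : ℕ) : K) •
                (X j ^ k * (⇑M')^[i] (g (k + (c + 1) - i))) := by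
        conv_lhs => rw [Finset.sum_range_succ']
        conv_rhs => rw [Finset.sum_range_succ]
        congr 1
        · refine Finset.sum_congr rfl fun k hk => Finset.sum_congr rfl fun i hi => ?_
          have e1 : k + 1 + c - i = k + (c + 1) - i := by omega
          have e2 : k + 1 - 1 = k := by omega
          rw [e1, e2, Nat.cast_mul]
        · refine Eq.trans (Finset.sum_eq_zero fun i _ => ?_)
            (Finset.sum_eq_zero fun i _ => ?_).symm
          · simp
          · have hB0 : auxB d c (d + 1) i = 0 := by unfold auxB; rw [if_neg (by omega)]
            rw [hB0, mul_zero, Nat.cast_zero, zero_smul]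
      have hS2 : ∑ k ∈ Finset.range (d + 1), ∑ i ∈ Finset.range (d + 1),
            (auxB d c k i : K) • (X j ^ k * (⇑M')^[i + 1] (g (k + c - i)))
          = ∑ k ∈ Finset.range (d + 1), ∑ i ∈ Finset.range (d + 1),
              (((if 1 ≤ i then auxB d c k (i - 1) else 0 : ℕ)) : K) •
                (X j ^ k * (⇑M')^[i] (g (k + (c + 1) - i))) := by
        refine Finset.sum_congr rfl fun k hk => ?_
        conv_lhs => rw [Finset.sum_range_succ]
        conv_rhs => rw [Finset.sum_range_succ']
        congr 1
        · refine Finset.sum_congr rfl fun i hi => ?_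
          have e1 : k + (c + 1) - (i + 1) = k + c - i := by omega
          rw [if_pos (by omega : 1 ≤ i + 1), Nat.add_sub_cancel, e1]
        · have hB0 : auxB d c k d = 0 := by unfold auxB; rw [if_neg (by omega)]
          rw [hB0, Nat.cast_zero, zero_smul]
          simp
      rw [hS1, hS2, ← Finset.sum_add_distrib]
      refine Finset.sum_congr rfl fun k hk => ?_
      rw [← Finset.sum_add_distrib]
      refine Finset.sum_congr rfl fun i hi => ?_
      rw [← add_smul, ← Nat.cast_add, auxB_coef d c k i]
  -- now shrink the ranges and identify the coefficients
  rw [key c hc]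
  have inner : ∀ k ∈ Finset.range (d + 1),
      ∑ i ∈ Finset.range (d + 1), (auxB d c k i : K) • (X j ^ k * (⇑M')^[i] (g (k + c - i)))
      = ∑ i ∈ Finset.range (c + 1), (auxB d c k i : K) •
          (X j ^ k * (⇑M')^[i] (g (k + c - i))) := by
    intro k _
    symm
    apply Finset.sum_subset
    · intro x hx
      rw [Finset.mem_range] at hx ⊢
      omega
    · intro i _ hni
      rw [Finset.mem_range, not_lt] at hni
      have hB0 : auxB d c k i = 0 := by unfold auxB; rw [if_neg (by omega)]
      rw [hB0, Nat.cast_zero, zero_smul]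
  rw [Finset.sum_congr rfl inner]
  have outer : ∑ k ∈ Finset.range (d + 1), ∑ i ∈ Finset.range (c + 1),
        (auxB d c k i : K) • (X j ^ k * (⇑M')^[i] (g (k + c - i)))
      = ∑ k ∈ Finset.range (d - c + 1), ∑ i ∈ Finset.range (c + 1),
          (auxB d c k i : K) • (X j ^ k * (⇑M')^[i] (g (k + c - i))) := by
    symm
    apply Finset.sum_subset
    · intro x hx
      rw [Finset.mem_range] at hx ⊢
      omega
    · intro k hk hnk
      rw [Finset.mem_range, not_lt] at hnk
      rw [Finset.mem_range] at hk
      refine Finset.sum_eq_zero fun i hi => ?_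
      rw [Finset.mem_range] at hi
      by_cases hguard : i ≤ c ∧ k + c ≤ d + i
      · have hle : k + c - i ≤ d := by omega
        have hvanish : (⇑M')^[i] (g (k + c - i)) = 0 :=
          hvan i _ (d - (k + c - i)) (hg _ hle) (by omega)
        rw [hvanish, mul_zero, smul_zero]
      · have hB0 : auxB d c k i = 0 := by unfold auxB; rw [if_neg hguard]
        rw [hB0, Nat.cast_zero, zero_smul]
  rw [outer]
  refine Finset.sum_congr rfl fun k hk => Finset.sum_congr rfl fun i hi => ?_
  rw [Finset.mem_range] at hk hi
  have hguard : i ≤ c ∧ k + c ≤ d + i := by omega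
  have hBval : auxB d c k i = (k + c - i).factorial / k.factorial * c.choose i := by
    unfold auxB; rw [if_pos hguard]
  rw [hBval, Nat.cast_mul]
end

section
/- Let K be a field of characteristic zero and let f be a non-zero form of degree d in R = K[y_1,…,y_n] such that (x_1 + ⋯ + x_n) ∘ f = 0. Fix i with 1 ≤ i ≤ n and suppose y_i^d ∉ supp(f). Then for each 0 ≤ k ≤ d−1, the sum of the coefficients of f over all monomials m ∈ supp(f) with deg_i(m) = k is zero. -/
open MvPolynomial Finset

section Aux
variable {K : Type*} [CommRing K] {n : ℕ}

theorem coeff_pderiv' (j : Fin n) (μ : Fin n →₀ ℕ) (p : MvPolynomial (Fin n) K) :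
    coeff μ (pderiv j p) = (μ j + 1 : ℕ) * coeff (μ + Finsupp.single j 1) p := by
  induction p using MvPolynomial.induction_on' with
  | monomial s c =>
    rw [pderiv_monomial, coeff_monomial, coeff_monomial]
    by_cases h : s = μ + Finsupp.single j 1
    · subst h
      rw [if_pos (add_tsub_cancel_right _ _), if_pos rfl]
      simp [mul_comm]
    · rw [if_neg h]
      by_cases h2 : s - Finsupp.single j 1 = μ
      · rw [if_pos h2]
        by_cases h3 : s j = 0
        · simp [h3]
        · exfalso
          apply h
          rw [← h2, tsub_add_cancel_of_le]
          rw [Finsupp.single_le_iff]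
          omega
      · simp [h2]
  | add p q hp hq => simp [hp, hq, mul_add]

theorem chain_aux (i : Fin n) (p : MvPolynomial (Fin n) K) :
    pderiv (0 : Fin 2) (aeval (fun j : Fin n => if j = i then (X 1 : MvPolynomial (Fin 2) K) else X 0) p)
      + pderiv (1 : Fin 2) (aeval (fun j : Fin n => if j = i then (X 1 : MvPolynomial (Fin 2) K) else X 0) p)
      = aeval (fun j : Fin n => if j = i then (X 1 : MvPolynomial (Fin 2) K) else X 0) (∑ t, pderiv t p) := by
  set v : Fin n → MvPolynomial (Fin 2) K := fun j => if j = i then X 1 else X 0 with hv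
  induction p using MvPolynomial.induction_on with
  | C a => simp
  | add p q hp hq =>
    simp only [map_add, Finset.sum_add_distrib]
    linear_combination hp + hq
  | mul_X p j hp =>
    have h1 : (∑ t, pderiv t (p * X j)) = (∑ t, pderiv t p) * X j + p := by
      simp only [pderiv_mul, Finset.sum_add_distrib, ← Finset.sum_mul, pderiv_X]
      congr 1
      rw [← Finset.mul_sum]
      simp [Pi.single_apply, Finset.sum_ite_eq]
    have h2 : pderiv (0:Fin 2) (v j) + pderiv (1:Fin 2) (v j) = 1 := by
      simp only [hv]
      split
      · simp [pderiv_X_of_ne, pderiv_X_self]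
      · simp [pderiv_X_of_ne, pderiv_X_self]
    rw [map_mul, aeval_X, pderiv_mul, pderiv_mul, h1, map_add, map_mul, aeval_X]
    linear_combination (v j) * hp + (aeval v p) * h2
end Aux

/-- If `f` is a non-zero form of degree `d` in `K[y_1,…,y_n]` with
`(x_1 + ⋯ + x_n) ∘ f = 0` (each `x_i` acting as `∂/∂y_i`), and the pure power `y_i^d`
does not appear in `f`, then for each `0 ≤ k ≤ d-1` the sum of the coefficients of `f`
over the monomials `m` of `f` with `deg_i(m) = k` is zero. -/
theorem coeff_sum_on_levels_eq_zero {K : Type*} [Field K] [CharZero K] {n : ℕ}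
    (d : ℕ) (f : MvPolynomial (Fin n) K) (hf0 : f ≠ 0) (hf : f.IsHomogeneous d)
    (hann : (∑ t, MvPolynomial.pderiv t f) = 0)
    (i : Fin n) (hpure : Finsupp.single i d ∉ f.support) :
    ∀ k < d, ∑ m ∈ f.support.filter (fun m => m i = k), f.coeff m = 0 := by

  classical
  set v : Fin n → MvPolynomial (Fin 2) K := fun j => if j = i then X 1 else X 0 with hv
  set S : ℕ → K := fun k => ∑ m ∈ f.support.filter (fun m => m i = k), f.coeff m with hS
  have hdeg : ∀ m ∈ f.support, (∑ j, m j) = d := by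
    intro m hm
    have h1 : Finsupp.degree m = d := by
      by_contra h
      exact mem_support_iff.mp hm (hf.coeff_eq_zero h)
    rw [← h1, Finsupp.degree]
    exact (Finset.sum_subset (Finset.subset_univ _)
      (fun j _ hj => Finsupp.notMem_support_iff.mp hj)).symm
  have hmon : ∀ m ∈ f.support, aeval v (monomial m (coeff m f))
      = monomial (Finsupp.single 0 (d - m i) + Finsupp.single 1 (m i)) (coeff m f) := by
    intro m hm
    rw [aeval_monomial]
    have hp : m.prod (fun j k => v j ^ k) = ∏ j, v j ^ m j := Finsupp.prod_pow _ _
    rw [hp, ← Finset.mul_prod_erase Finset.univ _ (Finset.mem_univ i)]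
    have hvi : v i = X 1 := by simp [hv]
    have hvj : ∀ j, j ≠ i → v j = X 0 := by
      intro j hj; simp only [hv]; rw [if_neg hj]
    have hrest : ∏ j ∈ Finset.univ.erase i, v j ^ m j
        = (X 0 : MvPolynomial (Fin 2) K) ^ (d - m i) := by
      rw [Finset.prod_congr rfl (fun j hj => by
        rw [hvj j (Finset.mem_erase.mp hj).1]),
        Finset.prod_pow_eq_pow_sum]
      congr 1
      have hsum := hdeg m hm
      have h2 : ∑ j ∈ Finset.univ.erase i, m j + m i = ∑ j, m j :=
        Finset.sum_erase_add Finset.univ _ (Finset.mem_univ i)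
      omega
    rw [hvi, hrest, X_pow_eq_monomial, X_pow_eq_monomial, monomial_mul,
      algebraMap_eq, C_mul_monomial, add_comm]
    simp
  have hcoeff : ∀ k, coeff (Finsupp.single 0 (d - k) + Finsupp.single 1 k) (aeval v f) = S k := by
    intro k
    conv_lhs => rw [f.as_sum, map_sum]
    rw [coeff_sum]
    rw [Finset.sum_congr rfl (fun m hm => by rw [hmon m hm, coeff_monomial])]
    rw [Finset.sum_congr rfl (fun m hm => show _ = if m i = k then coeff m f else 0 from by
      by_cases h : m i = k
      · rw [h, if_pos rfl, if_pos rfl]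
      · rw [if_neg h, if_neg (fun hc => h (by
          have := congrArg (fun g : Fin 2 →₀ ℕ => g 1) hc
          simpa [Finsupp.single_apply] using this))])]
    simp only [hS]
    rw [← Finset.sum_filter]
  have h0 : pderiv (0:Fin 2) (aeval v f) + pderiv 1 (aeval v f) = 0 := by
    rw [hv, chain_aux, hann, map_zero]
  have hrel : ∀ k, k < d → ((d - k : ℕ) : K) * S k + ((k + 1 : ℕ) : K) * S (k + 1) = 0 := by
    intro k hk
    have hc := congrArg (coeff (Finsupp.single 0 (d - k - 1) + Finsupp.single 1 k)) h0
    rw [coeff_add, coeff_pderiv', coeff_pderiv', coeff_zero] at hc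
    have e1 : (Finsupp.single (0:Fin 2) (d - k - 1) + Finsupp.single 1 k) + Finsupp.single 0 1
        = Finsupp.single (0:Fin 2) (d - k) + Finsupp.single 1 k := by
      rw [show d - k = (d - k - 1) + 1 from by omega, Finsupp.single_add]
      rw [Nat.add_sub_cancel]; ac_rfl
    have e2 : (Finsupp.single (0:Fin 2) (d - k - 1) + Finsupp.single 1 k) + Finsupp.single 1 1
        = Finsupp.single (0:Fin 2) (d - (k + 1)) + Finsupp.single 1 (k + 1) := by
      rw [show d - (k + 1) = d - k - 1 from by omega, Finsupp.single_add]
      abel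
    have a0 : ((Finsupp.single (0:Fin 2) (d - k - 1) + Finsupp.single 1 k : Fin 2 →₀ ℕ)) 0
        = d - k - 1 := by simp [Finsupp.single_apply]
    have a1 : ((Finsupp.single (0:Fin 2) (d - k - 1) + Finsupp.single 1 k : Fin 2 →₀ ℕ)) 1
        = k := by simp [Finsupp.single_apply]
    rw [e1, e2, a0, a1, show (d - k - 1) + 1 = d - k from by omega,
      hcoeff k, hcoeff (k + 1)] at hc
    exact hc
  have hSd : S d = 0 := by
    apply Finset.sum_eq_zero
    intro m hm
    exfalso
    obtain ⟨hm1, hm2⟩ := Finset.mem_filter.mp hm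
    have hd := hdeg m hm1
    have hz : ∑ t ∈ Finset.univ.erase i, m t = 0 := by
      have h := Finset.sum_erase_add Finset.univ m (Finset.mem_univ i)
      omega
    have hm' : m = Finsupp.single i d := by
      ext j
      by_cases hji : j = i
      · subst hji; simp [hm2]
      · have : m j = 0 := by
          refine (Finset.sum_eq_zero_iff.mp hz) j ?_
          exact Finset.mem_erase.mpr ⟨hji, Finset.mem_univ j⟩
        simp [this, Finsupp.single_apply, Ne.symm hji, hji]
    exact hpure (hm' ▸ hm1)
  have hmain : ∀ j, S (d - j) = 0 := by
    intro j
    induction j with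
    | zero => simpa using hSd
    | succ j ih =>
      by_cases hj : j < d
      · have hk : d - (j + 1) < d := by omega
        have h := hrel (d - (j + 1)) hk
        rw [show d - (j + 1) + 1 = d - j from by omega, ih, mul_zero, add_zero] at h
        have hne : ((d - (d - (j + 1)) : ℕ) : K) ≠ 0 := by
          rw [Nat.cast_ne_zero]; omega
        exact (mul_eq_zero.mp h).resolve_left hne
      · rw [show d - (j + 1) = d - j from by omega]; exact ih
  intro k hk
  have h := hmain (d - k)
  rwa [show d - (d - k) = k from by omega] at h
end

section
/- Let K be a field of characteristic zero and let f be a non-zero form of degree d in R = K[y_1,…,y_n] such that (x_1 + ⋯ + x_n) ∘ f = 0. Fix i with 1 ≤ i ≤ n and let a = max{ deg_i(m) : m ∈ supp(f) }. Then for every 0 ≤ k ≤ a there exists a monomial m ∈ supp(f) with deg_i(m) = k. -/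
open MvPolynomial Finset

lemma coeff_pderiv'_s3 {K : Type*} [CommSemiring K] {n : ℕ}
    (t : Fin n) (f : MvPolynomial (Fin n) K) (ν : (Fin n) →₀ ℕ) :
    MvPolynomial.coeff ν (MvPolynomial.pderiv t f)
      = (ν t + 1) * MvPolynomial.coeff (ν + Finsupp.single t 1) f := by
  induction f using MvPolynomial.induction_on' with
  | monomial s a =>
    rw [pderiv_monomial]
    rw [coeff_monomial, coeff_monomial]
    by_cases h : s = ν + Finsupp.single t 1
    · subst h
      have h1 : (ν + Finsupp.single t 1) - Finsupp.single t 1 = ν := by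
        ext j; simp [Finsupp.single_apply]
      have h2 := Finsupp.add_apply ν (Finsupp.single t 1) t
      rw [Finsupp.single_eq_same] at h2
      rw [if_pos h1, h2]
      simp only [if_true]
      push_cast
      ring
    · rw [if_neg h]
      by_cases h0 : s t = 0
      · simp [h0]
      · have : s - Finsupp.single t 1 ≠ ν := by
          intro he
          apply h
          ext j
          have hj := congrArg (fun g => g j) he
          simp only [Finsupp.sub_apply, Finsupp.single_apply, Finsupp.add_apply] at hj ⊢
          by_cases hjt : t = j
          · subst hjt
            simp at hj ⊢
            omega
          · simp [hjt] at hj ⊢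
            omega
        rw [if_neg this, mul_zero]
  | add p q hp hq =>
    simp [map_add, coeff_add, hp, hq, mul_add]

/-- If `f` is a non-zero form of degree `d` in `K[y_1,…,y_n]` with
`(x_1 + ⋯ + x_n) ∘ f = 0` (each `x_i` acting as `∂/∂y_i`), and
`a = max { deg_i(m) : m ∈ supp f }`, then for every `0 ≤ k ≤ a` there is a monomial
`m ∈ supp f` with `deg_i(m) = k`. -/
theorem levels_nonempty {K : Type*} [Field K] [CharZero K] {n : ℕ}
    (d : ℕ) (f : MvPolynomial (Fin n) K) (hf0 : f ≠ 0) (hf : f.IsHomogeneous d)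
    (hann : (∑ t, MvPolynomial.pderiv t f) = 0)
    (i : Fin n) (a : ℕ) (ha : a = f.support.sup (fun m => m i)) :
    ∀ k ≤ a, ∃ m ∈ f.support, m i = k := by
  -- Step: descending one level
  have hstep : ∀ j : ℕ, (∃ m ∈ f.support, m i = j + 1) → ∃ m ∈ f.support, m i = j := by
    intro j ⟨m, hm, hmi⟩
    by_contra h
    push_neg at h
    have hnone : ∀ ν : (Fin n) →₀ ℕ, ν i = j → MvPolynomial.coeff ν f = 0 := by
      intro ν hν
      by_contra hc
      exact h ν (MvPolynomial.mem_support_iff.2 hc) hν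
    set ν : (Fin n) →₀ ℕ := m - Finsupp.single i 1 with hνdef
    have hνi : ν i = j := by simp [hνdef, hmi]
    have hmeq : ν + Finsupp.single i 1 = m := by
      ext s
      rw [Finsupp.add_apply, Finsupp.single_apply, hνdef, Finsupp.tsub_apply,
        Finsupp.single_apply]
      by_cases hs : i = s
      · subst hs; simp; omega
      · simp [hs]
    have hz : MvPolynomial.coeff ν (∑ t, MvPolynomial.pderiv t f) = 0 := by
      rw [hann]; simp
    rw [MvPolynomial.coeff_sum] at hz
    have hterm : ∀ t ∈ Finset.univ (α := Fin n), t ≠ i →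
        MvPolynomial.coeff ν (MvPolynomial.pderiv t f) = 0 := by
      intro t _ ht
      rw [coeff_pderiv'_s3]
      have hti := Finsupp.add_apply ν (Finsupp.single t 1) i
      rw [Finsupp.single_apply, if_neg ht, add_zero, hνi] at hti
      rw [hnone _ hti, mul_zero]
    rw [Finset.sum_eq_single i (fun t ht htne => hterm t ht htne) (by simp)] at hz
    rw [coeff_pderiv'_s3, hνi, hmeq] at hz
    rcases mul_eq_zero.1 hz with h1 | h1
    · exact absurd h1 (Nat.cast_add_one_ne_zero j)
    · exact MvPolynomial.mem_support_iff.1 hm h1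
  -- top level is attained
  have hne : f.support.Nonempty := MvPolynomial.support_nonempty.2 hf0
  obtain ⟨m₀, hm₀, hm₀eq⟩ := Finset.exists_mem_eq_sup f.support hne (fun m => m i)
  have htop : ∃ m ∈ f.support, m i = a := ⟨m₀, hm₀, by rw [ha, hm₀eq]⟩
  -- descend
  have hdesc : ∀ s : ℕ, s ≤ a → ∃ m ∈ f.support, m i = a - s := by
    intro s
    induction s with
    | zero => intro _; simpa using htop
    | succ s ih =>
      intro hs
      have h' := ih (Nat.le_of_succ_le hs)
      have : a - s = (a - (s+1)) + 1 := by omega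
      rw [this] at h'
      exact hstep _ h'
  intro k hk
  have := hdesc (a - k) (by omega)
  have heq : a - (a - k) = k := by omega
  rwa [heq] at this
end

section
/- Let K be a field of characteristic zero and let f ≠ 0 be a form of degree d in R = K[y_1,…,y_n]. If ℓ = x_1 + ⋯ + x_n satisfies ℓ^{d−a} ∘ f = 0 for some integer a with 0 ≤ a ≤ d−1, then |supp(f)| ≥ a + 2. -/
open MvPolynomial Finset

namespace EllPowAnnAux

variable {K : Type*} [Field K] [CharZero K] {n : ℕ}

set_option linter.unusedSectionVars false

/-- The operator `ℓ = ∑ ∂/∂y_i` as a linear map. -/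
noncomputable def LD (K : Type*) [Field K] (n : ℕ) :
    MvPolynomial (Fin n) K →ₗ[K] MvPolynomial (Fin n) K :=
  ∑ t : Fin n, (pderiv t).toLinearMap

lemma LD_apply (g : MvPolynomial (Fin n) K) : LD K n g = ∑ t, pderiv t g := by
  simp [LD]

lemma coeff_pderiv (t : Fin n) (f : MvPolynomial (Fin n) K) (β : Fin n →₀ ℕ) :
    coeff β (pderiv t f) = coeff (β + Finsupp.single t 1) f * ((β t + 1 : ℕ) : K) := by
  classical
  conv_lhs => rw [f.as_sum, map_sum]
  simp_rw [pderiv_monomial]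
  rw [coeff_sum]
  simp_rw [coeff_monomial]
  rw [Finset.sum_eq_single (β + Finsupp.single t 1)]
  · rw [if_pos (by simp)]
    congr 2
    simp
  · intro s hs hne
    split_ifs with h
    · rcases Nat.eq_zero_or_pos (s t) with h0 | h0
      · simp [h0]
      · exfalso
        apply hne
        ext j
        have hj := congrFun (congrArg (fun v : Fin n →₀ ℕ => (v : Fin n → ℕ)) h) j
        simp only [Finsupp.coe_tsub, Pi.sub_apply] at hj
        simp only [Finsupp.coe_add, Pi.add_apply]
        rcases eq_or_ne t j with rfl | htj
        · simp only [Finsupp.single_eq_same] at hj ⊢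
          omega
        · simp only [Finsupp.single_eq_of_ne' htj] at hj ⊢
          omega
    · rfl
  · intro h
    rw [if_pos (by simp)]
    rw [notMem_support_iff.mp h, zero_mul]

lemma pderiv_comm' (i j : Fin n) (f : MvPolynomial (Fin n) K) :
    pderiv i (pderiv j f) = pderiv j (pderiv i f) := by
  classical
  ext β
  rw [coeff_pderiv, coeff_pderiv, coeff_pderiv, coeff_pderiv]
  rw [add_right_comm]
  rcases eq_or_ne i j with rfl | hij
  · ring
  · have h1 : (β + Finsupp.single i 1 : Fin n →₀ ℕ) j = β j := by
      rw [Finsupp.add_apply, Finsupp.single_eq_of_ne' hij, add_zero]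
    have h2 : (β + Finsupp.single j 1 : Fin n →₀ ℕ) i = β i := by
      rw [Finsupp.add_apply, Finsupp.single_eq_of_ne' (Ne.symm hij), add_zero]
    rw [h1, h2]
    ring

lemma pderiv_LD (i : Fin n) (f : MvPolynomial (Fin n) K) :
    pderiv i (LD K n f) = LD K n (pderiv i f) := by
  simp only [LD_apply, map_sum]
  exact Finset.sum_congr rfl fun t _ => pderiv_comm' i t f

lemma pderiv_LD_pow (i : Fin n) (k : ℕ) (f : MvPolynomial (Fin n) K) :
    (LD K n ^ k) (pderiv i f) = pderiv i ((LD K n ^ k) f) := by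
  induction k generalizing f with
  | zero => simp
  | succ m ih =>
    rw [pow_succ, Module.End.mul_apply, Module.End.mul_apply, ← pderiv_LD]
    exact ih (LD K n f)

lemma pderiv_ne_zero_of_exists (t : Fin n) (f : MvPolynomial (Fin n) K)
    {α : Fin n →₀ ℕ} (hα : α ∈ f.support) (ht : α t ≠ 0) : pderiv t f ≠ 0 := by
  intro h
  have hβ : (α - Finsupp.single t 1) + Finsupp.single t 1 = α :=
    tsub_add_cancel_of_le (Finsupp.single_le_iff.mpr (Nat.one_le_iff_ne_zero.mpr ht))
  have hcp := coeff_pderiv t f (α - Finsupp.single t 1)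
  rw [h, coeff_zero, hβ] at hcp
  have hc : coeff α f ≠ 0 := mem_support_iff.mp hα
  have hnat : (((α - Finsupp.single t 1 : Fin n →₀ ℕ) t) + 1 : ℕ) ≠ 0 := by omega
  exact (mul_ne_zero hc (Nat.cast_ne_zero.mpr hnat)) hcp.symm

lemma card_support_pderiv_lt (t : Fin n) (f : MvPolynomial (Fin n) K)
    {α₀ : Fin n →₀ ℕ} (h0 : α₀ ∈ f.support) (h0t : α₀ t = 0) :
    (pderiv t f).support.card + 1 ≤ f.support.card := by
  classical
  have hsub : (pderiv t f).support.card ≤ (f.support.erase α₀).card := by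
    apply Finset.card_le_card_of_injOn (fun β => β + Finsupp.single t 1)
    · intro β hβ
      rw [Finset.mem_coe, mem_support_iff, coeff_pderiv] at hβ
      have hmem : β + Finsupp.single t 1 ∈ f.support :=
        mem_support_iff.mpr (left_ne_zero_of_mul hβ)
      refine Finset.mem_erase.mpr ⟨?_, hmem⟩
      intro (heq : β + Finsupp.single t 1 = α₀)
      have hval : (β + Finsupp.single t 1 : Fin n →₀ ℕ) t = β t + 1 := by
        rw [Finsupp.add_apply, Finsupp.single_eq_same]
      rw [heq, h0t] at hval
      omega
    · intro a _ b _ hab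
      exact add_right_cancel hab
  rw [Finset.card_erase_of_mem h0] at hsub
  have : 1 ≤ f.support.card := Finset.card_pos.mpr ⟨α₀, h0⟩
  omega

lemma isHomogeneous_pderiv {f : MvPolynomial (Fin n) K} {d : ℕ}
    (hf : f.IsHomogeneous d) (t : Fin n) : (pderiv t f).IsHomogeneous (d - 1) := by
  intro β hβ
  rw [coeff_pderiv] at hβ
  have h1 : coeff (β + Finsupp.single t 1) f ≠ 0 := left_ne_zero_of_mul hβ
  have h2 := hf h1
  rw [map_add] at h2
  have h3 : Finsupp.weight (1 : Fin n → ℕ) (Finsupp.single t 1) = 1 := by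
    simp [Finsupp.weight_apply, Finsupp.sum_single_index]
  omega

lemma isHomogeneous_of_X_mul {g : MvPolynomial (Fin n) K} {i : Fin n} {d : ℕ}
    (h : (X i * g).IsHomogeneous d) : g.IsHomogeneous (d - 1) := by
  intro β hβ
  have hc : coeff (Finsupp.single i 1 + β) (X i * g) = coeff β g := coeff_X_mul β i g
  have h2 := h (hc.symm ▸ hβ : coeff (Finsupp.single i 1 + β) (X i * g) ≠ 0)
  rw [map_add] at h2
  have h3 : Finsupp.weight (1 : Fin n → ℕ) (Finsupp.single i 1) = 1 := by
    simp [Finsupp.weight_apply, Finsupp.sum_single_index]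
  omega

lemma LD_X_mul (i : Fin n) (g : MvPolynomial (Fin n) K) :
    LD K n (X i * g) = g + X i * LD K n g := by
  have hx : ∑ t : Fin n, pderiv t (X i : MvPolynomial (Fin n) K) = 1 := by
    rw [Finset.sum_eq_single i]
    · exact pderiv_X_self i
    · intro b _ hbi
      exact pderiv_X_of_ne (Ne.symm hbi)
    · intro h
      exact absurd (Finset.mem_univ i) h
  rw [LD_apply, LD_apply]
  simp_rw [pderiv_mul]
  rw [Finset.sum_add_distrib, ← Finset.sum_mul, hx, one_mul, ← Finset.mul_sum]

lemma LD_C_mul (c : K) (p : MvPolynomial (Fin n) K) :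
    LD K n (C c * p) = C c * LD K n p := by
  rw [← smul_eq_C_mul, map_smul, smul_eq_C_mul]

lemma LD_pow_X_mul (i : Fin n) (m : ℕ) (g : MvPolynomial (Fin n) K) :
    (LD K n ^ (m + 1)) (X i * g)
      = X i * (LD K n ^ (m + 1)) g + C ((m + 1 : ℕ) : K) * (LD K n ^ m) g := by
  induction m generalizing g with
  | zero =>
    rw [pow_one, pow_zero, Module.End.one_apply, LD_X_mul]
    have : (C ((0 + 1 : ℕ) : K) : MvPolynomial (Fin n) K) = 1 := by
      norm_num
    rw [this]
    ring
  | succ m ih =>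
    have step : (LD K n ^ (m + 2)) (X i * g) = LD K n ((LD K n ^ (m + 1)) (X i * g)) := by
      rw [pow_succ' (LD K n) (m + 1), Module.End.mul_apply]
    have hA : LD K n ((LD K n ^ (m + 1)) g) = (LD K n ^ (m + 2)) g := by
      rw [pow_succ' (LD K n) (m + 1), Module.End.mul_apply]
    have hB : LD K n ((LD K n ^ m) g) = (LD K n ^ (m + 1)) g := by
      rw [pow_succ' (LD K n) m, Module.End.mul_apply]
    have h3 : (C ((m + 1 + 1 : ℕ) : K) : MvPolynomial (Fin n) K)
        = C ((m + 1 : ℕ) : K) + 1 := by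
      push_cast
      rw [map_add, map_one]
    rw [step, ih g, map_add, LD_X_mul, LD_C_mul, hA, hB, h3]
    ring

lemma totalDegree_pderiv_le (t : Fin n) (g : MvPolynomial (Fin n) K) (m : ℕ)
    (h : g.totalDegree ≤ m + 1) : (pderiv t g).totalDegree ≤ m := by
  classical
  conv_lhs => rw [g.as_sum, map_sum]
  refine (totalDegree_finset_sum _ _).trans (Finset.sup_le ?_)
  intro s hs
  rw [pderiv_monomial]
  rcases Nat.eq_zero_or_pos (s t) with h0 | h0
  · simp [h0]
  · refine (totalDegree_monomial_le _ _).trans ?_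
    have hs' : (s.sum fun _ e => e) ≤ m + 1 := le_trans (le_totalDegree hs) h
    have key : (s - Finsupp.single t 1) + Finsupp.single t 1 = s :=
      tsub_add_cancel_of_le (Finsupp.single_le_iff.mpr h0)
    have hsum : ((s - Finsupp.single t 1).sum fun _ e => e) + 1 = s.sum fun _ e => e := by
      conv_rhs => rw [← key]
      rw [Finsupp.sum_add_index' (fun _ => rfl) (fun _ _ _ => rfl)]
      rw [Finsupp.sum_single_index rfl]
    have hid : ((s - Finsupp.single t 1).sum fun _ => (id : ℕ → ℕ))
        = ((s - Finsupp.single t 1).sum fun _ e => e) := rfl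
    omega

lemma pderiv_eq_zero_of_totalDegree_eq_zero (t : Fin n) {g : MvPolynomial (Fin n) K}
    (h : g.totalDegree = 0) : pderiv t g = 0 := by
  apply pderiv_eq_zero_of_notMem_vars
  rw [mem_vars]
  rintro ⟨d, hd, hind⟩
  have := (MvPolynomial.totalDegree_eq_zero_iff _ g).mp h d hd t
  rw [Finsupp.mem_support_iff] at hind
  exact hind (by simpa using (MvPolynomial.totalDegree_eq_zero_iff _ g).mp h d hd t)

lemma LD_pow_eq_zero (m : ℕ) (g : MvPolynomial (Fin n) K)
    (h : g.totalDegree ≤ m) : (LD K n ^ (m + 1)) g = 0 := by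
  induction m generalizing g with
  | zero =>
    rw [pow_one, LD_apply]
    exact Finset.sum_eq_zero fun t _ =>
      pderiv_eq_zero_of_totalDegree_eq_zero t (Nat.le_zero.mp h)
  | succ m ih =>
    rw [pow_succ, Module.End.mul_apply]
    apply ih
    rw [LD_apply]
    refine (totalDegree_finset_sum _ _).trans (Finset.sup_le ?_)
    intro t _
    exact totalDegree_pderiv_le t g m h

lemma ann_shift (i : Fin n) (k : ℕ) (g : MvPolynomial (Fin n) K)
    (hann : (LD K n ^ (k + 1)) (X i * g) = 0) : (LD K n ^ k) g = 0 := by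
  set h : MvPolynomial (Fin n) K := (LD K n ^ k) g with hh
  -- base equation
  have hLh : ∀ m : ℕ, LD K n ((LD K n ^ m) h) = (LD K n ^ (m + 1)) h := fun m => by
    rw [pow_succ' (LD K n) m, Module.End.mul_apply]
  have e0 : X i * LD K n h = -(C ((k + 1 : ℕ) : K) * h) := by
    have := LD_pow_X_mul i k g
    rw [hann] at this
    have hkg : (LD K n ^ (k + 1)) g = LD K n h := by
      rw [pow_succ' (LD K n) k, Module.End.mul_apply, hh]
    rw [hkg] at this
    linear_combination -this
  -- claim2
  have claim2 : ∀ m : ℕ, X i * (LD K n ^ (m + 1)) h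
      = -(C ((k + 1 + m : ℕ) : K) * (LD K n ^ m) h) := by
    intro m
    induction m with
    | zero =>
      simpa using e0
    | succ m ih =>
      have hder := congrArg (LD K n) ih
      rw [LD_X_mul, map_neg, LD_C_mul, hLh (m + 1), hLh m] at hder
      have hc : (C ((k + 1 + (m + 1) : ℕ) : K) : MvPolynomial (Fin n) K)
          = C ((k + 1 + m : ℕ) : K) + 1 := by
        have hcast : ((k + 1 + (m + 1) : ℕ) : K) = ((k + 1 + m : ℕ) : K) + 1 := by
          push_cast
          ring
        rw [hcast, map_add, map_one]
      rw [hc]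
      linear_combination hder
  -- claim3
  have claim3 : ∀ m : ℕ,
      C (∏ j ∈ Finset.range m, ((k + 1 + j : ℕ) : K)) * h
        = (-1 : MvPolynomial (Fin n) K) ^ m * ((X i) ^ m * (LD K n ^ m) h) := by
    intro m
    induction m with
    | zero => simp
    | succ m ih =>
      rw [Finset.prod_range_succ, map_mul]
      have c2 := claim2 m
      calc C (∏ j ∈ Finset.range m, ((k + 1 + j : ℕ) : K)) * C ((k + 1 + m : ℕ) : K) * h
          = C ((k + 1 + m : ℕ) : K) * (C (∏ j ∈ Finset.range m, ((k + 1 + j : ℕ) : K)) * h) := by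
            ring
        _ = C ((k + 1 + m : ℕ) : K) * ((-1 : MvPolynomial (Fin n) K) ^ m * ((X i) ^ m * (LD K n ^ m) h)) := by
            rw [ih]
        _ = (-1 : MvPolynomial (Fin n) K) ^ (m + 1) * ((X i) ^ (m + 1) * (LD K n ^ (m + 1)) h) := by
            rw [pow_succ (X i) m]
            rw [pow_succ (-1 : MvPolynomial (Fin n) K) m]
            linear_combination ((-1 : MvPolynomial (Fin n) K) ^ m * (X i) ^ m) * c2
  -- finish
  have hM := claim3 (h.totalDegree + 1)
  rw [LD_pow_eq_zero h.totalDegree h le_rfl, mul_zero, mul_zero] at hM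
  have hP : (∏ j ∈ Finset.range (h.totalDegree + 1), ((k + 1 + j : ℕ) : K)) ≠ 0 := by
    apply Finset.prod_ne_zero_iff.mpr
    intro j _
    exact Nat.cast_ne_zero.mpr (by omega)
  rcases mul_eq_zero.mp hM with hc | hh0
  · exact absurd (MvPolynomial.C_eq_zero.mp hc) hP
  · exact hh0

lemma eq_X_mul_divMonomial {f : MvPolynomial (Fin n) K} {i : Fin n}
    (hall : ∀ α ∈ f.support, α i ≠ 0) :
    f = X i * f.divMonomial (Finsupp.single i 1) := by
  classical
  have hmod : f.modMonomial (Finsupp.single i 1) = 0 := by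
    ext β
    by_cases hle : Finsupp.single i 1 ≤ β
    · rw [coeff_modMonomial_of_le f hle, coeff_zero]
    · rw [coeff_modMonomial_of_not_le f hle, coeff_zero]
      by_contra hc
      have hβi := hall β (mem_support_iff.mpr hc)
      exact hle (Finsupp.single_le_iff.mpr (by omega))
  have hdm := divMonomial_add_modMonomial f (Finsupp.single i 1)
  rw [hmod, add_zero] at hdm
  have hX : (monomial (Finsupp.single i 1) (1 : K) : MvPolynomial (Fin n) K) = X i := rfl
  rw [← hX]
  exact hdm.symm

lemma main_induction : ∀ d k : ℕ, 1 ≤ k → k ≤ d → ∀ f : MvPolynomial (Fin n) K,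
    f ≠ 0 → f.IsHomogeneous d → (LD K n ^ k) f = 0 → d - k + 2 ≤ f.support.card := by
  intro d
  induction d using Nat.strong_induction_on with
  | _ d IH =>
    intro k hk1 hkd f hf0 hf hann
    by_cases hmix : ∃ i : Fin n, (∃ α ∈ f.support, α i = 0) ∧ (∃ α ∈ f.support, α i ≠ 0)
    · obtain ⟨i, ⟨α₀, hα₀, h0⟩, ⟨α₁, hα₁, h1⟩⟩ := hmix
      rcases eq_or_lt_of_le hkd with rfl | hlt
      · have hne : α₀ ≠ α₁ := fun h => h1 (h ▸ h0)
        have h2 : 2 ≤ f.support.card := Finset.one_lt_card.mpr ⟨α₀, hα₀, α₁, hα₁, hne⟩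
        omega
      · have hg0 : pderiv i f ≠ 0 := pderiv_ne_zero_of_exists i f hα₁ h1
        have hanng : (LD K n ^ k) (pderiv i f) = 0 := by
          rw [pderiv_LD_pow, hann, map_zero]
        have hcard := card_support_pderiv_lt i f hα₀ h0
        have hd1 : d - 1 < d := by omega
        have hres := IH (d - 1) hd1 k hk1 (by omega) (pderiv i f) hg0
          (isHomogeneous_pderiv hf i) hanng
        omega
    · obtain ⟨α₀, hα₀⟩ := MvPolynomial.support_nonempty.mpr hf0
      have hd1 : 1 ≤ d := hk1.trans hkd
      have hdeg : Finsupp.weight (1 : Fin n → ℕ) α₀ = d := hf (mem_support_iff.mp hα₀)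
      have hex : ∃ i : Fin n, α₀ i ≠ 0 := by
        by_contra hc
        push_neg at hc
        have : α₀ = 0 := Finsupp.ext fun j => hc j
        rw [this, map_zero] at hdeg
        omega
      obtain ⟨i, hi⟩ := hex
      have hall : ∀ α ∈ f.support, α i ≠ 0 := by
        intro α hα h0
        exact hmix ⟨i, ⟨α, hα, h0⟩, ⟨α₀, hα₀, hi⟩⟩
      set g := f.divMonomial (Finsupp.single i 1) with hg
      have hfg : f = X i * g := eq_X_mul_divMonomial hall
      have hg0 : g ≠ 0 := by
        intro h
        rw [hfg, h, mul_zero] at hf0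
        exact hf0 rfl
      have hcard : g.support.card = f.support.card := by
        rw [hfg, support_X_mul, Finset.card_map]
      obtain ⟨k', rfl⟩ : ∃ k', k = k' + 1 := ⟨k - 1, by omega⟩
      have hanng : (LD K n ^ k') g = 0 := by
        apply ann_shift i k' g
        rw [← hfg]
        exact hann
      rcases Nat.eq_zero_or_pos k' with rfl | hk'
      · rw [pow_zero, Module.End.one_apply] at hanng
        exact absurd hanng hg0
      · have hghom : g.IsHomogeneous (d - 1) := isHomogeneous_of_X_mul (hfg ▸ hf)
        have hres := IH (d - 1) (by omega) k' hk' (by omega) g hg0 hghom hanng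
        omega

end EllPowAnnAux

open EllPowAnnAux

/-- If `f ≠ 0` is a form of degree `d` in `K[y_1,…,y_n]` and
`ℓ^{d-a} ∘ f = 0` where `ℓ = x_1 + ⋯ + x_n` acts with `x_i = ∂/∂y_i` and
`0 ≤ a ≤ d - 1`, then `|supp f| ≥ a + 2`. -/
theorem support_card_ge_of_ell_pow_ann {K : Type*} [Field K] [CharZero K] {n : ℕ}
    (d a : ℕ) (ha : a ≤ d - 1) (hd : 1 ≤ d)
    (f : MvPolynomial (Fin n) K) (hf0 : f ≠ 0) (hf : f.IsHomogeneous d)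
    (hann : (fun g : MvPolynomial (Fin n) K => ∑ t, MvPolynomial.pderiv t g)^[d - a] f = 0) :
    a + 2 ≤ f.support.card := by
  have hiter : ∀ (m : ℕ) (p : MvPolynomial (Fin n) K),
      (fun g : MvPolynomial (Fin n) K => ∑ t, MvPolynomial.pderiv t g)^[m] p = (LD K n ^ m) p := by
    intro m
    induction m with
    | zero => intro p; simp
    | succ m ih =>
      intro p
      rw [Function.iterate_succ_apply, pow_succ, Module.End.mul_apply, ← ih (LD K n p)]
      congr 1
      exact (LD_apply p).symm
  rw [hiter] at hann
  have := main_induction d (d - a) (by omega) (by omega) f hf0 hf hann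
  omega
end

section
/- Let K be a field of characteristic zero and let f be a non-zero form of degree d ≥ 2 in R = K[y_1,y_2,y_3] such that (x_1 + x_2 + x_3) ∘ f = 0. For 1 ≤ i ≤ 3 set a_i = max{ deg_i(m) : m ∈ supp(f) }. Then for every 1 ≤ i ≤ 3 and every 0 ≤ k ≤ a_i, the number of monomials m ∈ supp(f) with deg_i(m) = k is at least d − a_i + 1. -/
section AuxPoly

open Polynomial

lemma support_X_mul' {K : Type*} [Field K] (G : Polynomial K) :
    (X * G).support = G.support.image (· + 1) := by
  ext n
  cases n with
  | zero =>
    simp only [Polynomial.mem_support_iff, Polynomial.mul_coeff_zero, coeff_X_zero, zero_mul,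
      ne_eq, not_true_eq_false, false_iff, Finset.mem_image]
    rintro ⟨m, _, h⟩; omega
  | succ n =>
    simp only [Polynomial.mem_support_iff, Polynomial.coeff_X_mul, Finset.mem_image, ne_eq]
    constructor
    · intro h; exact ⟨n, by simpa using h, rfl⟩
    · rintro ⟨m, hm, he⟩
      have : m = n := by omega
      subst this; simpa using hm

lemma card_support_of_pow_dvd {K : Type*} [Field K] [CharZero K] :
    ∀ n : ℕ, ∀ G : Polynomial K, G.natDegree ≤ n → G ≠ 0 → ∀ N : ℕ,
      (X - C 1) ^ N ∣ G → N < G.support.card := by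
  intro n
  induction n with
  | zero =>
    intro G hdeg hG0 N hdvd
    cases N with
    | zero => simpa [Finset.card_pos, Polynomial.support_nonempty] using hG0
    | succ N =>
      exfalso
      have h1 := Polynomial.natDegree_le_of_dvd hdvd hG0
      rw [Polynomial.natDegree_pow, Polynomial.natDegree_X_sub_C] at h1
      omega
  | succ n ih =>
    intro G hdeg hG0 N hdvd
    by_cases hX : (X : Polynomial K) ∣ G
    · obtain ⟨G₂, rfl⟩ := hX
      have hG₂0 : G₂ ≠ 0 := by rintro rfl; simp at hG0
      have hcop : IsCoprime ((X - C 1 : Polynomial K) ^ N) X :=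
        IsCoprime.pow_left ⟨-1, 1, by rw [Polynomial.C_1]; ring⟩
      have hdvd₂ : (X - C 1 : Polynomial K) ^ N ∣ G₂ := hcop.dvd_of_dvd_mul_left hdvd
      have hdeg₂ : G₂.natDegree ≤ n := by
        have := Polynomial.natDegree_mul (Polynomial.X_ne_zero (R := K)) hG₂0
        rw [Polynomial.natDegree_X] at this
        omega
      have := ih G₂ hdeg₂ hG₂0 N hdvd₂
      have hinj : Function.Injective (fun x : ℕ => x + 1) := fun a b h => by simpa using h
      rwa [support_X_mul', Finset.card_image_of_injective _ hinj]
    · have h0 : G.coeff 0 ≠ 0 := fun h => hX (Polynomial.X_dvd_iff.mpr h)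
      cases N with
      | zero => simpa [Finset.card_pos, Polynomial.support_nonempty] using hG0
      | succ N =>
        have hdvd' : (X - C 1 : Polynomial K) ^ N ∣ derivative G := by
          obtain ⟨Q, rfl⟩ := hdvd
          rw [Polynomial.derivative_mul, Polynomial.derivative_pow, Nat.add_sub_cancel,
            Polynomial.derivative_X_sub_C]
          exact ⟨C ((N + 1 : ℕ) : K) * Q + (X - C 1) * derivative Q, by push_cast; ring⟩
        have hG'0 : derivative G ≠ 0 := by
          intro h
          have h0d : G.natDegree = 0 := Polynomial.natDegree_eq_zero_of_derivative_eq_zero h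
          have h1 := Polynomial.natDegree_le_of_dvd hdvd hG0
          rw [Polynomial.natDegree_pow, Polynomial.natDegree_X_sub_C] at h1
          omega
        have hdegne : G.natDegree ≠ 0 := by
          intro h
          apply hG'0
          rw [Polynomial.eq_C_of_natDegree_eq_zero h]
          simp
        have hdeg' : (derivative G).natDegree ≤ n := by
          have := Polynomial.natDegree_derivative_lt hdegne
          omega
        have hIH := ih (derivative G) hdeg' hG'0 N hdvd'
        have hsub : (derivative G).support.image (· + 1) ⊆ G.support.erase 0 := by
          intro m hm
          simp only [Finset.mem_image] at hm
          obtain ⟨l, hl, rfl⟩ := hm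
          rw [Finset.mem_erase]
          refine ⟨by omega, ?_⟩
          rw [Polynomial.mem_support_iff] at hl ⊢
          intro h
          apply hl
          rw [Polynomial.coeff_derivative, h, zero_mul]
        have hcard : (derivative G).support.card < G.support.card := by
          have hinj : Function.Injective (fun x : ℕ => x + 1) := fun a b h => by simpa using h
          have h1 : (derivative G).support.card ≤ (G.support.erase 0).card := by
            rw [← Finset.card_image_of_injective (derivative G).support hinj]
            exact Finset.card_le_card hsub
          have h2 : (G.support.erase 0).card < G.support.card :=
            Finset.card_erase_lt_of_mem (Polynomial.mem_support_iff.mpr h0)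
          omega
        omega

lemma key_deriv_identity {K : Type*} [Field K] (m : ℕ) (S : Polynomial K) :
    (X - C 1) * derivative ((X - C 1) ^ m * S) =
      (X - C 1) ^ m * (C (m : K) * S + (X - C 1) * derivative S) := by
  cases m with
  | zero => simp [derivative_mul]
  | succ m =>
    rw [derivative_mul, derivative_pow, Nat.add_sub_cancel, derivative_X_sub_C]
    push_cast
    ring

lemma dvd_of_ode {K : Type*} [Field K] [CharZero K] (G H : Polynomial K) (hG : G ≠ 0) (e N : ℕ)
    (hrel : (X - C 1) * derivative G - C (e : K) * G = H)
    (hdvd : (X - C 1) ^ N ∣ H) (hNe : N ≤ e) : (X - C 1) ^ N ∣ G := by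
  set m := rootMultiplicity 1 G with hm
  by_cases hmN : N ≤ m
  · exact (pow_dvd_pow _ hmN).trans (Polynomial.pow_rootMultiplicity_dvd G 1)
  · exfalso
    push_neg at hmN
    obtain ⟨S, hS, hSnd⟩ := Polynomial.exists_eq_pow_rootMultiplicity_mul_and_not_dvd G hG 1
    rw [← hm] at hS
    have hSeval : S.eval 1 ≠ 0 := fun h => hSnd (Polynomial.dvd_iff_isRoot.mpr h)
    set B : Polynomial K := C ((m : K) - (e : K)) * S + (X - C 1) * derivative S with hB
    have hHB : H = (X - C 1) ^ m * B := by
      rw [← hrel, hS, key_deriv_identity, hB]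
      rw [map_sub]
      ring
    have hBdvd : (X - C 1 : Polynomial K) ∣ B := by
      have h1 : (X - C 1 : Polynomial K) ^ (m + 1) ∣ (X - C 1) ^ m * B := by
        rw [← hHB]; exact (pow_dvd_pow _ (by omega)).trans hdvd
      rw [pow_succ] at h1
      exact (mul_dvd_mul_iff_left (pow_ne_zero m (Polynomial.X_sub_C_ne_zero 1))).mp h1
    have := Polynomial.dvd_iff_isRoot.mp hBdvd
    rw [Polynomial.IsRoot, hB] at this
    simp at this
    rcases this with h | h
    · have h2 : (m : K) = (e : K) := sub_eq_zero.mp h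
      have : m = e := Nat.cast_injective h2
      omega
    · exact hSeval h

end AuxPoly

section AuxMv

open MvPolynomial

lemma coeff_pderiv'_s6 {σ R : Type*} [DecidableEq σ] [CommSemiring R] (i : σ) (f : MvPolynomial σ R)
    (m : σ →₀ ℕ) : coeff m (pderiv i f) = (m i + 1) * coeff (m + Finsupp.single i 1) f := by
  induction f using MvPolynomial.induction_on' with
  | monomial s a =>
    rw [pderiv_monomial, coeff_monomial, coeff_monomial]
    split_ifs with h1 h2 h2
    · subst h2; simp; ring
    · by_cases h0 : s i = 0
      · simp [h0]
      · exfalso; apply h2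
        ext t
        have hmt : m t = s t - (Finsupp.single i 1) t := by rw [← h1]; simp
        by_cases ht : t = i
        · subst ht
          simp only [Finsupp.add_apply, Finsupp.single_eq_same] at hmt ⊢
          omega
        · simp only [Finsupp.add_apply, Finsupp.single_eq_of_ne' (Ne.symm ht)] at hmt ⊢
          omega
    · exfalso; apply h1
      subst h2
      ext t
      by_cases ht : t = i <;> simp [Finsupp.single_apply, ht]
    · ring
  | add p q hp hq => simp only [map_add, coeff_add, hp, hq, mul_add]

lemma sum_fin3 {M : Type*} [AddCommMonoid M] (i : Fin 3) (g : Fin 3 → M) :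
    ∑ t, g t = g i + g (i + 1) + g (i + 2) := by
  rw [← Fintype.sum_equiv (Equiv.addLeft i) (fun t => g (i + t)) g (fun x => rfl)]
  rw [Fin.sum_univ_three, add_zero]

lemma fin3_ne (i : Fin 3) : i ≠ i + 1 ∧ i ≠ i + 2 ∧ i + 1 ≠ i + 2 := by revert i; decide

lemma fin3_cases (i t : Fin 3) : t = i ∨ t = i + 1 ∨ t = i + 2 := by revert i t; decide

noncomputable def nu (d : ℕ) (i : Fin 3) (k l : ℕ) : Fin 3 →₀ ℕ :=
  Finsupp.single i k + Finsupp.single (i + 1) l + Finsupp.single (i + 2) (d - k - l)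

lemma nu_apply₁ (d : ℕ) (i : Fin 3) (k l : ℕ) : nu d i k l i = k := by
  obtain ⟨h1, h2, _⟩ := fin3_ne i
  simp [nu, Finsupp.single_eq_of_ne h1, Finsupp.single_eq_of_ne h2]

lemma nu_apply₂ (d : ℕ) (i : Fin 3) (k l : ℕ) : nu d i k l (i + 1) = l := by
  obtain ⟨h1, _, h3⟩ := fin3_ne i
  simp [nu, Finsupp.single_eq_of_ne (Ne.symm h1), Finsupp.single_eq_of_ne h3]

lemma nu_apply₃ (d : ℕ) (i : Fin 3) (k l : ℕ) : nu d i k l (i + 2) = d - k - l := by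
  obtain ⟨_, h2, h3⟩ := fin3_ne i
  simp [nu, Finsupp.single_eq_of_ne (Ne.symm h2), Finsupp.single_eq_of_ne (Ne.symm h3)]

end AuxMv

open MvPolynomial Finset

/-- If `f` is a non-zero form of degree `d ≥ 2` in `K[y_1,y_2,y_3]` with
`(x_1 + x_2 + x_3) ∘ f = 0` (each `x_i` acting as `∂/∂y_i`), and
`a_i = max { deg_i(m) : m ∈ supp f }`, then for every `i` and every `0 ≤ k ≤ a_i`
the number of monomials `m ∈ supp f` with `deg_i(m) = k` is at least `d - a_i + 1`. -/
theorem level_card_ge {K : Type*} [Field K] [CharZero K]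
    (d : ℕ) (hd : 2 ≤ d) (f : MvPolynomial (Fin 3) K) (hf0 : f ≠ 0)
    (hf : f.IsHomogeneous d)
    (hann : (∑ t, MvPolynomial.pderiv t f) = 0)
    (a : Fin 3 → ℕ) (ha : ∀ i, a i = f.support.sup (fun m => m i)) :
    ∀ i : Fin 3, ∀ k ≤ a i,
      d - a i + 1 ≤ (f.support.filter (fun m => m i = k)).card := by
  intro i k hk
  classical
  rw [ha i] at hk ⊢
  set A := f.support.sup (fun m => m i) with hAdef
  set c : ℕ → ℕ → K := fun k l => coeff (nu d i k l) f with hcdef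
  set G : ℕ → Polynomial K :=
    fun k => ∑ l ∈ Finset.range (d + 1), Polynomial.C (c k l) * Polynomial.X ^ l with hGdef
  have hhom : ∀ m : Fin 3 →₀ ℕ, coeff m f ≠ 0 → m i + m (i + 1) + m (i + 2) = d := by
    intro m hm
    have hdeg : m.degree = d := by
      by_contra h
      exact hm (hf.coeff_eq_zero h)
    rw [← hdeg, Finsupp.degree_apply,
      Finset.sum_subset (Finset.subset_univ _) (fun x _ hx => Finsupp.notMem_support_iff.mp hx),
      sum_fin3 i]
  have hm_eq : ∀ m : Fin 3 →₀ ℕ, coeff m f ≠ 0 → m = nu d i (m i) (m (i + 1)) := by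
    intro m hm
    have hsum := hhom m hm
    ext t
    rcases fin3_cases i t with rfl | rfl | rfl
    · rw [nu_apply₁]
    · rw [nu_apply₂]
    · rw [nu_apply₃]; omega
  have hc_zero : ∀ k l : ℕ, d < k + l → c k l = 0 := by
    intro k l hdl
    by_contra h
    have := hhom _ h
    rw [nu_apply₁, nu_apply₂, nu_apply₃] at this
    omega
  have hcoeffG : ∀ k l : ℕ, (G k).coeff l = c k l := by
    intro k l
    rw [hGdef]
    simp only [Polynomial.finset_sum_coeff, Polynomial.coeff_C_mul, Polynomial.coeff_X_pow]
    rw [Finset.sum_eq_single l]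
    · by_cases hl : l ∈ Finset.range (d + 1)
      · simp
      · simp only [Finset.mem_range, not_lt] at hl
        simp [hc_zero k l (by omega)]
    · intro b _ hb
      simp [Ne.symm hb]
    · intro hl
      simp only [Finset.mem_range, not_lt] at hl
      simp [hc_zero k l (by omega)]
  have hscalar : ∀ k l : ℕ,
      ((k : K) + 1) * c (k + 1) l + ((l : K) + 1) * c k (l + 1) + ((d : K) - k - l) * c k l = 0 := by
    intro k l
    obtain ⟨hne1, hne2, hne3⟩ := fin3_ne i
    by_cases hkl : k + l + 1 ≤ d
    · have h0 : coeff (nu (d - 1) i k l) (∑ t, pderiv t f) = 0 := by rw [hann]; simp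
      rw [MvPolynomial.coeff_sum, sum_fin3 i, coeff_pderiv'_s6, coeff_pderiv'_s6, coeff_pderiv'_s6] at h0
      have e1 : nu (d - 1) i k l + Finsupp.single i 1 = nu d i (k + 1) l := by
        ext t
        rcases fin3_cases i t with rfl | rfl | rfl
        · simp only [Finsupp.add_apply, nu_apply₁, Finsupp.single_eq_same]
        · simp only [Finsupp.add_apply, nu_apply₂, Finsupp.single_eq_of_ne' hne1]
          all_goals omega
        · simp only [Finsupp.add_apply, nu_apply₃, Finsupp.single_eq_of_ne' hne2]
          all_goals omega
      have e2 : nu (d - 1) i k l + Finsupp.single (i + 1) 1 = nu d i k (l + 1) := by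
        ext t
        rcases fin3_cases i t with rfl | rfl | rfl
        · simp only [Finsupp.add_apply, nu_apply₁, Finsupp.single_eq_of_ne' (Ne.symm hne1)]
          all_goals omega
        · simp only [Finsupp.add_apply, nu_apply₂, Finsupp.single_eq_same]
        · simp only [Finsupp.add_apply, nu_apply₃, Finsupp.single_eq_of_ne' hne3]
          all_goals omega
      have e3 : nu (d - 1) i k l + Finsupp.single (i + 2) 1 = nu d i k l := by
        ext t
        rcases fin3_cases i t with rfl | rfl | rfl
        · simp only [Finsupp.add_apply, nu_apply₁, Finsupp.single_eq_of_ne' (Ne.symm hne2)]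
          all_goals omega
        · simp only [Finsupp.add_apply, nu_apply₂, Finsupp.single_eq_of_ne' (Ne.symm hne3)]
          all_goals omega
        · simp only [Finsupp.add_apply, nu_apply₃, Finsupp.single_eq_same]
          all_goals omega
      rw [e1, e2, e3, nu_apply₁, nu_apply₂, nu_apply₃] at h0
      have hcast : ((d - 1 - k - l : ℕ) : K) + 1 = (d : K) - k - l := by
        rw [show d - 1 - k - l = d - (k + l + 1) from by omega, Nat.cast_sub (by omega)]
        push_cast
        ring
      rw [hcast] at h0
      exact h0
    · have h1 : c (k + 1) l = 0 := hc_zero _ _ (by omega)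
      have h2 : c k (l + 1) = 0 := hc_zero _ _ (by omega)
      by_cases hdl : k + l = d
      · have h3 : (d : K) - k - l = 0 := by
          rw [← hdl]
          push_cast
          ring
        rw [h1, h2, h3]
        ring
      · have h3 : c k l = 0 := hc_zero _ _ (by omega)
        rw [h1, h2, h3]
        ring
  have hrec : ∀ k : ℕ,
      (Polynomial.X - Polynomial.C 1) * Polynomial.derivative (G k)
        - Polynomial.C ((d : K) - k) * G k = Polynomial.C ((k : K) + 1) * G (k + 1) := by
    intro k
    apply Polynomial.ext
    intro l
    simp only [sub_mul, one_mul, Polynomial.coeff_sub, Polynomial.coeff_C_mul]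
    cases l with
    | zero =>
      rw [Polynomial.mul_coeff_zero, Polynomial.coeff_X_zero, zero_mul,
        Polynomial.coeff_derivative]
      simp only [hcoeffG]
      have hs := hscalar k 0
      push_cast at hs ⊢
      linear_combination -hs
    | succ n =>
      rw [Polynomial.coeff_X_mul, Polynomial.coeff_derivative, Polynomial.coeff_derivative]
      simp only [hcoeffG]
      have hs := hscalar k (n + 1)
      push_cast at hs ⊢
      linear_combination -hs
  have hdegG : ∀ k : ℕ, (G k).natDegree ≤ d := fun k =>
    Polynomial.natDegree_le_iff_coeff_eq_zero.mpr fun N hN => by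
      rw [hcoeffG]; exact hc_zero k N (by omega)
  have hAd : A ≤ d := Finset.sup_le fun m hm => by
    have := hhom m (MvPolynomial.mem_support_iff.mp hm)
    omega
  obtain ⟨m0, hm0, hm0A⟩ :=
    Finset.exists_mem_eq_sup f.support (MvPolynomial.support_nonempty.mpr hf0) (fun m => m i)
  have hm0c : coeff m0 f ≠ 0 := MvPolynomial.mem_support_iff.mp hm0
  have hm0A' : A = m0 i := hAdef.trans hm0A
  have hGA0 : G A ≠ 0 := by
    intro h
    have h1 : c A (m0 (i + 1)) = coeff m0 f := by
      show coeff (nu d i A (m0 (i + 1))) f = coeff m0 f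
      rw [hm0A', ← hm_eq m0 hm0c]
    have h2 := hcoeffG A (m0 (i + 1))
    rw [h, Polynomial.coeff_zero] at h2
    exact hm0c (by rw [← h1, ← h2])
  have hGA1 : G (A + 1) = 0 := by
    rw [hGdef]
    apply Finset.sum_eq_zero
    intro l _
    have hzero : c (A + 1) l = 0 := by
      by_contra h
      have hmem : nu d i (A + 1) l ∈ f.support := MvPolynomial.mem_support_iff.mpr h
      have hle := Finset.le_sup (f := fun m => m i) hmem
      simp only [nu_apply₁] at hle
      rw [← hAdef] at hle
      omega
    rw [hzero]
    simp
  have hmain : ∀ j : ℕ, ∀ k' : ℕ, k' ≤ A → A - k' = j →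
      G k' ≠ 0 ∧ (Polynomial.X - Polynomial.C 1) ^ (d - A) ∣ G k' := by
    intro j
    induction j with
    | zero =>
      intro k' hk' hj
      have hkA : k' = A := by omega
      subst hkA
      refine ⟨hGA0, ?_⟩
      apply dvd_of_ode (G A) (Polynomial.C ((A : K) + 1) * G (A + 1)) hGA0 (d - A) (d - A)
      · rw [Nat.cast_sub (by omega)]
        exact hrec A
      · rw [hGA1, mul_zero]
        exact dvd_zero _
      · omega
    | succ j ihj =>
      intro k' hk' hj
      obtain ⟨hne, hdvd⟩ := ihj (k' + 1) (by omega) (by omega)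
      have hGk0 : G k' ≠ 0 := by
        intro h
        apply hne
        have h2 := hrec k'
        rw [h, map_zero, mul_zero, mul_zero, sub_zero] at h2
        rcases mul_eq_zero.mp h2.symm with h3 | h3
        · exact absurd (Polynomial.C_eq_zero.mp h3) (Nat.cast_add_one_ne_zero k')
        · exact h3
      refine ⟨hGk0, ?_⟩
      apply dvd_of_ode (G k') (Polynomial.C ((k' : K) + 1) * G (k' + 1)) hGk0 (d - k') (d - A)
      · rw [Nat.cast_sub (by omega)]
        exact hrec k'
      · exact Dvd.dvd.mul_left hdvd _
      · omega
  obtain ⟨hGne, hGdvd⟩ := hmain (A - k) k hk rfl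
  have hcard : (f.support.filter (fun m => m i = k)).card = (G k).support.card := by
    apply Finset.card_bij (fun m _ => m (i + 1))
    · intro m hm
      rw [Finset.mem_filter] at hm
      obtain ⟨hms, hmk⟩ := hm
      have hmc : coeff m f ≠ 0 := MvPolynomial.mem_support_iff.mp hms
      rw [Polynomial.mem_support_iff, hcoeffG]
      have h1 : c k (m (i + 1)) = coeff m f := by
        show coeff (nu d i k (m (i + 1))) f = coeff m f
        rw [← hmk, ← hm_eq m hmc]
      rw [h1]
      exact hmc
    · intro m1 hm1 m2 hm2 hval
      rw [Finset.mem_filter] at hm1 hm2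
      have e1 := hm_eq m1 (MvPolynomial.mem_support_iff.mp hm1.1)
      have e2 := hm_eq m2 (MvPolynomial.mem_support_iff.mp hm2.1)
      rw [e1, e2, hm1.2, hm2.2, hval]
    · intro l hl
      rw [Polynomial.mem_support_iff, hcoeffG] at hl
      refine ⟨nu d i k l, ?_, nu_apply₂ d i k l⟩
      rw [Finset.mem_filter]
      exact ⟨MvPolynomial.mem_support_iff.mpr hl, nu_apply₁ d i k l⟩
  have hfinal := card_support_of_pow_dvd d (G k) (hdegG k) hGne (d - A) hGdvd
  omega
end

section
/- Let K be a field of characteristic zero, n ≥ 4, d ≥ 2, and let f be a non-zero form of degree d in R = K[y_1,…,y_n] such that (x_1 + ⋯ + x_n) ∘ f = 0. For 1 ≤ i ≤ n set a_i = max{ deg_i(m) : m ∈ supp(f) }. Then |supp(f)| ≥ (a_i + 1)(d − a_i + 1) for every i with a_i ≠ 0; in particular |supp(f)| ≥ max{ (a_i+1)(d−a_i+1) : a_i ≠ 0 }. -/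
open MvPolynomial Finset

namespace SCGM

set_option linter.unusedSectionVars false

variable {K : Type*} [Field K] [CharZero K] {n : ℕ}

/-- The "Laplace-type" operator `∑ ∂ᵢ` as a linear endomorphism. -/
noncomputable def Lop (K : Type*) [Field K] (n : ℕ) :
    Module.End K (MvPolynomial (Fin n) K) :=
  ∑ t : Fin n, (pderiv t).toLinearMap

/-- Weighted Euler operator `∑ vₜ yₜ ∂ₜ`. -/
noncomputable def Dop (K : Type*) [Field K] (n : ℕ) (v : Fin n → ℕ) :
    Module.End K (MvPolynomial (Fin n) K) :=
  ∑ t : Fin n, (v t : K) • ((LinearMap.mulLeft K (X t)).comp (pderiv t).toLinearMap)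

/-- Weighted derivative `∑ vₜ ∂ₜ`. -/
noncomputable def Pop (K : Type*) [Field K] (n : ℕ) (v : Fin n → ℕ) :
    Module.End K (MvPolynomial (Fin n) K) :=
  ∑ t : Fin n, (v t : K) • (pderiv t).toLinearMap

lemma Lop_apply (p : MvPolynomial (Fin n) K) : Lop K n p = ∑ t : Fin n, pderiv t p := by
  simp [Lop]

lemma Dop_apply (v : Fin n → ℕ) (p : MvPolynomial (Fin n) K) :
    Dop K n v p = ∑ t : Fin n, (v t : K) • (X t * pderiv t p) := by
  simp [Dop]

lemma Pop_apply (v : Fin n → ℕ) (p : MvPolynomial (Fin n) K) :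
    Pop K n v p = ∑ t : Fin n, (v t : K) • pderiv t p := by
  simp [Pop]

lemma pderiv_comm (i j : Fin n) (p : MvPolynomial (Fin n) K) :
    pderiv i (pderiv j p) = pderiv j (pderiv i p) := by
  rcases eq_or_ne i j with rfl | hij
  · rfl
  · conv_lhs => rw [p.as_sum]
    conv_rhs => rw [p.as_sum]
    rw [map_sum, map_sum, map_sum, map_sum]
    refine Finset.sum_congr rfl fun α _ => ?_
    rw [pderiv_monomial, pderiv_monomial, pderiv_monomial, pderiv_monomial]
    rw [tsub_right_comm]
    congr 1
    rw [Finsupp.tsub_apply, Finsupp.tsub_apply, Finsupp.single_apply,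
      Finsupp.single_apply, if_neg hij, if_neg (fun h => hij h.symm)]
    simp only [Nat.sub_zero]
    ring

lemma Lop_pderiv (t : Fin n) (p : MvPolynomial (Fin n) K) :
    Lop K n (pderiv t p) = pderiv t (Lop K n p) := by
  rw [Lop_apply, Lop_apply, map_sum]
  exact Finset.sum_congr rfl fun s _ => pderiv_comm s t p

lemma Lop_Pop (v : Fin n → ℕ) (p : MvPolynomial (Fin n) K) :
    Lop K n (Pop K n v p) = Pop K n v (Lop K n p) := by
  rw [Pop_apply, Pop_apply, map_sum]
  refine Finset.sum_congr rfl fun t _ => ?_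
  rw [map_smul, Lop_pderiv]

lemma Lop_pow_Pop (r : ℕ) (v : Fin n → ℕ) (p : MvPolynomial (Fin n) K) :
    (Lop K n ^ r) (Pop K n v p) = Pop K n v ((Lop K n ^ r) p) := by
  induction r generalizing p with
  | zero => simp
  | succ r ih =>
      rw [pow_succ, Module.End.mul_apply, Module.End.mul_apply, Lop_Pop, ih (Lop K n p)]

lemma Lop_mulX (t : Fin n) (p : MvPolynomial (Fin n) K) :
    Lop K n (X t * p) = X t * Lop K n p + p := by
  rw [Lop_apply, Lop_apply]
  have : ∀ s : Fin n, pderiv s (X t * p) =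
      X t * pderiv s p + (if s = t then p else 0) := by
    intro s
    rw [pderiv_mul]
    rcases eq_or_ne s t with rfl | h
    · simp [add_comm]
    · simp [pderiv_X_of_ne (Ne.symm h) , h]
  rw [Finset.sum_congr rfl fun s _ => this s, Finset.sum_add_distrib,
    ← Finset.mul_sum, Finset.sum_ite_eq' Finset.univ t (fun _ => p)]
  simp

lemma Lop_Dop (v : Fin n → ℕ) (p : MvPolynomial (Fin n) K) :
    Lop K n (Dop K n v p) = Dop K n v (Lop K n p) + Pop K n v p := by
  rw [Dop_apply, map_sum, Dop_apply, Pop_apply, ← Finset.sum_add_distrib]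
  refine Finset.sum_congr rfl fun t _ => ?_
  rw [map_smul, Lop_mulX, Lop_pderiv, smul_add]

lemma Lop_pow_Dop (r : ℕ) (v : Fin n → ℕ) (p : MvPolynomial (Fin n) K) :
    (Lop K n ^ (r+1)) (Dop K n v p) =
      Dop K n v ((Lop K n ^ (r+1)) p) + ((r+1 : ℕ) : K) • Pop K n v ((Lop K n ^ r) p) := by
  induction r generalizing p with
  | zero => simpa using Lop_Dop v p
  | succ r ih =>
      have h1 : (Lop K n ^ (r+2)) (Dop K n v p) = (Lop K n ^ (r+1)) (Lop K n (Dop K n v p)) := by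
        rw [pow_succ, Module.End.mul_apply]
      rw [h1, Lop_Dop, map_add, ih (Lop K n p), Lop_pow_Pop]
      have h2 : (Lop K n ^ (r+1)) (Lop K n p) = (Lop K n ^ (r+2)) p := by
        rw [pow_succ (Lop K n) (r+1), Module.End.mul_apply]
      have h3 : (Lop K n ^ r) (Lop K n p) = (Lop K n ^ (r+1)) p := by
        rw [pow_succ, Module.End.mul_apply]
      rw [h2, h3, add_assoc]
      congr 1
      push_cast
      module

/-- `Kill s p` : all iterates `L^r p` with `r > s` vanish. -/
def Kill (s : ℕ) (p : MvPolynomial (Fin n) K) : Prop :=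
  ∀ r : ℕ, s < r → (Lop K n ^ r) p = 0

lemma Kill.dop {s : ℕ} {p : MvPolynomial (Fin n) K} (h : Kill s p) (v : Fin n → ℕ) :
    Kill (s+1) (Dop K n v p) := by
  intro r hr
  obtain ⟨r', rfl⟩ : ∃ r', r = r' + 1 := ⟨r - 1, by omega⟩
  rw [Lop_pow_Dop, h (r'+1) (by omega), h r' (by omega), map_zero, map_zero, smul_zero, add_zero]

lemma Kill.dop_pow {s : ℕ} {p : MvPolynomial (Fin n) K} (h : Kill s p) (v : Fin n → ℕ)
    (q : ℕ) : Kill (s+q) ((Dop K n v ^ q) p) := by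
  induction q with
  | zero => simpa using h
  | succ q ih =>
      have : (Dop K n v ^ (q+1)) p = Dop K n v ((Dop K n v ^ q) p) := by
        rw [pow_succ', Module.End.mul_apply]
      rw [this, ← Nat.add_assoc]
      exact ih.dop v

/-- weighted degree of an exponent vector -/
def Nw (v : Fin n → ℕ) (α : Fin n →₀ ℕ) : ℕ := ∑ t : Fin n, v t * α t

lemma Dop_monomial (v : Fin n → ℕ) (α : Fin n →₀ ℕ) (c : K) :
    Dop K n v (monomial α c) = monomial α ((Nw v α : K) * c) := by
  rw [Dop_apply]
  have key : ∀ t : Fin n, (X t : MvPolynomial (Fin n) K) * pderiv t (monomial α c) =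
      (α t : K) • monomial α c := by
    intro t
    rw [pderiv_monomial]
    rcases Nat.eq_zero_or_pos (α t) with h0 | hpos
    · simp [h0]
    · have hle : Finsupp.single t 1 ≤ α := by
        rw [Finsupp.single_le_iff]; exact hpos
      rw [X, monomial_mul, one_mul, add_tsub_cancel_of_le hle]
      rw [smul_monomial, smul_eq_mul]
      congr 1
      push_cast
      ring
  rw [Finset.sum_congr rfl fun t _ => by rw [key t]]
  rw [Finset.sum_congr rfl fun t _ => (smul_smul ((v t : K)) ((α t : K)) _)]
  rw [← Finset.sum_smul, smul_monomial, smul_eq_mul]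
  congr 1
  rw [Nw]
  push_cast
  ring

lemma Dop_pow_sum (v : Fin n → ℕ) (q : ℕ) (S : Finset (Fin n →₀ ℕ)) (b : (Fin n →₀ ℕ) → K) :
    (Dop K n v ^ q) (∑ α ∈ S, monomial α (b α)) =
      ∑ α ∈ S, monomial α ((Nw v α : K) ^ q * b α) := by
  induction q with
  | zero => simp
  | succ q ih =>
      rw [pow_succ', Module.End.mul_apply, ih, map_sum]
      refine Finset.sum_congr rfl fun α _ => ?_
      rw [Dop_monomial]
      congr 1
      ring

/-- total degree of an exponent vector as a full sum -/
lemma degree_eq_sum_univ (α : Fin n →₀ ℕ) : α.degree = ∑ t : Fin n, α t := by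
  rw [Finsupp.degree]
  exact Finset.sum_subset (Finset.subset_univ _)
    (fun t _ ht => Finsupp.notMem_support_iff.1 ht)

lemma mem_support_deg {f : MvPolynomial (Fin n) K} {d : ℕ} (hf : f.IsHomogeneous d)
    {α : Fin n →₀ ℕ} (hα : α ∈ f.support) : ∑ t : Fin n, α t = d := by
  rw [← degree_eq_sum_univ, Finsupp.degree_eq_weight_one]
  exact hf (MvPolynomial.mem_support_iff.1 hα)

/-- evaluation at the all-ones point -/
noncomputable def ev1 (p : MvPolynomial (Fin n) K) : K := eval (fun _ : Fin n => (1:K)) p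

lemma ev1_monomial (α : Fin n →₀ ℕ) (c : K) : ev1 (monomial α c) = c := by
  rw [ev1, eval_monomial]
  simp [Finsupp.prod]

lemma ev1_L_monomial (α : Fin n →₀ ℕ) (c : K) :
    ev1 (Lop K n (monomial α c)) = (∑ t : Fin n, α t : ℕ) * c := by
  rw [Lop_apply, ev1, map_sum]
  have : ∀ t : Fin n, eval (fun _ : Fin n => (1:K)) (pderiv t (monomial α c)) = c * (α t : K) := by
    intro t
    rw [pderiv_monomial, eval_monomial]
    simp [Finsupp.prod]
  rw [Finset.sum_congr rfl fun t _ => this t]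
  rw [← Finset.mul_sum]
  push_cast
  ring

lemma ev1_L_homog {h : MvPolynomial (Fin n) K} {m : ℕ} (hh : h.IsHomogeneous m) :
    ev1 (Lop K n h) = (m : K) * ev1 h := by
  conv_lhs => rw [h.as_sum]
  conv_rhs => rw [h.as_sum]
  rw [map_sum, ev1, map_sum]
  have : ∀ α ∈ h.support, eval (fun _ : Fin n => (1:K)) (Lop K n (monomial α (coeff α h)))
      = (m : K) * coeff α h := by
    intro α hα
    have := ev1_L_monomial α (coeff α h)
    rw [ev1] at this
    rw [this, mem_support_deg hh hα]
  rw [Finset.sum_congr rfl this, ev1, map_sum, ← Finset.mul_sum]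
  congr 1
  exact Finset.sum_congr rfl fun α _ => (ev1_monomial α (coeff α h)).symm

lemma pderiv_homog {h : MvPolynomial (Fin n) K} {m : ℕ} (hh : h.IsHomogeneous (m+1))
    (t : Fin n) : (pderiv t h).IsHomogeneous m := by
  conv => rw [h.as_sum]
  rw [map_sum]
  apply MvPolynomial.IsHomogeneous.sum
  intro α hα
  rw [pderiv_monomial]
  rcases Nat.eq_zero_or_pos (α t) with h0 | hpos
  · rw [h0]
    norm_num
    exact isHomogeneous_zero _ _ _
  · apply isHomogeneous_monomial
    have hle : Finsupp.single t 1 ≤ α := by rw [Finsupp.single_le_iff]; exact hpos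
    have hd : (α - Finsupp.single t 1).degree + (Finsupp.single t 1).degree = α.degree := by
      rw [degree_eq_sum_univ, degree_eq_sum_univ, degree_eq_sum_univ,
        ← Finset.sum_add_distrib]
      refine Finset.sum_congr rfl fun s _ => ?_
      rw [Finsupp.tsub_apply]
      have := Finsupp.single_le_iff.1 hle
      rcases eq_or_ne s t with rfl | hst
      · simp only [Finsupp.single_eq_same]
        omega
      · simp only [Finsupp.single_eq_of_ne' (Ne.symm hst)]
        omega
    have hsd : (Finsupp.single t 1).degree = 1 := by
      rw [degree_eq_sum_univ]
      simp [Finsupp.single_apply]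
    have hαd : α.degree = m + 1 := by
      rw [degree_eq_sum_univ, mem_support_deg hh hα]
    omega

lemma L_homog {h : MvPolynomial (Fin n) K} {m : ℕ} (hh : h.IsHomogeneous (m+1)) :
    (Lop K n h).IsHomogeneous m := by
  rw [Lop_apply]
  exact MvPolynomial.IsHomogeneous.sum _ _ _ fun t _ => pderiv_homog hh t

lemma L_pow_homog {h : MvPolynomial (Fin n) K} {m : ℕ} (hh : h.IsHomogeneous m) :
    ∀ j, j ≤ m → ((Lop K n ^ j) h).IsHomogeneous (m - j) := by
  intro j
  induction j with
  | zero => simpa using hh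
  | succ j ih =>
      intro hj
      have h1 : (Lop K n ^ (j+1)) h = Lop K n ((Lop K n ^ j) h) := by
        rw [pow_succ', Module.End.mul_apply]
      rw [h1]
      have : m - j = (m - (j+1)) + 1 := by omega
      apply L_homog
      rw [← this]
      exact ih (by omega)

/-- If `h` is homogeneous of degree `m` and `L^m h = 0` then `h` evaluates to `0` at `𝟙`. -/
lemma ev1_eq_zero {h : MvPolynomial (Fin n) K} {m : ℕ} (hh : h.IsHomogeneous m)
    (hz : (Lop K n ^ m) h = 0) : ev1 h = 0 := by
  have key : ∀ j ≤ m, ev1 ((Lop K n ^ j) h) =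
      (∏ u ∈ Finset.range j, ((m - u : ℕ) : K)) * ev1 h := by
    intro j
    induction j with
    | zero => simp
    | succ j ih =>
        intro hj
        have h1 : (Lop K n ^ (j+1)) h = Lop K n ((Lop K n ^ j) h) := by
          rw [pow_succ', Module.End.mul_apply]
        rw [h1, ev1_L_homog (L_pow_homog hh j (by omega)), ih (by omega),
          Finset.prod_range_succ]
        ring
  have h0 := key m le_rfl
  rw [hz] at h0
  have hev0 : ev1 (0 : MvPolynomial (Fin n) K) = 0 := by simp [ev1]
  rw [hev0] at h0
  have hprod : (∏ u ∈ Finset.range m, ((m - u : ℕ) : K)) ≠ 0 := by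
    apply Finset.prod_ne_zero_iff.2
    intro u hu
    have hmu : 0 < m - u := by
      have := Finset.mem_range.1 hu; omega
    exact Nat.cast_ne_zero.2 (by omega)
  rcases mul_eq_zero.1 h0.symm with h | h
  · exact absurd h hprod
  · exact h

lemma kill_zero {f : MvPolynomial (Fin n) K} (hann : (∑ t : Fin n, pderiv t f) = 0) :
    Kill 0 f := by
  have hL : Lop K n f = 0 := by rw [Lop_apply]; exact hann
  intro r hr
  obtain ⟨r', rfl⟩ : ∃ r', r = r' + 1 := ⟨r - 1, by omega⟩
  rw [pow_succ, Module.End.mul_apply, hL, map_zero]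

/-- The key moment-vanishing consequence of `Δ f = 0`. -/
lemma moment_vanish {f : MvPolynomial (Fin n) K} {d : ℕ} (hf : f.IsHomogeneous d)
    (hann : (∑ t : Fin n, pderiv t f) = 0) (v1 v2 : Fin n → ℕ) {p q : ℕ}
    (hpq : p + q < d) :
    ∑ α ∈ f.support, coeff α f * (Nw v1 α : K) ^ p * (Nw v2 α : K) ^ q = 0 := by
  set h : MvPolynomial (Fin n) K := (Dop K n v1 ^ p) ((Dop K n v2 ^ q) f) with hdef
  have hsum : h = ∑ α ∈ f.support,
      monomial α ((Nw v1 α : K) ^ p * ((Nw v2 α : K) ^ q * coeff α f)) := by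
    rw [hdef]
    conv_lhs => rw [f.as_sum]
    rw [Dop_pow_sum, Dop_pow_sum]
  have hkill : Kill (q + p) h := by
    have k0 : Kill 0 f := kill_zero hann
    have k1 : Kill (0 + q) ((Dop K n v2 ^ q) f) := k0.dop_pow v2 q
    have k2 := k1.dop_pow v1 p
    simpa using k2
  have hhom : h.IsHomogeneous d := by
    rw [hsum]
    apply MvPolynomial.IsHomogeneous.sum
    intro α hα
    apply isHomogeneous_monomial
    rw [degree_eq_sum_univ]
    exact mem_support_deg hf hα
  have hz : (Lop K n ^ d) h = 0 := hkill d (by omega)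
  have he : ev1 h = 0 := ev1_eq_zero hhom hz
  rw [hsum] at he
  rw [ev1, map_sum] at he
  calc ∑ α ∈ f.support, coeff α f * (Nw v1 α : K) ^ p * (Nw v2 α : K) ^ q
      = ∑ α ∈ f.support, eval (fun _ : Fin n => (1:K))
          (monomial α ((Nw v1 α : K) ^ p * ((Nw v2 α : K) ^ q * coeff α f))) := by
        refine Finset.sum_congr rfl fun α _ => ?_
        have := ev1_monomial (K := K) (n := n) α ((Nw v1 α : K) ^ p * ((Nw v2 α : K) ^ q * coeff α f))
        rw [ev1] at this
        rw [this]
        ring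
    _ = 0 := he

lemma coeff_pderiv (t : Fin n) (f : MvPolynomial (Fin n) K) (μ : Fin n →₀ ℕ) :
    coeff μ (pderiv t f) = ((μ t + 1 : ℕ) : K) * coeff (μ + Finsupp.single t 1) f := by
  conv_lhs => rw [f.as_sum]
  rw [map_sum, coeff_sum]
  rw [Finset.sum_congr rfl (fun β _ => by rw [pderiv_monomial, coeff_monomial])]
  rw [Finset.sum_eq_single (μ + Finsupp.single t 1)]
  · rw [if_pos (add_tsub_cancel_right μ (Finsupp.single t 1))]
    have : (μ + Finsupp.single t 1 : Fin n →₀ ℕ) t = μ t + 1 := by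
      rw [Finsupp.add_apply, Finsupp.single_eq_same]
    rw [this]
    ring
  · intro β hβ hne
    rcases Nat.eq_zero_or_pos (β t) with h0 | hpos
    · simp [h0]
    · rw [if_neg]
      intro hc
      apply hne
      have : β = (β - Finsupp.single t 1) + Finsupp.single t 1 :=
        (tsub_add_cancel_of_le (Finsupp.single_le_iff.2 hpos)).symm
      rw [this, hc]
  · intro hnm
    rw [MvPolynomial.notMem_support_iff.1 hnm]
    simp

lemma deriv_relation {f : MvPolynomial (Fin n) K}
    (hann : (∑ t : Fin n, pderiv t f) = 0) (μ : Fin n →₀ ℕ) :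
    ∑ t : Fin n, ((μ t + 1 : ℕ) : K) * coeff (μ + Finsupp.single t 1) f = 0 := by
  have h0 : coeff μ (∑ t : Fin n, pderiv t f) = 0 := by rw [hann, coeff_zero]
  rw [coeff_sum] at h0
  rw [← h0]
  exact Finset.sum_congr rfl fun t _ => (coeff_pderiv t f μ).symm

lemma step_down {f : MvPolynomial (Fin n) K}
    (hann : (∑ t : Fin n, pderiv t f) = 0) {i : Fin n} {α : Fin n →₀ ℕ}
    (hα : α ∈ f.support) (hpos : 0 < α i) :
    ∃ β ∈ f.support, β i = α i - 1 := by
  by_contra hcon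
  push_neg at hcon
  set μ := α - Finsupp.single i 1 with hμ
  have hμadd : μ + Finsupp.single i 1 = α :=
    tsub_add_cancel_of_le (Finsupp.single_le_iff.2 hpos)
  have hμi : μ i = α i - 1 := by
    rw [hμ, Finsupp.tsub_apply, Finsupp.single_eq_same]
  have hrel := deriv_relation hann μ
  rw [Finset.sum_eq_single i] at hrel
  · rw [hμadd] at hrel
    have h1 : ((μ i + 1 : ℕ) : K) ≠ 0 := Nat.cast_ne_zero.2 (by omega)
    have h2 : coeff α f ≠ 0 := MvPolynomial.mem_support_iff.1 hα
    exact (mul_ne_zero h1 h2) hrel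
  · intro t _ hti
    have : coeff (μ + Finsupp.single t 1) f = 0 := by
      by_contra hc
      refine hcon _ (MvPolynomial.mem_support_iff.2 hc) ?_
      rw [Finsupp.add_apply, Finsupp.single_eq_of_ne' hti, hμi]
      omega
    rw [this, mul_zero]
  · intro hni
    exact absurd (Finset.mem_univ i) hni

lemma fiber_nonempty {f : MvPolynomial (Fin n) K}
    (hann : (∑ t : Fin n, pderiv t f) = 0) {i : Fin n} {A : ℕ}
    (hA : ∃ α ∈ f.support, α i = A) :
    ∀ j ≤ A, ∃ α ∈ f.support, α i = j := by
  have key : ∀ m, m ≤ A → ∃ α ∈ f.support, α i = A - m := by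
    intro m
    induction m with
    | zero => intro _; simpa using hA
    | succ m ih =>
        intro hm
        obtain ⟨α, hα, hαi⟩ := ih (by omega)
        have hpos : 0 < α i := by omega
        obtain ⟨β, hβ, hβi⟩ := step_down hann hα hpos
        exact ⟨β, hβ, by omega⟩
  intro j hj
  obtain ⟨α, hα, hαi⟩ := key (A - j) (by omega)
  exact ⟨α, hα, by omega⟩

/-- uniqueness of base-`b` digit representations -/
lemma digits_inj : ∀ (m : ℕ) (b : ℕ) (g h : Fin m → ℕ),
    (∀ t, g t < b) → (∀ t, h t < b) →
    (∑ t : Fin m, g t * b ^ (t : ℕ)) = (∑ t : Fin m, h t * b ^ (t : ℕ)) → g = h := by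
  intro m
  induction m with
  | zero => intro b g h _ _ _; ext t; exact absurd t.2 (by omega)
  | succ m ih =>
      intro b g h hg hh hsum
      have hb : 0 < b := by have := hg 0; omega
      have hrw : ∀ (g : Fin (m+1) → ℕ), (∑ t : Fin (m+1), g t * b ^ (t : ℕ)) =
          g 0 + b * ∑ t : Fin m, g t.succ * b ^ (t : ℕ) := by
        intro g
        rw [Fin.sum_univ_succ, Finset.mul_sum]
        simp only [Fin.val_zero, pow_zero, mul_one, Fin.val_succ]
        congr 1
        refine Finset.sum_congr rfl fun t _ => ?_
        ring
      rw [hrw g, hrw h] at hsum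
      have h0 : g 0 = h 0 := by
        have e1 := congrArg (fun z => z % b) hsum
        simp only [Nat.add_mul_mod_self_left] at e1
        rw [Nat.mod_eq_of_lt (hg 0), Nat.mod_eq_of_lt (hh 0)] at e1
        exact e1
      have h1 : (∑ t : Fin m, g t.succ * b ^ (t : ℕ)) = ∑ t : Fin m, h t.succ * b ^ (t : ℕ) := by
        have : b * (∑ t : Fin m, g t.succ * b ^ (t : ℕ)) =
            b * ∑ t : Fin m, h t.succ * b ^ (t : ℕ) := by omega
        exact Nat.eq_of_mul_eq_mul_left hb this
      have h2 := ih b (fun t => g t.succ) (fun t => h t.succ)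
        (fun t => hg t.succ) (fun t => hh t.succ) h1
      ext t
      rcases Fin.eq_zero_or_eq_succ t with rfl | ⟨u, rfl⟩
      · exact h0
      · exact congrFun h2 u

/-- Vandermonde-type lemma: a nonzero vector supported on `S` with injective nodes
cannot annihilate all power moments up to `S.card - 1`. -/
lemma vandermonde_bound {X : Type*} [DecidableEq X] {S : Finset X} (hne : S.Nonempty)
    {c : X → K} (hc : ∀ x ∈ S, c x ≠ 0) {N : X → ℕ}
    (hinj : ∀ x ∈ S, ∀ y ∈ S, N x = N y → x = y) {D : ℕ}
    (hmom : ∀ q ≤ D, ∑ x ∈ S, c x * (N x : K) ^ q = 0) :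
    D + 2 ≤ S.card := by
  by_contra hcard
  push_neg at hcard
  set s := S.card with hs
  have hs1 : 1 ≤ s := Finset.card_pos.2 hne
  -- enumerate S
  have e := S.equivFin
  set ν : Fin s → K := fun v => (N ((e.symm v) : X) : K) with hν
  have hνinj : Function.Injective ν := by
    intro u v huv
    have : N ((e.symm u) : X) = N ((e.symm v) : X) := by
      have h0 : ((N ((e.symm u) : X) : K)) = (N ((e.symm v) : X) : K) := huv
      exact_mod_cast h0
    have h2 := hinj _ (e.symm u).2 _ (e.symm v).2 this
    have h3 : e.symm u = e.symm v := Subtype.ext h2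
    exact e.symm.injective h3
  have hzero := Matrix.eq_zero_of_forall_pow_sum_mul_pow_eq_zero (R := K)
    (f := ν) (v := fun v => c ((e.symm v) : X)) hνinj ?_
  · obtain ⟨x, hx⟩ := hne
    have := congrFun hzero (e ⟨x, hx⟩)
    simp only [Equiv.symm_apply_apply] at this
    exact hc x hx this
  · intro u
    have hq : (u : ℕ) ≤ D := by have := u.2; omega
    calc ∑ v : Fin s, c ((e.symm v) : X) * ν v ^ (u : ℕ)
        = ∑ x : S, c (x : X) * (N (x : X) : K) ^ (u : ℕ) :=
          Equiv.sum_comp e.symm (fun x : S => c (x : X) * (N (x : X) : K) ^ (u : ℕ))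
      _ = ∑ x ∈ S, c x * (N x : K) ^ (u : ℕ) := Finset.sum_coe_sort S (fun x => c x * (N x : K) ^ (u : ℕ))
      _ = 0 := hmom u hq

end SCGM

open SCGM in
/-- For `n ≥ 4` and `d ≥ 2`, if `f` is a non-zero form of degree `d` in
`K[y_1,…,y_n]` with `(x_1 + ⋯ + x_n) ∘ f = 0` (each `x_i` acting as `∂/∂y_i`) and
`a_i = max { deg_i(m) : m ∈ supp f }`, then `|supp f| ≥ (a_i + 1)(d - a_i + 1)` for
every `i` with `a_i ≠ 0`. -/
theorem support_card_ge_max {K : Type*} [Field K] [CharZero K]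
    {n : ℕ} (hn : 4 ≤ n) (d : ℕ) (hd : 2 ≤ d)
    (f : MvPolynomial (Fin n) K) (hf0 : f ≠ 0) (hf : f.IsHomogeneous d)
    (hann : (∑ t, MvPolynomial.pderiv t f) = 0)
    (a : Fin n → ℕ) (ha : ∀ i, a i = f.support.sup (fun m => m i)) :
    ∀ i : Fin n, a i ≠ 0 → (a i + 1) * (d - a i + 1) ≤ f.support.card := by
  intro i hai
  classical
  set A := a i with hA
  have hAsup : A = f.support.sup (fun m => m i) := ha i
  have hsupne : f.support.Nonempty := by
    rw [Finset.nonempty_iff_ne_empty]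
    intro hemp
    exact hf0 (MvPolynomial.support_eq_empty.1 hemp)
  obtain ⟨αmax, hαmax, hαmaxi⟩ : ∃ α ∈ f.support, α i = A := by
    obtain ⟨β, hβ, hβe⟩ := Finset.exists_mem_eq_sup f.support hsupne (fun m => m i)
    exact ⟨β, hβ, by rw [hAsup, hβe]⟩
  have hcoordle : ∀ α ∈ f.support, ∀ t : Fin n, α t ≤ d := by
    intro α hα t
    have hs := mem_support_deg hf hα
    have : α t ≤ ∑ s : Fin n, α s :=
      Finset.single_le_sum (fun s _ => Nat.zero_le (α s)) (Finset.mem_univ t)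
    omega
  have hAd : A ≤ d := by
    have := hcoordle αmax hαmax i
    omega
  have hαleA : ∀ α ∈ f.support, α i ≤ A := by
    intro α hα
    rw [hAsup]
    exact Finset.le_sup (f := fun m => m i) hα
  -- the weight vector (base d+1 digits, ignoring coordinate i)
  set w : Fin n → ℕ := fun t => if t = i then 0 else (d+1) ^ (t : ℕ) with hw
  set v1 : Fin n → ℕ := fun t => if t = i then 1 else 0 with hv1
  have hNv1 : ∀ α : Fin n →₀ ℕ, Nw v1 α = α i := by
    intro α
    rw [Nw]
    rw [Finset.sum_congr rfl (fun t _ => by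
      show v1 t * α t = if t = i then α t else 0
      rw [hv1]
      by_cases h : t = i <;> simp [h])]
    simp
  -- injectivity of the weight on each fiber
  have hNinj : ∀ j : ℕ, ∀ α ∈ f.support.filter (fun α => α i = j),
      ∀ β ∈ f.support.filter (fun α => α i = j), Nw w α = Nw w β → α = β := by
    intro j α hα β hβ hNαβ
    rw [Finset.mem_filter] at hα hβ
    have hrw : ∀ γ : Fin n →₀ ℕ, Nw w γ =
        ∑ t : Fin n, (if t = i then 0 else γ t) * (d+1) ^ (t : ℕ) := by
      intro γ
      rw [Nw]
      refine Finset.sum_congr rfl fun t _ => ?_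
      by_cases h : t = i <;> simp [hw, h, Nat.mul_comm]
    have hdig := digits_inj n (d+1) (fun t => if t = i then 0 else α t)
      (fun t => if t = i then 0 else β t)
      (fun t => by by_cases h : t = i <;> simp [h] ; exact hcoordle α hα.1 t)
      (fun t => by by_cases h : t = i <;> simp [h] ; exact hcoordle β hβ.1 t)
      (by rw [← hrw α, ← hrw β, hNαβ])
    ext t
    by_cases h : t = i
    · rw [h, hα.2, hβ.2]
    · have := congrFun hdig t
      simpa [h] using this
  -- moment vanishing on each fiber
  have hfibmom : ∀ j ≤ A, A < d → ∀ q ≤ d - A - 1,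
      ∑ α ∈ f.support.filter (fun α => α i = j), coeff α f * (Nw w α : K) ^ q = 0 := by
    intro j hjA hAd' q hq
    set Qj : Polynomial K :=
      ∏ j' ∈ (Finset.range (A+1)).erase j, (Polynomial.X - Polynomial.C ((j' : ℕ) : K)) with hQj
    have hQdeg : Qj.natDegree < A + 1 := by
      have h1 : Qj.natDegree ≤ ∑ j' ∈ (Finset.range (A+1)).erase j,
          (Polynomial.X - Polynomial.C ((j' : ℕ) : K)).natDegree :=
        Polynomial.natDegree_prod_le _ _
      have h2 : ∀ j' ∈ (Finset.range (A+1)).erase j,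
          (Polynomial.X - Polynomial.C ((j' : ℕ) : K)).natDegree = 1 := fun j' _ =>
        Polynomial.natDegree_X_sub_C _
      rw [Finset.sum_congr rfl h2, Finset.sum_const, smul_eq_mul, mul_one] at h1
      have h3 : ((Finset.range (A+1)).erase j).card = A := by
        rw [Finset.card_erase_of_mem (Finset.mem_range.2 (by omega)), Finset.card_range]
        omega
      omega
    have hinner : ∀ p ∈ Finset.range (A+1),
        ∑ α ∈ f.support, coeff α f * ((α i : ℕ) : K) ^ p * (Nw w α : K) ^ q = 0 := by
      intro p hp
      have hpq : p + q < d := by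
        have := Finset.mem_range.1 hp
        omega
      have hmom := moment_vanish hf hann v1 w (p := p) (q := q) hpq
      calc ∑ α ∈ f.support, coeff α f * ((α i : ℕ) : K) ^ p * (Nw w α : K) ^ q
          = ∑ α ∈ f.support, coeff α f * (Nw v1 α : K) ^ p * (Nw w α : K) ^ q :=
            Finset.sum_congr rfl fun α _ => by rw [hNv1 α]
        _ = 0 := hmom
    have hT : ∑ α ∈ f.support, coeff α f * Polynomial.eval ((α i : ℕ) : K) Qj
        * (Nw w α : K) ^ q = 0 := by
      have hexp : ∀ α : Fin n →₀ ℕ, coeff α f * Polynomial.eval ((α i : ℕ) : K) Qj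
          * (Nw w α : K) ^ q = ∑ p ∈ Finset.range (A+1),
            Qj.coeff p * (coeff α f * ((α i : ℕ) : K) ^ p * (Nw w α : K) ^ q) := by
        intro α
        rw [Polynomial.eval_eq_sum_range' hQdeg, Finset.mul_sum, Finset.sum_mul]
        exact Finset.sum_congr rfl fun p _ => by ring
      rw [Finset.sum_congr rfl (fun α _ => hexp α), Finset.sum_comm]
      apply Finset.sum_eq_zero
      intro p hp
      rw [← Finset.mul_sum, hinner p hp, mul_zero]
    -- split the sum into the fiber and the rest
    set lam : K := ∏ j' ∈ (Finset.range (A+1)).erase j, (((j : ℕ) : K) - ((j' : ℕ) : K))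
      with hlam
    have hevj : ∀ α : Fin n →₀ ℕ, α i = j → Polynomial.eval ((α i : ℕ) : K) Qj = lam := by
      intro α hij
      rw [hQj, Polynomial.eval_prod, hlam]
      exact Finset.prod_congr rfl fun j' _ => by
        rw [Polynomial.eval_sub, Polynomial.eval_X, Polynomial.eval_C, hij]
    have hev0 : ∀ α ∈ f.support, α i ≠ j → Polynomial.eval ((α i : ℕ) : K) Qj = 0 := by
      intro α hα hne
      rw [hQj, Polynomial.eval_prod]
      apply Finset.prod_eq_zero (i := α i)
      · exact Finset.mem_erase.2 ⟨hne, Finset.mem_range.2 (by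
          have := hαleA α hα; omega)⟩
      · rw [Polynomial.eval_sub, Polynomial.eval_X, Polynomial.eval_C, sub_self]
    have hlamne : lam ≠ 0 := by
      rw [hlam]
      apply Finset.prod_ne_zero_iff.2
      intro j' hj'
      have hne : j ≠ j' := by
        have := (Finset.mem_erase.1 hj').1
        omega
      exact sub_ne_zero_of_ne (by exact_mod_cast fun h => hne (Nat.cast_injective h))
    have hsplit := Finset.sum_filter_add_sum_filter_not f.support (fun α => α i = j)
      (fun α => coeff α f * Polynomial.eval ((α i : ℕ) : K) Qj * (Nw w α : K) ^ q)
    rw [hT] at hsplit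
    have hrest : ∑ α ∈ f.support.filter (fun α => ¬ α i = j),
        coeff α f * Polynomial.eval ((α i : ℕ) : K) Qj * (Nw w α : K) ^ q = 0 := by
      apply Finset.sum_eq_zero
      intro α hα
      rw [Finset.mem_filter] at hα
      rw [hev0 α hα.1 hα.2, mul_zero, zero_mul]
    rw [hrest, add_zero] at hsplit
    have hfib : ∑ α ∈ f.support.filter (fun α => α i = j),
        coeff α f * Polynomial.eval ((α i : ℕ) : K) Qj * (Nw w α : K) ^ q =
        lam * ∑ α ∈ f.support.filter (fun α => α i = j),
          coeff α f * (Nw w α : K) ^ q := by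
      rw [Finset.mul_sum]
      refine Finset.sum_congr rfl fun α hα => ?_
      rw [Finset.mem_filter] at hα
      rw [hevj α hα.2]
      ring
    rw [hfib] at hsplit
    rcases mul_eq_zero.1 hsplit with h | h
    · exact absurd h hlamne
    · exact h
  -- each fiber is nonempty
  have hfibne : ∀ j ≤ A, (f.support.filter (fun α => α i = j)).Nonempty := by
    intro j hj
    obtain ⟨α, hα, hαi⟩ := fiber_nonempty hann ⟨αmax, hαmax, hαmaxi⟩ j hj
    exact ⟨α, Finset.mem_filter.2 ⟨hα, hαi⟩⟩
  -- each fiber has at least d - A + 1 elements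
  have hfibcard : ∀ j ≤ A, d - A + 1 ≤ (f.support.filter (fun α => α i = j)).card := by
    intro j hj
    rcases Nat.eq_or_lt_of_le hAd with hAeq | hAlt
    · -- A = d : the bound is 1
      have : d - A + 1 = 1 := by omega
      rw [this]
      exact Finset.card_pos.2 (hfibne j hj)
    · have hbound := vandermonde_bound (K := K) (hfibne j hj)
        (c := fun α => coeff α f)
        (fun α hα => MvPolynomial.mem_support_iff.1 (Finset.mem_filter.1 hα).1)
        (N := Nw w) (hNinj j) (D := d - A - 1)
        (fun q hq => hfibmom j hj hAlt q hq)
      omega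
  -- sum over fibers
  have hcount : f.support.card = ∑ j ∈ Finset.range (A+1),
      (f.support.filter (fun α => α i = j)).card := by
    apply Finset.card_eq_sum_card_fiberwise
    intro α hα
    exact Finset.mem_range.2 (by have := hαleA α hα; beta_reduce; omega)
  rw [hcount]
  calc (a i + 1) * (d - a i + 1) = ∑ _j ∈ Finset.range (A+1), (d - A + 1) := by
        rw [Finset.sum_const, Finset.card_range, smul_eq_mul, hA]
    _ ≤ ∑ j ∈ Finset.range (A+1), (f.support.filter (fun α => α i = j)).card := by
        apply Finset.sum_le_sum
        intro j hj
        exact hfibcard j (by have := Finset.mem_range.1 hj; omega)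
end

section
/- Let K be a field of characteristic zero, n ≥ 4, d ≥ 2, and let f be a non-zero form of degree d in R = K[y_1,…,y_n] such that (x_1 + ⋯ + x_n) ∘ f = 0 and y_i^d ∉ supp(f) for every 1 ≤ i ≤ n. Then |supp(f)| ≥ 2d. -/
open MvPolynomial Finset

set_option maxHeartbeats 1000000

namespace WLP2dAux

variable {K : Type*} [Field K] [CharZero K] {n : ℕ}

lemma dF_cast_succ (a b : ℕ) :
    ((a.descFactorial (b + 1) : K)) = ((a : K) - (b : K)) * (a.descFactorial b : K) := by
  rcases le_or_gt b a with hba | hab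
  · rw [Nat.descFactorial_succ, Nat.cast_mul, Nat.cast_sub hba]
  · rw [Nat.descFactorial_eq_zero_iff_lt.2 hab,
      Nat.descFactorial_eq_zero_iff_lt.2 (hab.trans (Nat.lt_succ_self b))]
    simp

/-- `EE α h` is `(∂^α h)(1,…,1)`, described combinatorially. -/
noncomputable def EE (α : Fin n → ℕ) (h : MvPolynomial (Fin n) K) : K :=
  ∑ a ∈ h.support, coeff a h * ∏ j, ((a j).descFactorial (α j) : K)

lemma EE_sum_subset (α : Fin n → ℕ) (h : MvPolynomial (Fin n) K) {A : Finset (Fin n →₀ ℕ)}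
    (hA : h.support ⊆ A) :
    EE α h = ∑ a ∈ A, coeff a h * ∏ j, ((a j).descFactorial (α j) : K) :=
  Finset.sum_subset hA fun a _ ha => by
    rw [MvPolynomial.notMem_support_iff.1 ha, zero_mul]

lemma coeff_X_mul_pderiv (j : Fin n) (h : MvPolynomial (Fin n) K) (a : Fin n →₀ ℕ) :
    coeff a (X j * pderiv j h) = (a j : K) * coeff a h := by
  induction h using MvPolynomial.induction_on' with
  | add p q hp hq => rw [map_add, mul_add, coeff_add, coeff_add, hp, hq]; ring
  | monomial u c =>
    rw [pderiv_monomial]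
    have hX : (X j : MvPolynomial (Fin n) K) * monomial (u - Finsupp.single j 1) (c * (u j : K))
        = monomial (Finsupp.single j 1 + (u - Finsupp.single j 1)) (c * (u j : K)) := by
      rw [X, monomial_mul, one_mul]
    rw [hX]
    by_cases hu : u j = 0
    · rw [hu]
      simp only [Nat.cast_zero, mul_zero, map_zero, coeff_zero]
      rw [coeff_monomial]
      by_cases hau : u = a
      · subst hau; rw [if_pos rfl, hu]; simp
      · rw [if_neg hau, mul_zero]
    · have hsingle : Finsupp.single j 1 + (u - Finsupp.single j 1) = u := by
        ext m
        rcases eq_or_ne m j with rfl | hmj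
        · simp only [Finsupp.add_apply, Finsupp.single_eq_same, Finsupp.tsub_apply]
          omega
        · simp [Finsupp.single_apply, (Ne.symm hmj), Finsupp.tsub_apply]
      rw [hsingle, coeff_monomial, coeff_monomial]
      by_cases hau : u = a
      · subst hau; rw [if_pos rfl, if_pos rfl]; ring
      · rw [if_neg hau, if_neg hau, mul_zero]

lemma coeff_pderiv' (t : Fin n) (h : MvPolynomial (Fin n) K) (b : Fin n →₀ ℕ) :
    coeff b (pderiv t h) = ((b t + 1 : ℕ) : K) * coeff (b + Finsupp.single t 1) h := by
  induction h using MvPolynomial.induction_on' with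
  | add p q hp hq => rw [map_add, coeff_add, coeff_add, hp, hq]; ring
  | monomial u c =>
    rw [pderiv_monomial, coeff_monomial, coeff_monomial]
    by_cases he : u = b + Finsupp.single t 1
    · have hut : u t = b t + 1 := by
        rw [he]; simp
      have hsub : u - Finsupp.single t 1 = b := by
        rw [he]; ext m
        rcases eq_or_ne m t with rfl | hmt
        · simp only [Finsupp.tsub_apply, Finsupp.add_apply, Finsupp.single_eq_same]; omega
        · simp [Finsupp.single_apply, Ne.symm hmt, Finsupp.tsub_apply]
      rw [if_pos he, if_pos hsub, hut]
      push_cast; ring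
    · rw [if_neg he]
      by_cases hsub : u - Finsupp.single t 1 = b
      · have hut : u t = 0 := by
          by_contra h0
          apply he
          ext m
          have hm := DFunLike.congr_fun hsub m
          rcases eq_or_ne m t with rfl | hmt
          · simp only [Finsupp.tsub_apply, Finsupp.single_eq_same] at hm
            simp only [Finsupp.add_apply, Finsupp.single_eq_same]
            omega
          · simp only [Finsupp.tsub_apply, Finsupp.single_apply, Ne.symm hmt, if_false] at hm
            simp only [Finsupp.add_apply, Finsupp.single_apply, Ne.symm hmt, if_false]
            omega
        rw [if_pos hsub, hut]
        simp
      · rw [if_neg hsub, mul_zero]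

/-- Key combinatorial lemma: a nonzero polynomial with `t` monomials has a
non-vanishing "derivative at (1,…,1)" of order at most `t - 1`. -/
lemma key_exists : ∀ (t : ℕ) (h : MvPolynomial (Fin n) K), h ≠ 0 → h.support.card ≤ t →
    ∃ α : Fin n → ℕ, (∑ j, α j) + 1 ≤ h.support.card ∧ EE α h ≠ 0 := by
  intro t
  induction t with
  | zero =>
    intro h h0 hc
    exact absurd (MvPolynomial.support_eq_empty.1 (Finset.card_eq_zero.1 (Nat.le_zero.1 hc))) h0
  | succ t ih =>
    intro h h0 hc
    by_cases h1 : h.support.card ≤ 1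
    · have hne : h.support.Nonempty := MvPolynomial.support_nonempty.2 h0
      have hcard : h.support.card = 1 := le_antisymm h1 (Finset.card_pos.2 hne)
      obtain ⟨a, hsupp⟩ := Finset.card_eq_one.1 hcard
      refine ⟨fun _ => 0, by rw [hcard]; simp, ?_⟩
      rw [EE, hsupp, Finset.sum_singleton]
      simp only [Nat.descFactorial_zero, Nat.cast_one, Finset.prod_const_one, mul_one]
      exact mem_support_iff.1 (hsupp ▸ Finset.mem_singleton_self a)
    · push_neg at h1
      obtain ⟨a₁, ha₁, a₂, ha₂, hne12⟩ := Finset.one_lt_card.1 h1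
      obtain ⟨j, hj⟩ : ∃ j, a₁ j ≠ a₂ j := by
        by_contra hcon
        push_neg at hcon
        exact hne12 (Finsupp.ext hcon)
      set g : MvPolynomial (Fin n) K := C ((a₁ j : K)) * h - X j * pderiv j h with hgdef
      have hcoeffg : ∀ a, coeff a g = ((a₁ j : K) - (a j : K)) * coeff a h := by
        intro a
        rw [hgdef, coeff_sub, coeff_C_mul, coeff_X_mul_pderiv]
        ring
      have hsubg : g.support ⊆ h.support.erase a₁ := by
        intro a ha
        rw [mem_support_iff, hcoeffg] at ha
        have h2 := right_ne_zero_of_mul ha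
        have h3 := left_ne_zero_of_mul ha
        refine Finset.mem_erase.2 ⟨?_, mem_support_iff.2 h2⟩
        rintro rfl
        exact h3 (by ring)
      have hg0 : g ≠ 0 := by
        intro h0'
        have hzz : ((a₁ j : K) - (a₂ j : K)) * coeff a₂ h = 0 := by
          rw [← hcoeffg a₂, h0', coeff_zero]
        have hdne : ((a₁ j : K) - (a₂ j : K)) ≠ 0 := by
          rw [sub_ne_zero]
          exact_mod_cast hj
        rcases mul_eq_zero.1 hzz with h' | h'
        · exact hdne h'
        · exact (mem_support_iff.1 ha₂) h'
      have h4 := Finset.card_le_card hsubg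
      have h5 : (h.support.erase a₁).card = h.support.card - 1 := Finset.card_erase_of_mem ha₁
      have h6 : 1 ≤ h.support.card := Finset.card_pos.2 ⟨a₁, ha₁⟩
      have hcardg : g.support.card ≤ t := by omega
      obtain ⟨α, hα1, hα2⟩ := ih g hg0 hcardg
      have hrel : EE α g = ((a₁ j : K) - (α j : K)) * EE α h
          - EE (fun m => if m = j then α m + 1 else α m) h := by
        rw [EE_sum_subset α g (hsubg.trans (Finset.erase_subset _ _)), EE, EE,
          Finset.mul_sum, ← Finset.sum_sub_distrib]
        refine Finset.sum_congr rfl fun a _ => ?_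
        rw [hcoeffg]
        have hprod : (∏ m, ((a m).descFactorial (if m = j then α m + 1 else α m) : K))
            = ((a j : K) - (α j : K)) * ∏ m, ((a m).descFactorial (α m) : K) := by
          rw [← Finset.mul_prod_erase univ
              (fun m => ((a m).descFactorial (if m = j then α m + 1 else α m) : K))
              (mem_univ j),
            ← Finset.mul_prod_erase univ
              (fun m => ((a m).descFactorial (α m) : K)) (mem_univ j)]
          have hifj : (if j = j then α j + 1 else α j) = α j + 1 := if_pos rfl
          rw [hifj, dF_cast_succ,
            Finset.prod_congr rfl fun m hm => by
              rw [if_neg (Finset.mem_erase.1 hm).1]]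
          ring
        rw [hprod]
        ring
      by_cases hEh : EE α h = 0
      · refine ⟨fun m => if m = j then α m + 1 else α m, ?_, ?_⟩
        · have hsum : (∑ m, if m = j then α m + 1 else α m) = (∑ m, α m) + 1 := by
            have hpt : ∀ m, (if m = j then α m + 1 else α m)
                = α m + (if m = j then 1 else 0) := by
              intro m; split <;> simp
            rw [Finset.sum_congr rfl fun m _ => hpt m, Finset.sum_add_distrib,
              Finset.sum_ite_eq' univ j fun _ => 1]
            simp
          show (∑ m, if m = j then α m + 1 else α m) + 1 ≤ h.support.card
          omega
        · intro hzero
          apply hα2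
          rw [hrel, hEh, hzero]
          ring
      · exact ⟨α, by omega, hEh⟩

/-- The `k`-th slice of the support in direction `i`. -/
noncomputable def Sk (f : MvPolynomial (Fin n) K) (i : Fin n) (k : ℕ) : Finset (Fin n →₀ ℕ) :=
  f.support.filter fun a => a i = k

lemma mem_Sk {f : MvPolynomial (Fin n) K} {i : Fin n} {k : ℕ} {a : Fin n →₀ ℕ} :
    a ∈ Sk f i k ↔ a ∈ f.support ∧ a i = k := Finset.mem_filter

/-- The slice functional: `(∂^β ∂_i^k f)(1,…,1)/k!` described combinatorially. -/
noncomputable def JJ (f : MvPolynomial (Fin n) K) (i : Fin n) (k : ℕ) (β : Fin n → ℕ) : K :=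
  ∑ a ∈ Sk f i k, coeff a f * ∏ m ∈ univ.erase i, ((a m).descFactorial (β m) : K)

lemma ann_pointwise (f : MvPolynomial (Fin n) K) (hann : (∑ t, pderiv t f) = 0)
    (b : Fin n →₀ ℕ) :
    ∑ t, ((b t + 1 : ℕ) : K) * coeff (b + Finsupp.single t 1) f = 0 := by
  have h0 : coeff b (∑ t, pderiv t f) = 0 := by rw [hann, coeff_zero]
  rw [coeff_sum] at h0
  rw [← h0]
  exact Finset.sum_congr rfl fun t _ => (coeff_pderiv' t f b).symm

lemma relR (f : MvPolynomial (Fin n) K) (i : Fin n) (hann : (∑ t, pderiv t f) = 0)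
    (k : ℕ) (β : Fin n → ℕ) :
    ((k : K) + 1) * JJ f i (k + 1) β
      + (∑ j ∈ univ.erase i, JJ f i k (fun m => if m = j then β m + 1 else β m)) = 0 := by
  classical
  set W : (Fin n →₀ ℕ) → K :=
    fun b => ∏ m ∈ univ.erase i, ((b m).descFactorial (β m) : K) with hW
  set B : Finset (Fin n →₀ ℕ) :=
    (f.support.biUnion fun a => univ.image fun t : Fin n => a - Finsupp.single t 1).filter
      (fun b => b i = k) with hB
  have hBi : ∀ b ∈ B, b i = k := fun b hb => (Finset.mem_filter.1 hb).2
  have hBmem : ∀ a ∈ f.support, ∀ t : Fin n, (a - Finsupp.single t 1 : Fin n →₀ ℕ) i = k →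
      a - Finsupp.single t 1 ∈ B := by
    intro a ha t ht
    exact Finset.mem_filter.2
      ⟨Finset.mem_biUnion.2 ⟨a, ha, Finset.mem_image.2 ⟨t, mem_univ t, rfl⟩⟩, ht⟩
  have hmaster : ∑ t : Fin n, ∑ b ∈ B,
      ((b t + 1 : ℕ) : K) * coeff (b + Finsupp.single t 1) f * W b = 0 := by
    rw [Finset.sum_comm]
    refine Finset.sum_eq_zero fun b _ => ?_
    have hp := ann_pointwise f hann b
    calc ∑ t : Fin n, ((b t + 1 : ℕ) : K) * coeff (b + Finsupp.single t 1) f * W b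
        = (∑ t : Fin n, ((b t + 1 : ℕ) : K) * coeff (b + Finsupp.single t 1) f) * W b := by
          rw [Finset.sum_mul]
      _ = 0 := by rw [hp, zero_mul]
  have hmain : (∑ t ∈ univ.erase i, ∑ b ∈ B,
        ((b t + 1 : ℕ) : K) * coeff (b + Finsupp.single t 1) f * W b)
      + (∑ b ∈ B, ((b i + 1 : ℕ) : K) * coeff (b + Finsupp.single i 1) f * W b) = 0 :=
    (Finset.sum_erase_add univ _ (mem_univ i)).trans hmaster
  have hvalA : ∀ b : Fin n →₀ ℕ, b i = k →
      ((b i + 1 : ℕ) : K) * coeff (b + Finsupp.single i 1) f * W b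
        = ((k : K) + 1) * (coeff (b + Finsupp.single i 1) f *
            ∏ m ∈ univ.erase i, (((b + Finsupp.single i 1 : Fin n →₀ ℕ) m).descFactorial (β m) : K)) := by
    intro b hbk
    have hWb : W b = ∏ m ∈ univ.erase i,
        (((b + Finsupp.single i 1 : Fin n →₀ ℕ) m).descFactorial (β m) : K) := by
      simp only [hW]
      refine Finset.prod_congr rfl fun m hm => ?_
      have hmi : m ≠ i := (Finset.mem_erase.1 hm).1
      rw [Finsupp.add_apply, Finsupp.single_apply, if_neg (Ne.symm hmi), Nat.add_zero]
    rw [hbk, hWb]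
    push_cast
    ring
  have hcompA : (∑ b ∈ B, ((b i + 1 : ℕ) : K) * coeff (b + Finsupp.single i 1) f * W b)
      = ((k : K) + 1) * JJ f i (k + 1) β := by
    rw [JJ, Finset.mul_sum]
    refine Finset.sum_bij_ne_zero (fun b _ _ => b + Finsupp.single i 1) ?_ ?_ ?_ ?_
    · intro b hb hbne
      have hcne : coeff (b + Finsupp.single i 1) f ≠ 0 := by
        intro h0; exact hbne (by rw [h0]; ring)
      refine mem_Sk.2 ⟨mem_support_iff.2 hcne, ?_⟩
      rw [Finsupp.add_apply, Finsupp.single_eq_same, hBi b hb]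
    · intro b₁ h₁ h₁' b₂ h₂ h₂' heq
      ext m
      have hm := DFunLike.congr_fun heq m
      simp only [Finsupp.add_apply] at hm
      omega
    · intro a ha hane
      have hai : a i = k + 1 := (mem_Sk.1 ha).2
      have hle : Finsupp.single i 1 ≤ a := Finsupp.single_le_iff.2 (by omega)
      have hba : a - Finsupp.single i 1 + Finsupp.single i 1 = a := tsub_add_cancel_of_le hle
      have hbik : (a - Finsupp.single i 1 : Fin n →₀ ℕ) i = k := by
        rw [Finsupp.tsub_apply, Finsupp.single_eq_same, hai]
        omega
      have hbB : a - Finsupp.single i 1 ∈ B := hBmem a (mem_Sk.1 ha).1 i hbik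
      refine ⟨a - Finsupp.single i 1, hbB, ?_, hba⟩
      rw [hvalA _ hbik, hba]
      exact hane
    · intro b hb hbne
      exact hvalA b (hBi b hb)
  have hvalB : ∀ j, j ≠ i → ∀ b : Fin n →₀ ℕ,
      ((b j + 1 : ℕ) : K) * coeff (b + Finsupp.single j 1) f * W b
        = coeff (b + Finsupp.single j 1) f *
            ∏ m ∈ univ.erase i, (((b + Finsupp.single j 1 : Fin n →₀ ℕ) m).descFactorial
              (if m = j then β m + 1 else β m) : K) := by
    intro j hji b
    have hjmem : j ∈ univ.erase i := Finset.mem_erase.2 ⟨hji, mem_univ j⟩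
    have hbj : (b + Finsupp.single j 1 : Fin n →₀ ℕ) j = b j + 1 := by
      rw [Finsupp.add_apply, Finsupp.single_eq_same]
    have hrest : ∀ m ∈ (univ.erase i).erase j,
        (((b + Finsupp.single j 1 : Fin n →₀ ℕ) m).descFactorial (if m = j then β m + 1 else β m) : K)
          = ((b m).descFactorial (β m) : K) := by
      intro m hm
      have hmj : m ≠ j := (Finset.mem_erase.1 hm).1
      rw [if_neg hmj, Finsupp.add_apply, Finsupp.single_apply, if_neg (Ne.symm hmj),
        Nat.add_zero]
    simp only [hW]
    rw [← Finset.mul_prod_erase (univ.erase i)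
        (fun m => (((b + Finsupp.single j 1 : Fin n →₀ ℕ) m).descFactorial
          (if m = j then β m + 1 else β m) : K)) hjmem,
      ← Finset.mul_prod_erase (univ.erase i)
        (fun m => ((b m).descFactorial (β m) : K)) hjmem,
      Finset.prod_congr rfl hrest]
    have hifj : (if j = j then β j + 1 else β j) = β j + 1 := if_pos rfl
    rw [hifj, hbj, Nat.succ_descFactorial_succ, Nat.cast_mul]
    push_cast
    ring
  have hcompB : ∀ j ∈ univ.erase i,
      (∑ b ∈ B, ((b j + 1 : ℕ) : K) * coeff (b + Finsupp.single j 1) f * W b)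
        = JJ f i k (fun m => if m = j then β m + 1 else β m) := by
    intro j hj
    have hji : j ≠ i := (Finset.mem_erase.1 hj).1
    rw [JJ]
    refine Finset.sum_bij_ne_zero (fun b _ _ => b + Finsupp.single j 1) ?_ ?_ ?_ ?_
    · intro b hb hbne
      have hcne : coeff (b + Finsupp.single j 1) f ≠ 0 := by
        intro h0; exact hbne (by rw [h0]; ring)
      refine mem_Sk.2 ⟨mem_support_iff.2 hcne, ?_⟩
      rw [Finsupp.add_apply, Finsupp.single_apply, if_neg hji, Nat.add_zero]
      exact hBi b hb
    · intro b₁ h₁ h₁' b₂ h₂ h₂' heq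
      ext m
      have hm := DFunLike.congr_fun heq m
      simp only [Finsupp.add_apply] at hm
      omega
    · intro a ha hane
      have hai : a i = k := (mem_Sk.1 ha).2
      have hprodne : (∏ m ∈ univ.erase i,
          ((a m).descFactorial (if m = j then β m + 1 else β m) : K)) ≠ 0 :=
        right_ne_zero_of_mul hane
      have hfac := Finset.prod_ne_zero_iff.1 hprodne j hj
      rw [if_pos rfl] at hfac
      have haj : β j + 1 ≤ a j := by
        by_contra hlt
        push_neg at hlt
        rw [Nat.descFactorial_of_lt hlt] at hfac
        exact hfac (by norm_num)
      have hle : Finsupp.single j 1 ≤ a := Finsupp.single_le_iff.2 (by omega)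
      have hba : a - Finsupp.single j 1 + Finsupp.single j 1 = a := tsub_add_cancel_of_le hle
      have hbik : (a - Finsupp.single j 1 : Fin n →₀ ℕ) i = k := by
        rw [Finsupp.tsub_apply, Finsupp.single_apply, if_neg hji, Nat.sub_zero]
        exact hai
      have hbB : a - Finsupp.single j 1 ∈ B := hBmem a (mem_Sk.1 ha).1 j hbik
      refine ⟨a - Finsupp.single j 1, hbB, ?_, hba⟩
      rw [hvalB j hji _, hba]
      exact hane
    · intro b hb hbne
      exact hvalB j hji b
  have hmain2 : (∑ j ∈ univ.erase i, JJ f i k (fun m => if m = j then β m + 1 else β m))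
      + ((k : K) + 1) * JJ f i (k + 1) β = 0 := by
    rw [← hcompA, ← Finset.sum_congr rfl hcompB]
    exact hmain
  linear_combination hmain2

lemma relEuler (f : MvPolynomial (Fin n) K) (i : Fin n) (d : ℕ)
    (hdeg : ∀ a ∈ f.support, ∑ m, a m = d) (k : ℕ) (β : Fin n → ℕ) :
    (∑ j ∈ univ.erase i, JJ f i k (fun m => if m = j then β m + 1 else β m))
      = ((d : K) - (k : K) - ∑ m ∈ univ.erase i, (β m : K)) * JJ f i k β := by
  have hJJ : ∀ j ∈ univ.erase i, JJ f i k (fun m => if m = j then β m + 1 else β m)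
      = ∑ a ∈ Sk f i k, ((a j : K) - (β j : K)) *
          (coeff a f * ∏ m ∈ univ.erase i, ((a m).descFactorial (β m) : K)) := by
    intro j hj
    rw [JJ]
    refine Finset.sum_congr rfl fun a _ => ?_
    have hp : (∏ m ∈ univ.erase i,
        ((a m).descFactorial (if m = j then β m + 1 else β m) : K))
        = ((a j : K) - (β j : K)) *
          ∏ m ∈ univ.erase i, ((a m).descFactorial (β m) : K) := by
      rw [← Finset.mul_prod_erase (univ.erase i)
          (fun m => ((a m).descFactorial (if m = j then β m + 1 else β m) : K)) hj,
        ← Finset.mul_prod_erase (univ.erase i)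
          (fun m => ((a m).descFactorial (β m) : K)) hj]
      have hifj : (if j = j then β j + 1 else β j) = β j + 1 := if_pos rfl
      rw [hifj, dF_cast_succ,
        Finset.prod_congr rfl fun m hm => by rw [if_neg (Finset.mem_erase.1 hm).1]]
      ring
    rw [hp]
    ring
  rw [Finset.sum_congr rfl hJJ, Finset.sum_comm, JJ, Finset.mul_sum]
  refine Finset.sum_congr rfl fun a ha => ?_
  have hasupp : a ∈ f.support := (mem_Sk.1 ha).1
  have hai : a i = k := (mem_Sk.1 ha).2
  have hsum_erase : ∑ m ∈ univ.erase i, (a m : K) = (d : K) - (k : K) := by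
    have h2 := Finset.sum_erase_add univ (fun m => (a m : K)) (mem_univ i)
    have h4 : ∑ m : Fin n, (a m : K) = (d : K) := by
      rw [← Nat.cast_sum, hdeg a hasupp]
    simp only [hai] at h2
    have h5 := eq_sub_of_add_eq h2
    rw [h4] at h5
    exact h5
  rw [← Finset.sum_mul, Finset.sum_sub_distrib, hsum_erase]

lemma relStar (f : MvPolynomial (Fin n) K) (i : Fin n) (d : ℕ)
    (hdeg : ∀ a ∈ f.support, ∑ m, a m = d) (hann : (∑ t, pderiv t f) = 0)
    (k : ℕ) (β : Fin n → ℕ) :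
    ((k : K) + 1) * JJ f i (k + 1) β
      = ((∑ m ∈ univ.erase i, (β m : K)) + (k : K) - (d : K)) * JJ f i k β := by
  have h1 := relR f i hann k β
  have h2 := relEuler f i d hdeg k β
  linear_combination h1 - h2

/-- The slice of `f` in direction `i` at level `k`, as a polynomial. -/
noncomputable def slicePoly (f : MvPolynomial (Fin n) K) (i : Fin n) (k : ℕ) :
    MvPolynomial (Fin n) K :=
  ∑ a ∈ Sk f i k, monomial a (coeff a f)

lemma coeff_slicePoly (f : MvPolynomial (Fin n) K) (i : Fin n) (k : ℕ) (b : Fin n →₀ ℕ) :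
    coeff b (slicePoly f i k) = if b ∈ Sk f i k then coeff b f else 0 := by
  rw [slicePoly, coeff_sum,
    Finset.sum_congr rfl fun a _ => coeff_monomial b a (coeff a f)]
  exact Finset.sum_ite_eq' (Sk f i k) b fun a => coeff a f

lemma support_slicePoly (f : MvPolynomial (Fin n) K) (i : Fin n) (k : ℕ) :
    (slicePoly f i k).support = Sk f i k := by
  ext b
  rw [mem_support_iff, coeff_slicePoly]
  constructor
  · intro h
    by_contra hb
    rw [if_neg hb] at h
    exact h rfl
  · intro hb
    rw [if_pos hb]
    exact mem_support_iff.1 (mem_Sk.1 hb).1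

lemma EE_slicePoly (f : MvPolynomial (Fin n) K) (i : Fin n) (k : ℕ) (α : Fin n → ℕ) :
    EE α (slicePoly f i k) = (k.descFactorial (α i) : K) * JJ f i k α := by
  rw [EE, support_slicePoly, JJ, Finset.mul_sum]
  refine Finset.sum_congr rfl fun a ha => ?_
  rw [coeff_slicePoly, if_pos ha,
    ← Finset.mul_prod_erase univ (fun m => ((a m).descFactorial (α m) : K)) (mem_univ i),
    (mem_Sk.1 ha).2]
  ring

lemma JJ_nonzero_of_nonempty (f : MvPolynomial (Fin n) K) (i : Fin n) (k : ℕ)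
    (hne : (Sk f i k).Nonempty) :
    ∃ α : Fin n → ℕ, (∑ m ∈ univ.erase i, α m) + 1 ≤ (Sk f i k).card ∧ JJ f i k α ≠ 0 := by
  have hpne : slicePoly f i k ≠ 0 := by
    rw [← MvPolynomial.support_nonempty, support_slicePoly]
    exact hne
  obtain ⟨α, h1, h2⟩ := key_exists ((slicePoly f i k).support.card) _ hpne le_rfl
  rw [EE_slicePoly] at h2
  rw [support_slicePoly] at h1
  have hle : ∑ m ∈ univ.erase i, α m ≤ ∑ m, α m :=
    Finset.sum_le_sum_of_subset (Finset.subset_univ _)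
  exact ⟨α, by omega, right_ne_zero_of_mul h2⟩

end WLP2dAux


open WLP2dAux in
/-- For `n ≥ 4` and `d ≥ 2`, if `f` is a non-zero form of degree `d` in
`K[y_1,…,y_n]` with `(x_1 + ⋯ + x_n) ∘ f = 0` (each `x_i` acting as `∂/∂y_i`) and no
pure power `y_i^d` appears in `f`, then `|supp f| ≥ 2d`. -/
theorem support_card_ge_two_d {K : Type*} [Field K] [CharZero K]
    {n : ℕ} (hn : 4 ≤ n) (d : ℕ) (hd : 2 ≤ d)
    (f : MvPolynomial (Fin n) K) (hf0 : f ≠ 0) (hf : f.IsHomogeneous d)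
    (hann : (∑ t, MvPolynomial.pderiv t f) = 0)
    (hpure : ∀ i : Fin n, Finsupp.single i d ∉ f.support) :
    2 * d ≤ f.support.card := by
  classical
  have hdeg : ∀ a ∈ f.support, ∑ m, a m = d := by
    intro a ha
    have h1 := hf (mem_support_iff.1 ha)
    have h2 : a.degree = d := by rw [Finsupp.degree_eq_weight_one]; exact h1
    have h3 : a.degree = ∑ m ∈ a.support, a m := rfl
    rw [← h2, h3]
    exact (Finset.sum_subset (Finset.subset_univ _)
      fun m _ hm => Finsupp.notMem_support_iff.1 hm).symm
  obtain ⟨a₀, ha₀⟩ := MvPolynomial.support_nonempty.2 hf0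
  obtain ⟨i, hi⟩ : ∃ i, a₀ i ≠ 0 := by
    by_contra hcon
    push_neg at hcon
    have h1 := hdeg a₀ ha₀
    rw [Finset.sum_congr rfl fun m _ => hcon m] at h1
    simp at h1
    omega
  set ρ : ℕ := f.support.sup (fun a => a i) with hρdef
  have hρ_le : ∀ a ∈ f.support, a i ≤ ρ := by
    intro a ha
    rw [hρdef]
    exact Finset.le_sup (f := fun a => a i) ha
  have hρ1 : 1 ≤ ρ := le_trans (Nat.one_le_iff_ne_zero.2 hi) (hρ_le a₀ ha₀)
  have hρd' : ρ ≤ d := by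
    apply Finset.sup_le
    intro a ha
    calc a i ≤ ∑ m, a m := Finset.single_le_sum (fun m _ => Nat.zero_le _) (mem_univ i)
      _ = d := hdeg a ha
  obtain ⟨aρ, haρ, haρi⟩ : ∃ a ∈ f.support, a i = ρ := by
    obtain ⟨a, ha, h⟩ := Finset.exists_mem_eq_sup f.support
      (MvPolynomial.support_nonempty.2 hf0) (fun a => a i)
    exact ⟨a, ha, h.symm⟩
  have hρd : ρ + 1 ≤ d := by
    rcases Nat.lt_or_ge ρ d with h | h
    · omega
    · exfalso
      have hρeq : ρ = d := le_antisymm hρd' h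
      have haeq : aρ = Finsupp.single i d := by
        have h1 := hdeg aρ haρ
        have h2 := Finset.sum_erase_add univ (fun m => aρ m) (mem_univ i)
        have h3 : ∑ m ∈ univ.erase i, aρ m = 0 := by
          simp only [haρi, hρeq] at h2
          omega
        ext m
        rcases eq_or_ne m i with rfl | hmi
        · rw [haρi, hρeq, Finsupp.single_eq_same]
        · have h4 : aρ m = 0 :=
            Finset.sum_eq_zero_iff.1 h3 m (Finset.mem_erase.2 ⟨hmi, mem_univ m⟩)
          rw [h4, Finsupp.single_apply, if_neg (Ne.symm hmi)]
      exact hpure i (haeq ▸ haρ)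
  have hstar : ∀ (k : ℕ) (β : Fin n → ℕ), ((k : K) + 1) * JJ f i (k + 1) β
      = ((∑ m ∈ univ.erase i, (β m : K)) + (k : K) - (d : K)) * JJ f i k β :=
    relStar f i d hdeg hann
  have hSempty : ∀ k, ρ < k → Sk f i k = ∅ := by
    intro k hk
    rw [Finset.eq_empty_iff_forall_notMem]
    intro a ha
    have h1 := (mem_Sk.1 ha).2
    have h2 := hρ_le a (mem_Sk.1 ha).1
    omega
  have hvan_aux : ∀ (t : ℕ) (β : Fin n → ℕ), (∑ m ∈ univ.erase i, β m) + ρ + 1 ≤ d →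
      JJ f i (ρ + 1 - t) β = 0 := by
    intro t
    induction t with
    | zero =>
      intro β hβ
      rw [Nat.sub_zero, JJ, hSempty (ρ + 1) (Nat.lt_succ_self ρ), Finset.sum_empty]
    | succ t ih =>
      intro β hβ
      rcases le_or_gt (t + 1) (ρ + 1) with h1 | h1
      · set k := ρ + 1 - (t + 1) with hk
        have hk1 : k + 1 = ρ + 1 - t := by omega
        have h0 := hstar k β
        rw [hk1, ih β hβ, mul_zero] at h0
        have hcoefne : ((∑ m ∈ univ.erase i, (β m : K)) + (k : K) - (d : K)) ≠ 0 := by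
          rw [sub_ne_zero, ← Nat.cast_sum, ← Nat.cast_add]
          exact Nat.cast_injective.ne (by omega)
        exact (mul_eq_zero.1 h0.symm).resolve_left hcoefne
      · have h2 : ρ + 1 - (t + 1) = ρ + 1 - t := by omega
        rw [h2]
        exact ih β hβ
  have hvanish : ∀ (k : ℕ) (β : Fin n → ℕ), k ≤ ρ + 1 →
      (∑ m ∈ univ.erase i, β m) + ρ + 1 ≤ d → JJ f i k β = 0 := by
    intro k β hk hβ
    have h1 := hvan_aux (ρ + 1 - k) β hβ
    rwa [show ρ + 1 - (ρ + 1 - k) = k by omega] at h1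
  have hup : ∀ k₀, Sk f i k₀ = ∅ → ∀ (j : ℕ) (β : Fin n → ℕ), JJ f i (k₀ + j) β = 0 := by
    intro k₀ h0 j
    induction j with
    | zero => intro β; rw [Nat.add_zero, JJ, h0, Finset.sum_empty]
    | succ j ih =>
      intro β
      have h1 := hstar (k₀ + j) β
      rw [ih β, mul_zero] at h1
      have h2 : (((k₀ + j : ℕ) : K) + 1) ≠ 0 := Nat.cast_add_one_ne_zero (k₀ + j)
      have h3 := (mul_eq_zero.1 h1).resolve_left ?_
      · exact h3
      · exact_mod_cast h2
  have hnonempty : ∀ k, k ≤ ρ → (Sk f i k).Nonempty := by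
    intro k hk
    rcases Finset.eq_empty_or_nonempty (Sk f i k) with he | hne
    · exfalso
      have hzero : ∀ β, JJ f i ρ β = 0 := by
        intro β
        have h1 := hup k he (ρ - k) β
        rwa [show k + (ρ - k) = ρ by omega] at h1
      obtain ⟨α, hα1, hα2⟩ := JJ_nonzero_of_nonempty f i ρ
        ⟨aρ, mem_Sk.2 ⟨haρ, haρi⟩⟩
      exact hα2 (hzero α)
    · exact hne
  have hbound : ∀ k, k ≤ ρ → d + 1 - ρ ≤ (Sk f i k).card := by
    intro k hk
    obtain ⟨α, hα1, hα2⟩ := JJ_nonzero_of_nonempty f i k (hnonempty k hk)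
    have hbig : ¬ ((∑ m ∈ univ.erase i, α m) + ρ + 1 ≤ d) := fun hle =>
      hα2 (hvanish k α (by omega) hle)
    omega
  have hpart : f.support.card = ∑ k ∈ Finset.range (ρ + 1), (Sk f i k).card :=
    Finset.card_eq_sum_card_fiberwise fun a ha =>
      Finset.mem_range.2 (Nat.lt_succ_of_le (hρ_le a ha))
  have hfinal : (ρ + 1) * (d + 1 - ρ) ≤ ∑ k ∈ Finset.range (ρ + 1), (Sk f i k).card := by
    have h1 := Finset.card_nsmul_le_sum (Finset.range (ρ + 1))
      (fun k => (Sk f i k).card) (d + 1 - ρ)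
      (fun k hk => hbound k (Nat.lt_succ_iff.1 (Finset.mem_range.1 hk)))
    simpa [Finset.card_range, smul_eq_mul] using h1
  rw [hpart]
  refine le_trans ?_ hfinal
  obtain ⟨s, hs⟩ : ∃ s, d = ρ + s := ⟨d - ρ, by omega⟩
  have hs1 : 1 ≤ s := by omega
  have h2 : d + 1 - ρ = s + 1 := by omega
  rw [h2, hs]
  obtain ⟨p, hp⟩ : ∃ p, ρ = p + 1 := ⟨ρ - 1, by omega⟩
  obtain ⟨q, hq⟩ : ∃ q, s = q + 1 := ⟨s - 1, by omega⟩
  rw [hp, hq]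
  nlinarith [Nat.zero_le (p * q)]
end

section
/- Let K be a field of characteristic zero, n ≥ 4, d ≥ 2, and in R = K[y_1,…,y_n] let f = (y_1 − y_2)(y_3 − y_4)^{d−1}. Then (x_1 + ⋯ + x_n) ∘ f = 0, no pure power y_i^d lies in supp(f), and |supp(f)| = 2d. -/
open MvPolynomial Finset

lemma aux_support_sum_monomial {K σ ι : Type*} [CommSemiring K] [DecidableEq σ]
    (s : Finset ι) (E : ι → (σ →₀ ℕ)) (c : ι → K)
    (hE : Set.InjOn E s) (hc : ∀ i ∈ s, c i ≠ 0) :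
    (∑ i ∈ s, monomial (E i) (c i)).support = s.image E := by
  classical
  ext a
  rw [mem_support_iff]
  simp only [coeff_sum, coeff_monomial, mem_image]
  constructor
  · intro h
    by_contra hcon
    push_neg at hcon
    exact h (Finset.sum_eq_zero fun i hi => by simp [hcon i hi])
  · rintro ⟨i0, hi0, rfl⟩
    rw [Finset.sum_eq_single_of_mem i0 hi0]
    · simp [hc i0 hi0]
    · intro j hj hne
      simp only [ite_eq_right_iff]
      intro h; exact absurd (hE hj hi0 h) hne

lemma aux_sum_pderiv_X_sub {K : Type*} [CommRing K] {n : ℕ} (a b : Fin n) :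
    (∑ t, pderiv t ((X a - X b : MvPolynomial (Fin n) K))) = 0 := by
  classical
  simp only [map_sub, Finset.sum_sub_distrib, pderiv_X]
  rw [Finset.sum_eq_single a, Finset.sum_eq_single b] <;>
    simp (config := {contextual := true}) [Pi.single_apply, eq_comm]

set_option maxHeartbeats 1000000 in
/-- For `n ≥ 4` and `d ≥ 2`, the form `f = (y_1 - y_2)(y_3 - y_4)^{d-1}` in
`K[y_1,…,y_n]` satisfies `(x_1 + ⋯ + x_n) ∘ f = 0` (each `x_i` acting as `∂/∂y_i`),
contains no pure power `y_i^d` in its support, and has exactly `2d` monomials. -/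
theorem sharp_example_many_vars {K : Type*} [Field K] [CharZero K]
    {n : ℕ} (hn : 4 ≤ n) (d : ℕ) (hd : 2 ≤ d)
    (f : MvPolynomial (Fin n) K)
    (hfdef : f = (MvPolynomial.X (⟨0, by omega⟩ : Fin n) -
          MvPolynomial.X (⟨1, by omega⟩ : Fin n)) *
        (MvPolynomial.X (⟨2, by omega⟩ : Fin n) -
          MvPolynomial.X (⟨3, by omega⟩ : Fin n)) ^ (d - 1)) :
    (∑ t, MvPolynomial.pderiv t f) = 0 ∧
    (∀ i : Fin n, Finsupp.single i d ∉ f.support) ∧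
    f.support.card = 2 * d := by
  classical
  subst hfdef
  set a0 : Fin n := ⟨0, by omega⟩ with ha0
  set a1 : Fin n := ⟨1, by omega⟩ with ha1
  set a2 : Fin n := ⟨2, by omega⟩ with ha2
  set a3 : Fin n := ⟨3, by omega⟩ with ha3
  have h01 : a0 ≠ a1 := by simp [ha0, ha1, Fin.ext_iff]
  have h02 : a0 ≠ a2 := by simp [ha0, ha2, Fin.ext_iff]
  have h03 : a0 ≠ a3 := by simp [ha0, ha3, Fin.ext_iff]
  have h12 : a1 ≠ a2 := by simp [ha1, ha2, Fin.ext_iff]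
  have h13 : a1 ≠ a3 := by simp [ha1, ha3, Fin.ext_iff]
  have h23 : a2 ≠ a3 := by simp [ha2, ha3, Fin.ext_iff]
  -- Part 1
  have part1 : (∑ t, pderiv t ((X a0 - X a1) * (X a2 - X a3) ^ (d-1) :
      MvPolynomial (Fin n) K)) = 0 := by
    have expand : ∀ t : Fin n,
        pderiv t ((X a0 - X a1) * (X a2 - X a3) ^ (d-1) : MvPolynomial (Fin n) K) =
        pderiv t (X a0 - X a1) * (X a2 - X a3) ^ (d-1) +
        (X a0 - X a1) * ((d-1) • ((X a2 - X a3) ^ (d-1-1) * pderiv t (X a2 - X a3))) := by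
      intro t
      rw [pderiv_mul, (pderiv t).leibniz_pow]
      ring_nf
    simp only [expand]
    rw [Finset.sum_add_distrib, ← Finset.sum_mul, aux_sum_pderiv_X_sub, zero_mul, zero_add,
      ← Finset.mul_sum, ← Finset.smul_sum, ← Finset.mul_sum, aux_sum_pderiv_X_sub]
    simp
  -- Expansion of f as a sum of monomials
  set E : Bool × ℕ → (Fin n →₀ ℕ) := fun p =>
    Finsupp.single (if p.1 then a1 else a0) 1 + Finsupp.single a2 p.2 +
      Finsupp.single a3 (d-1-p.2) with hE
  set c : Bool × ℕ → K := fun p =>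
    (if p.1 then -1 else 1) * ((-1)^(p.2+(d-1)) * ((d-1).choose p.2 : K)) with hc
  set s : Finset (Bool × ℕ) := Finset.univ ×ˢ Finset.range d with hs
  have hg : ((X a2 - X a3) ^ (d - 1) : MvPolynomial (Fin n) K) =
      ∑ k ∈ Finset.range d, monomial
        (Finsupp.single a2 k + Finsupp.single a3 (d-1-k))
        ((-1)^(k+(d-1)) * ((d-1).choose k : K)) := by
    rw [sub_pow, show d - 1 + 1 = d by omega]
    refine Finset.sum_congr rfl fun k hk => ?_
    rw [X_pow_eq_monomial, X_pow_eq_monomial,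
      show ((-1 : MvPolynomial (Fin n) K)) ^ (k + (d-1)) = C ((-1 : K)^(k+(d-1))) by
        simp [map_pow],
      show (((d-1).choose k : ℕ) : MvPolynomial (Fin n) K) = C (((d-1).choose k : ℕ) : K) by
        simp,
      mul_right_comm _ _ (C (((d-1).choose k : ℕ) : K)),
      mul_right_comm (C _) _ (C (((d-1).choose k : ℕ) : K)),
      ← map_mul, mul_assoc, monomial_mul, mul_one, C_mul_monomial, mul_one]
  have hfexp : ((X a0 - X a1) * (X a2 - X a3) ^ (d-1) : MvPolynomial (Fin n) K) =
      ∑ p ∈ s, monomial (E p) (c p) := by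
    rw [hs, Finset.sum_product, Fintype.sum_bool, hg, sub_mul, Finset.mul_sum, Finset.mul_sum]
    rw [← Finset.sum_sub_distrib, ← Finset.sum_add_distrib]
    refine Finset.sum_congr rfl fun k hk => ?_
    simp only [hE, hc, Bool.false_eq_true, Bool.true_eq_false, if_true, if_false, X,
      monomial_mul, one_mul, smul_monomial, neg_smul, one_smul, neg_mul]
    rw [sub_eq_add_neg, ← map_neg, add_comm]
    congr 2 <;> abel_nf
  -- injectivity and nonvanishing
  have hinj : Set.InjOn E s := by
    rintro ⟨b, k⟩ hp ⟨b', k'⟩ hq h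
    have hv0 := DFunLike.congr_fun h a0
    have hv2 := DFunLike.congr_fun h a2
    clear part1 hg hfexp hp hq h
    cases b <;> cases b' <;>
      simp_all [hE, Finsupp.single_apply, h01, Ne.symm h01, h02, Ne.symm h02, h03,
        Ne.symm h03, h12, Ne.symm h12, h13, Ne.symm h13, h23, Ne.symm h23, Prod.ext_iff]
  have hcnz : ∀ p ∈ s, c p ≠ 0 := by
    rintro ⟨b, k⟩ hp
    simp only [hs, Finset.mem_product, Finset.mem_range] at hp
    have hch : ((d-1).choose k : K) ≠ 0 := by
      rw [Nat.cast_ne_zero]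
      exact Nat.choose_pos (by omega) |>.ne'
    cases b <;> simp [hc, hch, pow_ne_zero]
  have hsupp : ((X a0 - X a1) * (X a2 - X a3) ^ (d-1) : MvPolynomial (Fin n) K).support
      = s.image E := by
    rw [hfexp]; exact aux_support_sum_monomial s E c hinj hcnz
  refine ⟨part1, ?_, ?_⟩
  · intro i
    rw [hsupp]
    simp only [Finset.mem_image, not_exists]
    rintro ⟨b, k⟩ ⟨hp, h⟩
    have hv := DFunLike.congr_fun h (if b then a1 else a0)
    cases b <;>
      simp only [hE, if_true, if_false, Finsupp.add_apply, Finsupp.single_apply,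
        if_pos rfl, if_neg (Ne.symm h02), if_neg (Ne.symm h03), if_neg (Ne.symm h12),
        if_neg (Ne.symm h13)] at hv <;>
      split_ifs at hv <;> omega
  · rw [hsupp, Finset.card_image_of_injOn hinj, hs, Finset.card_product,
      Finset.card_univ, Finset.card_range, Fintype.card_bool]
end

section
/- Let d ≥ 2 and let a_1, a_2, a_3 be integers. Let N be the number of triples (α_1, α_2, α_3) of non-negative integers with α_1 + α_2 + α_3 = d and a_1α_1 + a_2α_2 + a_3α_3 ≡ 0 (mod d), i.e. the number of monomials of degree d in K[x_1,x_2,x_3] fixed by the action of M_{a_1,a_2,a_3}. Then 2N = 2 + gcd(a_2−a_1, a_3−a_1, d)·d + gcd(a_2−a_1, d) + gcd(a_3−a_1, d) + gcd(a_3−a_2, d), where the gcds are taken in ℤ (yielding non-negative values). -/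
open Finset


lemma count_dvd (m d : ℕ) (hm : 0 < m) (hmd : m ∣ d) :
    ((range d).filter fun x => m ∣ x).card = d / m := by
  obtain ⟨k, rfl⟩ := hmd
  have : (range (m * k)).filter (fun x => m ∣ x) = (range k).image (fun j => m * j) := by
    ext x
    simp only [mem_filter, mem_range, mem_image]
    constructor
    · rintro ⟨hx, j, rfl⟩
      exact ⟨j, lt_of_mul_lt_mul_left hx (Nat.zero_le m), rfl⟩
    · rintro ⟨j, hj, rfl⟩
      exact ⟨by exact (Nat.mul_lt_mul_left hm).mpr hj, j, rfl⟩
  rw [this, Finset.card_image_of_injective _ (fun a b h => by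
      exact Nat.eq_of_mul_eq_mul_left hm h), card_range,
    Nat.mul_div_cancel_left _ hm]

lemma key_dvd (c : ℤ) (e : ℕ) (he : 0 < e) (x : ℤ) :
    (e : ℤ) ∣ c * x ↔ ((e / Int.gcd c e : ℕ) : ℤ) ∣ x := by
  have hg : 0 < Int.gcd c e := Int.gcd_pos_of_ne_zero_right _ (by exact_mod_cast he.ne')
  set g : ℤ := (Int.gcd c e : ℤ) with hgdef
  have hg0 : g ≠ 0 := by positivity
  obtain ⟨c', hc'⟩ : g ∣ c := Int.gcd_dvd_left c e
  obtain ⟨m, hm⟩ : g ∣ (e : ℤ) := Int.gcd_dvd_right c e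
  have h1 : c / g = c' := by rw [hc', Int.mul_ediv_cancel_left _ hg0]
  have h2 : (e : ℤ) / g = m := by rw [hm, Int.mul_ediv_cancel_left _ hg0]
  have hcop : Int.gcd c' m = 1 := by
    have := Int.gcd_div_gcd_div_gcd (i := c) (j := (e : ℤ)) (by exact_mod_cast hg)
    rwa [h1, h2] at this
  have hcast : ((e / Int.gcd c e : ℕ) : ℤ) = m := by
    have hdvd : Int.gcd c e ∣ e :=
      Int.ofNat_dvd.mp (by exact_mod_cast (Int.gcd_dvd_right (a := c) (b := (e : ℤ))))
    have := Nat.div_mul_cancel hdvd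
    have hcast2 : ((e / Int.gcd c e : ℕ) : ℤ) * g = e := by
      rw [hgdef]; exact_mod_cast congrArg (Nat.cast : ℕ → ℤ) this
    have : ((e / Int.gcd c e : ℕ) : ℤ) * g = m * g := by rw [hcast2, hm]; ring
    exact mul_right_cancel₀ hg0 this
  rw [hcast]
  constructor
  · intro h
    obtain ⟨t, ht⟩ := h
    have h2' : m ∣ c' * x := by
      refine ⟨t, mul_left_cancel₀ hg0 ?_⟩
      rw [hc', hm] at ht
      linear_combination ht
    exact Int.dvd_of_dvd_mul_right_of_gcd_one h2' (by rwa [Int.gcd_comm] at hcop)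
  · rintro ⟨t, rfl⟩
    exact ⟨c' * t, by rw [hc', hm]; ring⟩



lemma count_lin (b : ℤ) (e d : ℕ) (he : 0 < e) (hed : e ∣ d) :
    ((range d).filter fun x : ℕ => (e : ℤ) ∣ b * x).card = (d / e) * Int.gcd b e := by
  have hG : 0 < Int.gcd b e := Int.gcd_pos_of_ne_zero_right _ (by exact_mod_cast he.ne')
  have hGe : Int.gcd b e ∣ e :=
    Int.ofNat_dvd.mp (by exact_mod_cast (Int.gcd_dvd_right (a := b) (b := (e : ℤ))))
  set m := e / Int.gcd b e with hm
  have hme : m ∣ e := Nat.div_dvd_of_dvd hGe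
  have hm0 : 0 < m := Nat.div_pos (Nat.le_of_dvd he hGe) hG
  have heq : ∀ x : ℕ, ((e : ℤ) ∣ b * x ↔ m ∣ x) := by
    intro x
    rw [key_dvd b e he x, Int.natCast_dvd_natCast]
  have hfil : (range d).filter (fun x : ℕ => (e : ℤ) ∣ b * x)
      = (range d).filter (fun x : ℕ => m ∣ x) :=
    Finset.filter_congr (fun x _ => by simp [heq x])
  rw [hfil, count_dvd m d hm0 (hme.trans hed)]
  obtain ⟨k, rfl⟩ := hed
  have h2 : e / m = Int.gcd b e := Nat.div_div_self hGe he.ne'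
  rw [mul_comm e k, Nat.mul_div_assoc k hme, Nat.mul_div_assoc k (dvd_refl e),
    Nat.div_self he, mul_one, h2]

lemma range_card_eq_zmod (d : ℕ) [NeZero d] (P : ZMod d → Prop) [DecidablePred P] :
    ((range d).filter fun x : ℕ => P x).card = (Finset.univ.filter P).card := by
  apply Finset.card_bij (fun x _ => ((x : ℕ) : ZMod d))
  · intro x hx
    simp only [mem_filter] at hx ⊢
    exact ⟨mem_univ _, hx.2⟩
  · intro x hx y hy h
    simp only [mem_filter, mem_range] at hx hy
    have := congrArg ZMod.val h
    rwa [ZMod.val_cast_of_lt hx.1, ZMod.val_cast_of_lt hy.1] at this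
  · intro z hz
    simp only [mem_filter, mem_univ, true_and] at hz
    refine ⟨z.val, ?_, ZMod.natCast_rightInverse z⟩
    simp only [mem_filter, mem_range]
    exact ⟨ZMod.val_lt z, by rwa [ZMod.natCast_rightInverse z]⟩

lemma count_shift (c t : ℤ) (d : ℕ) (hd : 0 < d) :
    ((range d).filter fun x : ℕ => (d : ℤ) ∣ c * x + t).card
      = if (Int.gcd c d : ℤ) ∣ t then Int.gcd c d else 0 := by
  haveI : NeZero d := ⟨hd.ne'⟩
  have hpred : ∀ x : ℕ, ((d : ℤ) ∣ c * x + t ↔ (c : ZMod d) * (x : ZMod d) + (t : ZMod d) = 0) := by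
    intro x
    rw [← ZMod.intCast_zmod_eq_zero_iff_dvd]
    push_cast
    rfl
  have hfil : (range d).filter (fun x : ℕ => (d : ℤ) ∣ c * x + t)
      = (range d).filter (fun x : ℕ => (c : ZMod d) * (x : ZMod d) + (t : ZMod d) = 0) :=
    Finset.filter_congr (fun x _ => by simp [hpred x])
  rw [hfil, range_card_eq_zmod d (fun z => (c : ZMod d) * z + (t : ZMod d) = 0)]
  by_cases hg : (Int.gcd c d : ℤ) ∣ t
  · rw [if_pos hg]
    obtain ⟨s, hs⟩ := hg
    set x₀ : ℤ := -(Int.gcdA c d * s) with hx₀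
    have hsol : (d : ℤ) ∣ c * x₀ + t := by
      have hb := Int.gcd_eq_gcd_ab c d
      refine ⟨Int.gcdB c d * s, ?_⟩
      rw [hx₀, hs]
      linear_combination s * hb
    set z₀ : ZMod d := ((x₀ : ℤ) : ZMod d) with hz₀
    have hz₀sol : (c : ZMod d) * z₀ + (t : ZMod d) = 0 := by
      have h0 := (ZMod.intCast_zmod_eq_zero_iff_dvd (c * x₀ + t) d).mpr hsol
      push_cast at h0
      rwa [hz₀]
    have hneg : (c : ZMod d) * z₀ = -(t : ZMod d) := by linear_combination hz₀sol
    have hbij : (Finset.univ.filter fun z : ZMod d => (c : ZMod d) * z + (t : ZMod d) = 0).card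
        = (Finset.univ.filter fun z : ZMod d => (c : ZMod d) * z = 0).card := by
      apply Finset.card_bij (fun z _ => z - z₀)
      · intro z hz
        simp only [mem_filter, mem_univ, true_and] at hz ⊢
        rw [mul_sub, hneg]
        linear_combination hz
      · intro x hx y hy h
        linear_combination (h : x - z₀ = y - z₀)
      · intro w hw
        simp only [mem_filter, mem_univ, true_and] at hw
        refine ⟨w + z₀, ?_, by ring⟩
        simp only [mem_filter, mem_univ, true_and]
        rw [mul_add, hw, hneg]
        ring
    rw [hbij, ← range_card_eq_zmod d (fun z => (c : ZMod d) * z = 0)]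
    have hfil2 : (range d).filter (fun x : ℕ => (c : ZMod d) * (x : ZMod d) = 0)
        = (range d).filter (fun x : ℕ => (d : ℤ) ∣ c * x) := by
      apply Finset.filter_congr
      intro x _
      have : ((d : ℤ) ∣ c * x) ↔ ((c : ZMod d) * (x : ZMod d) = 0) := by
        rw [← ZMod.intCast_zmod_eq_zero_iff_dvd]
        push_cast
        rfl
      simp [this]
    rw [hfil2, count_lin c d d hd (dvd_refl d), Nat.div_self hd, one_mul]
  · rw [if_neg hg]
    rw [Finset.card_eq_zero, Finset.filter_eq_empty_iff]
    intro z _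
    intro hcon
    apply hg
    have hzv : ((z.val : ℕ) : ZMod d) = z := ZMod.natCast_rightInverse z
    have hdz : (d : ℤ) ∣ c * z.val + t := by
      rw [← ZMod.intCast_zmod_eq_zero_iff_dvd]
      push_cast
      rw [hzv]
      exact hcon
    have h1 : (Int.gcd c d : ℤ) ∣ c * z.val := Dvd.dvd.mul_right (Int.gcd_dvd_left c (d : ℤ)) _
    have h2 : (Int.gcd c d : ℤ) ∣ (d : ℤ) := Int.gcd_dvd_right c (d : ℤ)
    have h3 := dvd_sub (h2.trans hdz) h1
    simpa using h3

/-- The number `N` of monomials of degree `d` in three variables fixed by the action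
`x_i ↦ ξ^{a_i} x_i` of `ℤ/dℤ`, i.e. of triples `(α_1, α_2, α_3)` with
`α_1 + α_2 + α_3 = d` and `a_1α_1 + a_2α_2 + a_3α_3 ≡ 0 (mod d)`, satisfies
`2N = 2 + gcd(a_2-a_1, a_3-a_1, d)·d + gcd(a_2-a_1, d) + gcd(a_3-a_1, d) + gcd(a_3-a_2, d)`. -/
theorem count_fixed_monomials_three_vars (d : ℕ) (hd : 2 ≤ d) (a₁ a₂ a₃ : ℤ)
    (N : ℕ)
    (hN : N = ((Finset.range (d + 1) ×ˢ Finset.range (d + 1) ×ˢ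
          Finset.range (d + 1)).filter fun p =>
        p.1 + p.2.1 + p.2.2 = d ∧
          (d : ℤ) ∣ (a₁ * p.1 + a₂ * p.2.1 + a₃ * p.2.2)).card) :
    2 * N = 2 + Int.gcd (a₂ - a₁) (Int.gcd (a₃ - a₁) (d : ℤ) : ℤ) * d +
        Int.gcd (a₂ - a₁) (d : ℤ) + Int.gcd (a₃ - a₁) (d : ℤ) +
        Int.gcd (a₃ - a₂) (d : ℤ) := by
  have hd0 : 0 < d := by omega
  set b : ℤ := a₂ - a₁ with hb
  set c : ℤ := a₃ - a₁ with hc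
  set base : Finset (ℕ × ℕ) := range (d + 1) ×ˢ range (d + 1) with hbase
  set Sq : Finset (ℕ × ℕ) := base.filter (fun q => (d : ℤ) ∣ b * q.1 + c * q.2) with hSq
  set P : Finset (ℕ × ℕ) :=
    base.filter (fun q => q.1 + q.2 ≤ d ∧ (d : ℤ) ∣ b * q.1 + c * q.2) with hP
  set Q : Finset (ℕ × ℕ) :=
    base.filter (fun q => d ≤ q.1 + q.2 ∧ (d : ℤ) ∣ b * q.1 + c * q.2) with hQ
  set Diag : Finset (ℕ × ℕ) :=
    base.filter (fun q => q.1 + q.2 = d ∧ (d : ℤ) ∣ b * q.1 + c * q.2) with hDiag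
  -- step 1 : N = P.card
  have h1 : N = P.card := by
    rw [hN]
    apply Finset.card_bij (fun p _ => (p.2.1, p.2.2))
    · rintro ⟨x, y, z⟩ hp
      simp only [hP, hbase, mem_filter, mem_product, mem_range] at hp ⊢
      obtain ⟨⟨hx, hy, hz⟩, hsum, hdvd⟩ := hp
      refine ⟨⟨hy, hz⟩, by omega, ?_⟩
      have hxc : (x : ℤ) = d - y - z := by
        have : (x : ℤ) + y + z = d := by exact_mod_cast hsum
        linarith
      have heq : a₁ * x + a₂ * y + a₃ * z = d * a₁ + (b * y + c * z) := by
        rw [hxc, hb, hc]; ring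
      rw [heq] at hdvd
      exact (dvd_add_right ⟨a₁, by ring⟩).mp hdvd
    · rintro ⟨x, y, z⟩ hp ⟨x', y', z'⟩ hp' h
      simp only [hbase, mem_filter, mem_product, mem_range, Prod.mk.injEq] at hp hp' h
      obtain ⟨h1, h2⟩ := h
      have := hp.2.1; have := hp'.2.1
      simp only [Prod.mk.injEq]
      omega
    · rintro ⟨y, z⟩ hq
      simp only [hP, hbase, mem_filter, mem_product, mem_range] at hq
      obtain ⟨⟨hy, hz⟩, hle, hdvd⟩ := hq
      refine ⟨(d - y - z, y, z), ?_, rfl⟩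
      simp only [hbase, mem_filter, mem_product, mem_range]
      refine ⟨⟨by omega, hy, hz⟩, by omega, ?_⟩
      have hxc : ((d - y - z : ℕ) : ℤ) = d - y - z := by
        push_cast [Nat.sub_sub]
        omega
      have heq : a₁ * ((d - y - z : ℕ) : ℤ) + a₂ * y + a₃ * z
          = d * a₁ + (b * y + c * z) := by
        rw [hxc, hb, hc]; ring
      rw [heq]
      exact dvd_add ⟨a₁, by ring⟩ hdvd
  -- step 2 : P.card = Q.card
  have h2 : P.card = Q.card := by
    apply Finset.card_bij (fun q _ => (d - q.1, d - q.2))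
    · rintro ⟨y, z⟩ hq
      simp only [hP, hQ, hbase, mem_filter, mem_product, mem_range] at hq ⊢
      obtain ⟨⟨hy, hz⟩, hle, hdvd⟩ := hq
      refine ⟨⟨by omega, by omega⟩, by omega, ?_⟩
      have h1c : ((d - y : ℕ) : ℤ) = d - y := by omega
      have h2c : ((d - z : ℕ) : ℤ) = d - z := by omega
      rw [h1c, h2c]
      have heq : b * ((d : ℤ) - y) + c * ((d : ℤ) - z)
          = (b + c) * d - (b * y + c * z) := by ring
      rw [heq]
      exact dvd_sub ⟨b + c, by ring⟩ hdvd
    · rintro ⟨y, z⟩ hq ⟨y', z'⟩ hq' h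
      simp only [hP, hbase, mem_filter, mem_product, mem_range, Prod.mk.injEq] at hq hq' h
      simp only [Prod.mk.injEq]
      omega
    · rintro ⟨y, z⟩ hq
      simp only [hP, hQ, hbase, mem_filter, mem_product, mem_range] at hq ⊢
      obtain ⟨⟨hy, hz⟩, hge, hdvd⟩ := hq
      refine ⟨(d - y, d - z), ⟨⟨by omega, by omega⟩, by omega, ?_⟩, by
        simp only [Prod.mk.injEq]; omega⟩
      have h1c : ((d - y : ℕ) : ℤ) = d - y := by omega
      have h2c : ((d - z : ℕ) : ℤ) = d - z := by omega
      rw [h1c, h2c]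
      have heq : b * ((d : ℤ) - y) + c * ((d : ℤ) - z)
          = (b + c) * d - (b * y + c * z) := by ring
      rw [heq]
      exact dvd_sub ⟨b + c, by ring⟩ hdvd
  -- step 3 : P.card + Q.card = Sq.card + Diag.card
  have h3 : P.card + Q.card = Sq.card + Diag.card := by
    have hPP : P = Sq.filter (fun q => q.1 + q.2 ≤ d) := by
      rw [hP, hSq, Finset.filter_filter]
      exact Finset.filter_congr (fun q _ => by tauto)
    have hQQ : Q = Sq.filter (fun q => d ≤ q.1 + q.2) := by
      rw [hQ, hSq, Finset.filter_filter]
      exact Finset.filter_congr (fun q _ => by tauto)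
    have hunion : P ∪ Q = Sq := by
      rw [hPP, hQQ, ← Finset.filter_or]
      exact Finset.filter_true_of_mem (fun q _ => by omega)
    have hinter : P ∩ Q = Diag := by
      rw [hPP, hQQ, ← Finset.filter_and, hDiag, hSq, Finset.filter_filter]
      apply Finset.filter_congr
      intro q _
      constructor
      · rintro ⟨h1, h2, h3⟩; exact ⟨by omega, h1⟩
      · rintro ⟨h1, h2⟩; exact ⟨h2, by omega, by omega⟩
    rw [← hunion, ← hinter]
    exact (Finset.card_union_add_card_inter P Q).symm
  -- step 4 : Sq.card
  set g₂ : ℕ := Int.gcd c d with hg₂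
  set gb : ℕ := Int.gcd b d with hgb
  set g : ℕ := Int.gcd b (g₂ : ℤ) with hg
  have hg₂0 : 0 < g₂ := Int.gcd_pos_of_ne_zero_right _ (by exact_mod_cast hd0.ne')
  have hg₂d : g₂ ∣ d :=
    Int.ofNat_dvd.mp (by exact_mod_cast (Int.gcd_dvd_right (a := c) (b := (d : ℤ))))
  have h4 : Sq.card = d * g + gb + g₂ + 1 := by
    rw [hSq, hbase, Finset.card_filter, Finset.sum_product]
    have inner : ∀ x : ℕ, (∑ y ∈ range (d + 1), if (d : ℤ) ∣ b * x + c * y then 1 else 0)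
        = (if (g₂ : ℤ) ∣ b * x then g₂ else 0) + (if (d : ℤ) ∣ b * x then 1 else 0) := by
      intro x
      rw [Finset.sum_range_succ]
      congr 1
      · rw [← Finset.card_filter]
        have : (range d).filter (fun y : ℕ => (d : ℤ) ∣ b * x + c * y)
            = (range d).filter (fun y : ℕ => (d : ℤ) ∣ c * y + b * x) :=
          Finset.filter_congr (fun y _ => by rw [add_comm])
        rw [this, count_shift c (b * x) d hd0]
      · apply if_congr _ rfl rfl
        rw [add_comm]
        exact dvd_add_right ⟨c, by ring⟩
    simp_rw [inner]
    rw [Finset.sum_add_distrib, Finset.sum_range_succ, Finset.sum_range_succ]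
    have hA : (∑ x ∈ range d, if (g₂ : ℤ) ∣ b * x then (g₂ : ℕ) else 0) = d * g := by
      rw [← Finset.sum_filter, Finset.sum_const, smul_eq_mul,
        count_lin b g₂ d hg₂0 hg₂d]
      rw [mul_right_comm, Nat.div_mul_cancel hg₂d, hg]
    have hAd : (if (g₂ : ℤ) ∣ b * d then (g₂ : ℕ) else 0) = g₂ := by
      rw [if_pos]
      exact Dvd.dvd.mul_left (by exact_mod_cast Int.ofNat_dvd.mpr hg₂d) b
    have hB : (∑ x ∈ range d, if (d : ℤ) ∣ b * x then (1 : ℕ) else 0) = gb := by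
      rw [← Finset.sum_filter, Finset.sum_const, smul_eq_mul, mul_one,
        count_lin b d d hd0 (dvd_refl d), Nat.div_self hd0, one_mul, hgb]
    have hBd : (if (d : ℤ) ∣ b * d then (1 : ℕ) else 0) = 1 := by
      rw [if_pos (Dvd.intro_left b rfl)]
    rw [hA, hAd, hB, hBd]
    ring
  -- step 5 : Diag.card
  have h5 : Diag.card = Int.gcd (b - c) d + 1 := by
    have hbij : Diag.card = ((range (d + 1)).filter fun y : ℕ => (d : ℤ) ∣ (b - c) * y).card := by
      apply Finset.card_bij (fun q _ => q.1)
      · rintro ⟨y, z⟩ hq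
        simp only [hDiag, hbase, mem_filter, mem_product, mem_range] at hq ⊢
        obtain ⟨⟨hy, hz⟩, hsum, hdvd⟩ := hq
        refine ⟨hy, ?_⟩
        have hzc : (z : ℤ) = d - y := by
          have : (y : ℤ) + z = d := by exact_mod_cast hsum
          linarith
        have heq : b * y + c * z = (b - c) * y + c * d := by rw [hzc]; ring
        rw [heq] at hdvd
        rw [add_comm] at hdvd
        exact (dvd_add_right ⟨c, by ring⟩).mp hdvd
      · rintro ⟨y, z⟩ hq ⟨y', z'⟩ hq' h
        simp only [hDiag, hbase, mem_filter, mem_product, mem_range] at hq hq'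
        simp only [Prod.mk.injEq]
        constructor
        · exact h
        · have := hq.2.1; have := hq'.2.1
          omega
      · rintro y hy
        simp only [mem_filter, mem_range] at hy
        obtain ⟨hy1, hdvd⟩ := hy
        refine ⟨(y, d - y), ?_, rfl⟩
        simp only [hDiag, hbase, mem_filter, mem_product, mem_range]
        refine ⟨⟨by omega, by omega⟩, by omega, ?_⟩
        have hzc : ((d - y : ℕ) : ℤ) = d - y := by omega
        have heq : b * y + c * ((d - y : ℕ) : ℤ) = (b - c) * y + c * d := by
          rw [hzc]; ring
        rw [heq]
        exact dvd_add hdvd ⟨c, by ring⟩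
    rw [hbij, Finset.range_add_one, Finset.filter_insert,
      if_pos (Dvd.intro_left (b - c) rfl : (d : ℤ) ∣ (b - c) * d),
      Finset.card_insert_of_notMem (fun hmem => by
        have := Finset.mem_of_mem_filter d hmem
        simp at this),
      count_lin (b - c) d d hd0 (dvd_refl d), Nat.div_self hd0, one_mul]
  -- assembly
  have hbc : Int.gcd (a₃ - a₂) (d : ℤ) = Int.gcd (b - c) (d : ℤ) := by
    have : a₃ - a₂ = -(b - c) := by rw [hb, hc]; ring
    rw [this, Int.neg_gcd]
  rw [hbc]
  have : 2 * N = Sq.card + Diag.card := by omega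
  rw [this, h4, h5]
  ring
end

section
/- Let d ≥ 2, let ξ = e^{2πi/d} ∈ ℂ, and let a_1, a_2, a_3 be pairwise distinct integers with 0 ≤ a_i ≤ d−1. Let l and k be the residues of a_2 − a_3 − 1 and a_3 − a_1 − 1 modulo d (so 0 ≤ l, k ≤ d−1). Define the linear form L = (Σ_{j=0}^{l} ξ^j) x_1 + (Σ_{j=l+1}^{l+k+1} ξ^j) x_2 + (Σ_{j=l+k+2}^{2d−1} ξ^j) x_3 ∈ ℂ[x_1,x_2,x_3], let L̄ be the linear form obtained from L by complex-conjugating its coefficients, and set F = L^d − L̄^d. Then for every monomial x_1^{α_1}x_2^{α_2}x_3^{α_3} of degree d, its coefficient in F is non-zero if and only if a_1α_1 + a_2α_2 + a_3α_3 ≢ 0 (mod d); that is, supp(F) consists exactly of the degree-d monomials that are not invariant under the action x_i ↦ ξ^{a_i}x_i of ℤ/dℤ. -/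
open MvPolynomial Finset

/-- coefficient of a power of a linear form -/
lemma coeff_linear_pow_aux (c : Fin 3 → ℂ) (d : ℕ) (α : Fin 3 →₀ ℕ) (hα : ∑ i, α i = d) :
    MvPolynomial.coeff α ((∑ i : Fin 3, MvPolynomial.C (c i) * MvPolynomial.X i) ^ d)
      = (Nat.multinomial Finset.univ ⇑α : ℂ) * ∏ i : Fin 3, c i ^ α i := by
  classical
  rw [Finset.sum_pow_eq_sum_piAntidiag, MvPolynomial.coeff_sum]
  have hterm : ∀ k : Fin 3 → ℕ,
      MvPolynomial.coeff α ((Nat.multinomial Finset.univ k : MvPolynomial (Fin 3) ℂ) *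
        ∏ i : Fin 3, (MvPolynomial.C (c i) * MvPolynomial.X i) ^ k i)
      = if k = ⇑α then
          (Nat.multinomial Finset.univ k : ℂ) * ∏ i : Fin 3, c i ^ k i else 0 := by
    intro k
    set β : Fin 3 →₀ ℕ := Finsupp.equivFunOnFinite.symm k with hβ
    have hβk : ∀ i, β i = k i := fun i => rfl
    have h1 : ∏ i : Fin 3, (MvPolynomial.C (c i) * MvPolynomial.X i) ^ k i
        = MvPolynomial.C (∏ i : Fin 3, c i ^ k i) * MvPolynomial.monomial β (1 : ℂ) := by
      rw [← MvPolynomial.prod_X_pow_eq_monomial]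
      have h2 : ∏ x ∈ β.support, MvPolynomial.X x ^ β x
          = ∏ i : Fin 3, (MvPolynomial.X i : MvPolynomial (Fin 3) ℂ) ^ k i := by
        refine Finset.prod_subset (Finset.subset_univ _) ?_
        intro i _ hi
        rw [Finsupp.notMem_support_iff] at hi
        rw [hi, pow_zero]
      rw [h2, map_prod, ← Finset.prod_mul_distrib]
      refine Finset.prod_congr rfl fun i _ => ?_
      rw [map_pow, mul_pow]
    rw [h1, ← mul_assoc, ← MvPolynomial.C_eq_coe_nat, ← map_mul,
      MvPolynomial.coeff_C_mul, MvPolynomial.coeff_monomial]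
    have hcond : β = α ↔ k = ⇑α := by
      rw [hβ, Equiv.symm_apply_eq]
      exact ⟨fun h => by rw [h]; rfl, fun h => by ext i; rw [h]; rfl⟩
    by_cases h : k = ⇑α
    · rw [if_pos (hcond.mpr h), if_pos h, mul_one]
    · rw [if_neg (fun hh => h (hcond.mp hh)), if_neg h, mul_zero]
  rw [Finset.sum_congr rfl fun k _ => hterm k, Finset.sum_ite_eq' (Finset.univ.piAntidiag d) ⇑α
    (fun k => (Nat.multinomial Finset.univ k : ℂ) * ∏ i : Fin 3, c i ^ k i)]
  rw [if_pos]
  rw [Finset.mem_piAntidiag]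
  exact ⟨hα, fun i _ => Finset.mem_univ i⟩


lemma conj_geom_sum_aux (ξ : ℂ) (hmul : ξ * (starRingEnd ℂ) ξ = 1) (a b : ℕ) :
    ξ ^ (a + b) * (starRingEnd ℂ) (∑ j ∈ Finset.Icc a b, ξ ^ j) = ∑ j ∈ Finset.Icc a b, ξ ^ j := by
  rw [map_sum, Finset.mul_sum]
  have key : ∀ j ∈ Finset.Icc a b, ξ ^ (a + b) * (starRingEnd ℂ) (ξ ^ j) = ξ ^ (a + b - j) := by
    intro j hj
    rw [Finset.mem_Icc] at hj
    have h1 : ξ ^ (a + b) = ξ ^ (a + b - j) * ξ ^ j := by rw [← pow_add]; congr 1; omega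
    rw [h1, map_pow, mul_assoc, ← mul_pow, hmul, one_pow, mul_one]
  rw [Finset.sum_congr rfl key]
  refine Finset.sum_bij' (fun j _ => a + b - j) (fun j _ => a + b - j)
    (fun j hj => ?_) (fun j hj => ?_) (fun j hj => ?_) (fun j hj => ?_) (fun j hj => ?_)
  · simp only [Finset.mem_Icc] at hj ⊢; omega
  · simp only [Finset.mem_Icc] at hj ⊢; omega
  · simp only [Finset.mem_Icc] at hj; show a + b - (a + b - j) = j; omega
  · simp only [Finset.mem_Icc] at hj; show a + b - (a + b - j) = j; omega
  · rfl

lemma int_not_dvd_aux {d x : ℤ} (hd : 0 < d) (h1 : -d < x) (h2 : x < d) (h3 : x ≠ 0) :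
    ¬ d ∣ x := by
  rintro ⟨t, rfl⟩
  rcases lt_trichotomy t 0 with h | h | h
  · nlinarith
  · exact h3 (by rw [h, mul_zero])
  · nlinarith

lemma nat_not_dvd_aux {d n : ℕ} (h0 : 0 < n) (h2 : n < 2 * d) (hne : n ≠ d) : ¬ d ∣ n := by
  rintro ⟨t, rfl⟩
  match t with
  | 0 => omega
  | 1 => omega
  | (t + 2) => have : d * 2 ≤ d * (t + 2) := Nat.mul_le_mul_left d (by omega); omega

/-- For `ξ = e^{2πi/d}` and pairwise distinct integers `0 ≤ a_1, a_2, a_3 ≤ d-1`, let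
`l, k` be the residues of `a_2 - a_3 - 1` and `a_3 - a_1 - 1` mod `d`, and let
`L = (∑_{j=0}^{l} ξ^j) x_1 + (∑_{j=l+1}^{l+k+1} ξ^j) x_2 + (∑_{j=l+k+2}^{2d-1} ξ^j) x_3`.
Then the support of `F = L^d - L̄^d` consists exactly of the degree-`d` monomials
not invariant under `x_i ↦ ξ^{a_i} x_i`, i.e. those with
`a_1α_1 + a_2α_2 + a_3α_3 ≢ 0 (mod d)`. -/
theorem support_of_L_pow_sub_conj (d : ℕ) (hd : 2 ≤ d)
    (ξ : ℂ) (hξ : ξ = Complex.exp (2 * Real.pi * Complex.I / d))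
    (a₁ a₂ a₃ : ℤ) (h₁ : 0 ≤ a₁) (h₁' : a₁ ≤ (d : ℤ) - 1)
    (h₂ : 0 ≤ a₂) (h₂' : a₂ ≤ (d : ℤ) - 1) (h₃ : 0 ≤ a₃) (h₃' : a₃ ≤ (d : ℤ) - 1)
    (hne₁ : a₁ ≠ a₂) (hne₂ : a₁ ≠ a₃) (hne₃ : a₂ ≠ a₃)
    (l k : ℕ) (hl : (l : ℤ) = (a₂ - a₃ - 1) % (d : ℤ)) (hk : (k : ℤ) = (a₃ - a₁ - 1) % (d : ℤ))
    (c₁ c₂ c₃ : ℂ)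
    (hc₁ : c₁ = ∑ j ∈ Finset.range (l + 1), ξ ^ j)
    (hc₂ : c₂ = ∑ j ∈ Finset.Icc (l + 1) (l + k + 1), ξ ^ j)
    (hc₃ : c₃ = ∑ j ∈ Finset.Icc (l + k + 2) (2 * d - 1), ξ ^ j)
    (L Lbar F : MvPolynomial (Fin 3) ℂ)
    (hL : L = MvPolynomial.C c₁ * MvPolynomial.X 0 + MvPolynomial.C c₂ * MvPolynomial.X 1 +
        MvPolynomial.C c₃ * MvPolynomial.X 2)
    (hLbar : Lbar = MvPolynomial.C ((starRingEnd ℂ) c₁) * MvPolynomial.X 0 +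
        MvPolynomial.C ((starRingEnd ℂ) c₂) * MvPolynomial.X 1 +
        MvPolynomial.C ((starRingEnd ℂ) c₃) * MvPolynomial.X 2)
    (hF : F = L ^ d - Lbar ^ d) :
    ∀ α : Fin 3 →₀ ℕ, α 0 + α 1 + α 2 = d →
      (F.coeff α ≠ 0 ↔ ¬ (d : ℤ) ∣ (a₁ * α 0 + a₂ * α 1 + a₃ * α 2)) := by
  intro α hα
  have hd0 : (0:ℤ) < (d:ℤ) := by exact_mod_cast (by omega : 0 < d)
  have hprim : IsPrimitiveRoot ξ d := hξ ▸ Complex.isPrimitiveRoot_exp d (by omega)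
  have hξ1 : ξ ≠ 1 := hprim.ne_one (by omega)
  have hmulconj : ξ * (starRingEnd ℂ) ξ = 1 := by
    rw [hξ, ← Complex.exp_conj, ← Complex.exp_add]
    have hz : (2 * (Real.pi:ℂ) * Complex.I / d) + (starRingEnd ℂ) (2 * (Real.pi:ℂ) * Complex.I / d) = 0 := by
      simp only [map_div₀, map_mul, Complex.conj_I, Complex.conj_ofReal, map_ofNat,
        Complex.conj_natCast]
      ring
    rw [hz, Complex.exp_zero]
  have hξ0 : ξ ≠ 0 := fun h => by simp [h] at hmulconj
  -- bounds on l, k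
  have hlb : (l:ℤ) < d := hl ▸ Int.emod_lt_of_pos _ hd0
  have hkb : (k:ℤ) < d := hk ▸ Int.emod_lt_of_pos _ hd0
  have hlb' : l < d := by exact_mod_cast hlb
  have hkb' : k < d := by exact_mod_cast hkb
  -- mod facts
  have hml : ((l:ℤ)) % d = (a₂ - a₃ - 1) % d := by
    rw [hl, Int.emod_emod_of_dvd _ dvd_rfl]
  have hmk : ((k:ℤ)) % d = (a₃ - a₁ - 1) % d := by
    rw [hk, Int.emod_emod_of_dvd _ dvd_rfl]
  obtain ⟨u, hu⟩ : (d:ℤ) ∣ (a₂ - a₃ - 1) - l := Int.ModEq.dvd hml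
  obtain ⟨v, hv⟩ : (d:ℤ) ∣ (a₃ - a₁ - 1) - k := Int.ModEq.dvd hmk
  have hl2 : (l:ℤ) = a₂ - a₃ - 1 - d * u := by linarith
  have hk2 : (k:ℤ) = a₃ - a₁ - 1 - d * v := by linarith
  have hdvd23 : ¬ (d:ℤ) ∣ (a₂ - a₃) := int_not_dvd_aux hd0 (by omega) (by omega) (by omega)
  have hdvd31 : ¬ (d:ℤ) ∣ (a₃ - a₁) := int_not_dvd_aux hd0 (by omega) (by omega) (by omega)
  have hdvd21 : ¬ (d:ℤ) ∣ (a₂ - a₁) := int_not_dvd_aux hd0 (by omega) (by omega) (by omega)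
  have hl1 : l + 1 < d := by
    rcases Nat.lt_or_ge (l+1) d with h | h
    · exact h
    · exfalso
      have hle : (l:ℤ) = (d:ℤ) - 1 := by
        have : (d:ℤ) ≤ (l:ℤ) + 1 := by exact_mod_cast h
        omega
      exact hdvd23 ⟨u + 1, by linear_combination hle - hl2⟩
  have hk1 : k + 1 < d := by
    rcases Nat.lt_or_ge (k+1) d with h | h
    · exact h
    · exfalso
      have hle : (k:ℤ) = (d:ℤ) - 1 := by
        have : (d:ℤ) ≤ (k:ℤ) + 1 := by exact_mod_cast h
        omega
      exact hdvd31 ⟨v + 1, by linear_combination hle - hk2⟩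
  have hn3 : l + k + 2 ≠ d := by
    intro h
    have hz : (l:ℤ) + k + 2 = d := by exact_mod_cast h
    exact hdvd21 ⟨u + v + 1, by linear_combination hz - hl2 - hk2⟩
  -- nonvanishing of geometric sums
  have hgeom : ∀ n : ℕ, ¬ d ∣ n → (∑ i ∈ Finset.range n, ξ ^ i) ≠ 0 := by
    intro n hn h0
    have hg := geom_sum_mul ξ n
    rw [h0, zero_mul] at hg
    exact hn ((hprim.pow_eq_one_iff_dvd n).mp (by linear_combination -hg))
  have hc₁0 : c₁ ≠ 0 := by
    rw [hc₁]
    exact hgeom (l+1) (fun h => by have := Nat.le_of_dvd (by omega) h; omega)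
  have hIcc : ∀ a n : ℕ, (∑ j ∈ Finset.Icc a (a + n), ξ ^ j)
      = ξ ^ a * ∑ i ∈ Finset.range (n + 1), ξ ^ i := by
    intro a n
    rw [← Finset.Ico_add_one_right_eq_Icc, Finset.sum_Ico_eq_sum_range, Finset.mul_sum]
    have : a + n + 1 - a = n + 1 := by omega
    rw [this]
    exact Finset.sum_congr rfl fun i _ => by rw [← pow_add]
  have hc₂0 : c₂ ≠ 0 := by
    rw [hc₂, show l + k + 1 = (l+1) + k by omega, hIcc (l+1) k]
    exact mul_ne_zero (pow_ne_zero _ hξ0)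
      (hgeom (k+1) (fun h => by have := Nat.le_of_dvd (by omega) h; omega))
  have hc₃0 : c₃ ≠ 0 := by
    have h2d : 2*d - 1 = (l+k+2) + (2*d - (l+k+3)) := by omega
    rw [hc₃, h2d, hIcc]
    refine mul_ne_zero (pow_ne_zero _ hξ0) (hgeom _ (nat_not_dvd_aux (by omega) (by omega) (by omega)))
  -- conjugation relations
  have R1 : ξ ^ l * (starRingEnd ℂ) c₁ = c₁ := by
    have hr : Finset.range (l+1) = Finset.Icc 0 l := by ext x; simp
    have := conj_geom_sum_aux ξ hmulconj 0 l
    rw [zero_add] at this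
    rw [hc₁, hr]; exact this
  have R2 : ξ ^ (2*l+k+2) * (starRingEnd ℂ) c₂ = c₂ := by
    have := conj_geom_sum_aux ξ hmulconj (l+1) (l+k+1)
    rw [show (l+1) + (l+k+1) = 2*l+k+2 by omega] at this
    rw [hc₂]; exact this
  have R3 : ξ ^ (l+k+2*d+1) * (starRingEnd ℂ) c₃ = c₃ := by
    have := conj_geom_sum_aux ξ hmulconj (l+k+2) (2*d-1)
    rw [show (l+k+2) + (2*d-1) = l+k+2*d+1 by omega] at this
    rw [hc₃]; exact this
  -- coefficient computation
  set c : Fin 3 → ℂ := ![c₁, c₂, c₃] with hc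
  have hαsum : ∑ i : Fin 3, α i = d := by rw [Fin.sum_univ_three]; exact hα
  have hLsum : L = ∑ i : Fin 3, MvPolynomial.C (c i) * MvPolynomial.X i := by
    rw [hL, Fin.sum_univ_three]
    simp [hc]
  have hLbarsum : Lbar = ∑ i : Fin 3, MvPolynomial.C ((starRingEnd ℂ) (c i)) * MvPolynomial.X i := by
    rw [hLbar, Fin.sum_univ_three]
    simp [hc]
  set P : ℂ := c₁ ^ α 0 * c₂ ^ α 1 * c₃ ^ α 2 with hPdef
  set m : ℂ := (Nat.multinomial Finset.univ ⇑α : ℂ) with hm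
  have hcoeffL : MvPolynomial.coeff α (L ^ d) = m * P := by
    rw [hLsum, coeff_linear_pow_aux c d α hαsum, Fin.prod_univ_three]
    simp [hc, hPdef, hm]
  have hcoeffLbar : MvPolynomial.coeff α (Lbar ^ d) = m * (starRingEnd ℂ) P := by
    rw [hLbarsum, coeff_linear_pow_aux (fun i => (starRingEnd ℂ) (c i)) d α hαsum,
      Fin.prod_univ_three]
    simp [hc, hPdef, hm, map_mul, map_pow]
  have hcoeffF : MvPolynomial.coeff α F = m * (P - (starRingEnd ℂ) P) := by
    rw [hF, MvPolynomial.coeff_sub, hcoeffL, hcoeffLbar, mul_sub]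
  have hP0 : P ≠ 0 := mul_ne_zero (mul_ne_zero (pow_ne_zero _ hc₁0) (pow_ne_zero _ hc₂0))
    (pow_ne_zero _ hc₃0)
  have hcP0 : (starRingEnd ℂ) P ≠ 0 := by
    rw [starRingEnd_apply]
    exact star_ne_zero.mpr hP0
  have hm0 : m ≠ 0 := Nat.cast_ne_zero.mpr (Nat.multinomial_pos _ _).ne'
  set E : ℕ := l * α 0 + (2*l+k+2) * α 1 + (l+k+2*d+1) * α 2 with hE
  have hrel : ξ ^ E * (starRingEnd ℂ) P = P := by
    have hsplit : ξ ^ E = (ξ ^ l) ^ α 0 * (ξ ^ (2*l+k+2)) ^ α 1 * (ξ ^ (l+k+2*d+1)) ^ α 2 := by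
      rw [hE, pow_add, pow_add, pow_mul, pow_mul, pow_mul]
    rw [hPdef, map_mul, map_mul, map_pow, map_pow, map_pow, hsplit]
    calc (ξ ^ l) ^ α 0 * (ξ ^ (2*l+k+2)) ^ α 1 * (ξ ^ (l+k+2*d+1)) ^ α 2 *
          ((starRingEnd ℂ) c₁ ^ α 0 * (starRingEnd ℂ) c₂ ^ α 1 * (starRingEnd ℂ) c₃ ^ α 2)
        = (ξ ^ l * (starRingEnd ℂ) c₁) ^ α 0 * (ξ ^ (2*l+k+2) * (starRingEnd ℂ) c₂) ^ α 1 *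
          (ξ ^ (l+k+2*d+1) * (starRingEnd ℂ) c₃) ^ α 2 := by
          rw [mul_pow, mul_pow, mul_pow]; ring
      _ = c₁ ^ α 0 * c₂ ^ α 1 * c₃ ^ α 2 := by rw [R1, R2, R3]
  -- arithmetic: d ∣ E - T
  have hαd : ((α 0 : ℤ)) + α 1 + α 2 = d := by exact_mod_cast hα
  have hET : (d:ℤ) ∣ (E:ℤ) - (a₁ * α 0 + a₂ * α 1 + a₃ * α 2) := by
    refine ⟨(a₂ - a₃ - a₁ - 1) - u * (α 0 + 2 * α 1 + α 2) - v * (α 1 + α 2) + 2 * α 2, ?_⟩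
    have hEcast : (E:ℤ) = (l:ℤ) * α 0 + (2*l+k+2) * α 1 + (l+k+2*d+1) * α 2 := by
      rw [hE]; push_cast; ring
    rw [hEcast]
    linear_combination ((α 0 : ℤ) + 2 * α 1 + α 2) * hl2 + ((α 1 : ℤ) + α 2) * hk2 +
      (a₂ - a₃ - a₁ - 1) * hαd
  -- final chain
  have hiff : MvPolynomial.coeff α F = 0 ↔ (d:ℤ) ∣ (a₁ * α 0 + a₂ * α 1 + a₃ * α 2) := by
    rw [hcoeffF, mul_eq_zero, or_iff_right hm0, sub_eq_zero]
    constructor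
    · intro h
      have hone : ξ ^ E = 1 := by
        have h2 : ξ ^ E * (starRingEnd ℂ) P = 1 * (starRingEnd ℂ) P := by
          rw [one_mul, hrel]; exact h
        exact mul_right_cancel₀ hcP0 h2
      have hdE : d ∣ E := (hprim.pow_eq_one_iff_dvd E).mp hone
      have hdE' : (d:ℤ) ∣ (E:ℤ) := Int.natCast_dvd_natCast.mpr hdE
      have := dvd_sub hdE' hET
      simpa using this
    · intro h
      have hdE' : (d:ℤ) ∣ (E:ℤ) := by
        have := dvd_add hET h
        simpa using this
      have hdE : d ∣ E := Int.natCast_dvd_natCast.mp hdE'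
      have hone : ξ ^ E = 1 := (hprim.pow_eq_one_iff_dvd E).mpr hdE
      conv_lhs => rw [← hrel]
      rw [hone, one_mul]
  exact not_congr hiff
end
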